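/- arXiv:2301.08273 — 5 statements merged into one kernel-verified Lean document; each statement's English description precedes it below -/
import Mathlib

section
/- Let f be a bounded measurable function on a doubling metric measure space (X,d,μ), let {B_i = B(x_i,ε)} be an ε-covering with partition of unity {φ_i} satisfying 0 ≤ φ_i ≤ 1, Σ_i φ_i = 1, φ_i = 0 outside B(x_i,2ε), and each φ_i is (C/ε)-Lipschitz. Define f_ε := Σ_i f_{B_i} φ_i where f_{B_i} is the mean of f over B_i. Then for every x ∈ X, |f_ε(x) − f(x)| ≤ C' ⨍_{B(x,6ε)} |f(x) − f(y)| dμ(y), where C' depends only on the doubling constant and the bounded overlap constant of the covering. -/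
open MeasureTheory Metric Filter Topology

/-- pointwise estimate for the discrete convolution
`f_ε = Σ_i f_{B_i} φ_i` in terms of an average of `|f(x) - f(y)|` over `B(x,6ε)`. -/
theorem stmt2 {X : Type*} [MetricSpace X] [MeasurableSpace X] [BorelSpace X]
    {ι : Type*} [Countable ι]
    (μ : Measure X) (CD : ℝ) (hCD : 0 < CD)
    (hpos : ∀ (x : X) (r : ℝ), 0 < r → 0 < μ (ball x r))
    (hfin : ∀ (x : X) (r : ℝ), 0 < r → μ (ball x r) < ⊤)
    (hdouble : ∀ (x : X) (r : ℝ), 0 < r →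
      μ (ball x (2 * r)) ≤ ENNReal.ofReal CD * μ (ball x r))
    (N : ℕ) (ε : ℝ) (hε : 0 < ε) (c : ι → X) (φ : ι → X → ℝ)
    (hcover : (⋃ i, ball (c i) ε) = Set.univ)
    (hoverlap : ∀ x : X, Set.ncard {i | x ∈ ball (c i) (5 * ε)} ≤ N)
    (hnonneg : ∀ i x, 0 ≤ φ i x) (hle : ∀ i x, φ i x ≤ 1)
    (hsum : ∀ x, ∑' i, φ i x = 1)
    (hsupp : ∀ i x, x ∉ ball (c i) (2 * ε) → φ i x = 0)
    (CL : ℝ) (hCL : 0 < CL) (hlip : ∀ i, LipschitzWith (Real.toNNReal (CL / ε)) (φ i))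
    (f : X → ℝ) (hmeas : Measurable f) (M : ℝ) (hbdd : ∀ x, |f x| ≤ M) :
    ∃ C' : ℝ, 0 < C' ∧ ∀ x : X,
      |(∑' i, (⨍ y in ball (c i) ε, f y ∂μ) * φ i x) - f x| ≤
        C' * ⨍ y in ball x (6 * ε), |f x - f y| ∂μ := by
  refine ⟨CD ^ 3, by positivity, fun x => ?_⟩
  have h6 : (0:ℝ) < 6 * ε := by linarith
  set A : ℝ := ⨍ y in ball x (6 * ε), |f x - f y| ∂μ with hAdef
  -- integrability of bounded measurable functions on balls
  have hint : ∀ (g : X → ℝ) (K : ℝ), Measurable g → (∀ y, |g y| ≤ K) →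
      ∀ (z : X) (r : ℝ), 0 < r → IntegrableOn g (ball z r) μ := fun g K hg hK z r hr =>
    Measure.integrableOn_of_bounded (hfin z r hr).ne hg.aestronglyMeasurable
      (Eventually.of_forall fun y => hK y)
  have hintf : ∀ (z : X) (r : ℝ), 0 < r → IntegrableOn f (ball z r) μ :=
    hint f M hmeas hbdd
  have habs : Measurable fun y => |f x - f y| := (measurable_const.sub hmeas).abs
  have habsb : ∀ y, |(fun y => |f x - f y|) y| ≤ |f x| + M := by
    intro y
    rw [abs_abs]
    calc |f x - f y| ≤ |f x| + |f y| := abs_sub _ _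
    _ ≤ |f x| + M := by linarith [hbdd y]
  have hintabs : ∀ (z : X) (r : ℝ), 0 < r → IntegrableOn (fun y => |f x - f y|) (ball z r) μ :=
    hint _ _ habs habsb
  have hA0 : 0 ≤ A := by
    rw [hAdef, setAverage_eq]
    exact smul_nonneg (by positivity) (integral_nonneg fun y => abs_nonneg _)
  set m6 : ℝ := (μ (ball x (6 * ε))).toReal with hm6def
  have hm6pos : 0 < m6 := ENNReal.toReal_pos (hpos x _ h6).ne' (hfin x _ h6).ne
  have hI6 : ∫ y in ball x (6 * ε), |f x - f y| ∂μ = m6 * A := by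
    rw [hAdef, setAverage_eq, smul_eq_mul, measureReal_def, ← hm6def]
    field_simp
  -- key per-index bound
  have key : ∀ i, |(⨍ y in ball (c i) ε, f y ∂μ) - f x| * φ i x ≤ (CD ^ 3 * A) * φ i x := by
    intro i
    by_cases hφ : φ i x = 0
    · simp [hφ]
    · have hx2 : x ∈ ball (c i) (2 * ε) := by
        by_contra h; exact hφ (hsupp i x h)
      have hd : dist x (c i) < 2 * ε := mem_ball.mp hx2
      have hsub : ball (c i) ε ⊆ ball x (6 * ε) := fun y hy => by
        rw [mem_ball] at hy ⊢
        calc dist y x ≤ dist y (c i) + dist (c i) x := dist_triangle _ _ _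
        _ < ε + 2 * ε := by rw [dist_comm (c i) x]; linarith
        _ ≤ 6 * ε := by linarith
      have hsub2 : ball x (6 * ε) ⊆ ball (c i) (8 * ε) := fun y hy => by
        rw [mem_ball] at hy ⊢
        calc dist y (c i) ≤ dist y x + dist x (c i) := dist_triangle _ _ _
        _ < 6 * ε + 2 * ε := by linarith
        _ = 8 * ε := by ring
      set m : ℝ := (μ (ball (c i) ε)).toReal with hmdef
      have hmpos : 0 < m := ENNReal.toReal_pos (hpos _ _ hε).ne' (hfin _ _ hε).ne
      -- doubling chain
      have hchain : μ (ball x (6 * ε)) ≤ ENNReal.ofReal CD ^ 3 * μ (ball (c i) ε) := by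
        calc μ (ball x (6 * ε)) ≤ μ (ball (c i) (8 * ε)) := measure_mono hsub2
        _ = μ (ball (c i) (2 * (4 * ε))) := by ring_nf
        _ ≤ ENNReal.ofReal CD * μ (ball (c i) (4 * ε)) := hdouble _ _ (by linarith)
        _ = ENNReal.ofReal CD * μ (ball (c i) (2 * (2 * ε))) := by ring_nf
        _ ≤ ENNReal.ofReal CD * (ENNReal.ofReal CD * μ (ball (c i) (2 * ε))) :=
            mul_le_mul_right (hdouble _ _ (by linarith)) _
        _ ≤ ENNReal.ofReal CD * (ENNReal.ofReal CD * (ENNReal.ofReal CD * μ (ball (c i) ε))) :=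
            mul_le_mul_right (mul_le_mul_right (hdouble _ _ hε) _) _
        _ = ENNReal.ofReal CD ^ 3 * μ (ball (c i) ε) := by ring
      have hchainR : m6 ≤ CD ^ 3 * m := by
        have hne : ENNReal.ofReal CD ^ 3 * μ (ball (c i) ε) ≠ ⊤ :=
          ENNReal.mul_ne_top (by simp [ENNReal.pow_ne_top, ENNReal.ofReal_ne_top])
            (hfin _ _ hε).ne
        have := ENNReal.toReal_mono hne hchain
        rwa [ENNReal.toReal_mul, ENNReal.toReal_pow, ENNReal.toReal_ofReal hCD.le] at this
      -- average difference bound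
      have havg : (⨍ y in ball (c i) ε, f y ∂μ) - f x
          = m⁻¹ * ∫ y in ball (c i) ε, (f y - f x) ∂μ := by
        rw [setAverage_eq, smul_eq_mul, measureReal_def, ← hmdef,
          integral_sub (hintf _ _ hε) (integrableOn_const (hfin _ _ hε).ne)]
        rw [setIntegral_const, smul_eq_mul, measureReal_def, ← hmdef]
        field_simp
      have hbound : |(⨍ y in ball (c i) ε, f y ∂μ) - f x| ≤ CD ^ 3 * A := by
        rw [havg, abs_mul, abs_inv, abs_of_pos hmpos]
        have h1 : |∫ y in ball (c i) ε, (f y - f x) ∂μ|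
            ≤ ∫ y in ball (c i) ε, |f x - f y| ∂μ := by
          calc |∫ y in ball (c i) ε, (f y - f x) ∂μ|
              ≤ ∫ y in ball (c i) ε, |f y - f x| ∂μ := by
                simpa [Real.norm_eq_abs] using
                  norm_integral_le_integral_norm (fun y => f y - f x)
          _ = ∫ y in ball (c i) ε, |f x - f y| ∂μ := by
              congr 1; funext y; exact abs_sub_comm _ _
        have h2 : ∫ y in ball (c i) ε, |f x - f y| ∂μ
            ≤ ∫ y in ball x (6 * ε), |f x - f y| ∂μ :=
          setIntegral_mono_set (hintabs x _ h6)
            (Eventually.of_forall fun y => abs_nonneg _)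
            (HasSubset.Subset.eventuallyLE hsub)
        have h3 : m⁻¹ * |∫ y in ball (c i) ε, (f y - f x) ∂μ| ≤ m⁻¹ * (m6 * A) := by
          rw [← hI6]
          exact mul_le_mul_of_nonneg_left (h1.trans h2) (by positivity)
        refine h3.trans ?_
        rw [inv_mul_le_iff₀ hmpos]
        calc m6 * A ≤ (CD ^ 3 * m) * A := mul_le_mul_of_nonneg_right hchainR hA0
        _ = m * (CD ^ 3 * A) := by ring
      exact mul_le_mul_of_nonneg_right hbound (hnonneg i x)
  -- summability facts
  have hφs : Summable fun i => φ i x := by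
    by_contra h
    have := hsum x
    rw [tsum_eq_zero_of_not_summable h] at this
    norm_num at this
  set g : ι → ℝ := fun i => ((⨍ y in ball (c i) ε, f y ∂μ) - f x) * φ i x with hgdef
  have hgabs : ∀ i, |g i| = |(⨍ y in ball (c i) ε, f y ∂μ) - f x| * φ i x := fun i => by
    rw [hgdef, abs_mul, abs_of_nonneg (hnonneg i x)]
  have hgabs_s : Summable fun i => |g i| := by
    refine Summable.of_nonneg_of_le (fun i => abs_nonneg _) (fun i => ?_)
      (hφs.mul_left (CD ^ 3 * A))
    rw [hgabs i]; exact key i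
  have hgs : Summable g := hgabs_s.of_abs
  have hsplit : (∑' i, (⨍ y in ball (c i) ε, f y ∂μ) * φ i x) - f x = ∑' i, g i := by
    have heq : ∀ i, (⨍ y in ball (c i) ε, f y ∂μ) * φ i x = g i + f x * φ i x := fun i => by
      rw [hgdef]; ring
    rw [tsum_congr heq, hgs.tsum_add (hφs.mul_left (f x)), tsum_mul_left, hsum x]
    ring
  rw [hsplit]
  have hnorm_s : Summable fun i => ‖g i‖ := by
    simpa [Real.norm_eq_abs] using hgabs_s
  have step1 : |∑' i, g i| ≤ ∑' i, |g i| := by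
    simpa [Real.norm_eq_abs] using norm_tsum_le_tsum_norm hnorm_s
  have step2 : ∑' i, |g i| ≤ ∑' i, (CD ^ 3 * A) * φ i x :=
    hgabs_s.tsum_le_tsum (fun i => (hgabs i) ▸ key i) (hφs.mul_left _)
  have step3 : ∑' i, (CD ^ 3 * A) * φ i x = CD ^ 3 * A := by
    rw [tsum_mul_left, hsum x, mul_one]
  linarith
end

section
/- Let f ∈ L²(X,μ) on a doubling metric measure space and for ε > 0 let f_ε := Σ_i f_{B_i^ε} φ_i^ε be the discrete convolution with respect to an ε-covering with Lipschitz partition of unity. Then ∫_X |f_ε − f|² dμ ≤ C ∫_X ( ⨍_{B(x,6ε)} |f(x) − f(y)| dμ(y) )² dμ(x), and consequently f_ε → f in L²(X,μ) as ε → 0⁺. -/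
open MeasureTheory Metric Filter Topology
open ENNReal

section Aux

variable {X : Type*} [MetricSpace X] [MeasurableSpace X] [BorelSpace X] (μ : Measure X)

lemma aux_ballSet_meas [SecondCountableTopology X] (r : ℝ) :
    MeasurableSet {p : X × X | dist p.1 p.2 < r} :=
  (isOpen_lt continuous_dist continuous_const).measurableSet

lemma aux_meas_ball [SecondCountableTopology X] [SFinite μ] (r : ℝ) :
    Measurable fun x => μ (ball x r) := by
  have h := measurable_measure_prodMk_left (ν := μ) (aux_ballSet_meas (X := X) r)
  convert h using 2 with x
  congr 1
  ext y
  simp [Metric.mem_ball, dist_comm]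

lemma aux_meas_G [SecondCountableTopology X] [SFinite μ] {w : X → ℝ}
    (hw : Measurable w) (r : ℝ) :
    Measurable fun x => ∫ y in ball x r, |w x - w y| ∂μ := by
  have hk : StronglyMeasurable fun p : X × X =>
      Set.indicator {p : X × X | dist p.1 p.2 < r} (fun p => |w p.1 - w p.2|) p := by
    apply Measurable.stronglyMeasurable
    exact Measurable.indicator
      (((hw.comp measurable_fst).sub (hw.comp measurable_snd)).abs) (aux_ballSet_meas r)
  have h := hk.integral_prod_right' (ν := μ)
  have heq : ∀ x, (∫ y, Set.indicator {p : X × X | dist p.1 p.2 < r}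
      (fun p => |w p.1 - w p.2|) (x, y) ∂μ) = ∫ y in ball x r, |w x - w y| ∂μ := by
    intro x
    rw [← integral_indicator measurableSet_ball]
    congr 1
    ext y
    classical
    rw [Set.indicator_apply, Set.indicator_apply]
    simp only [Set.mem_setOf_eq, mem_ball, dist_comm]
  simp only [← heq]
  exact h.measurable

end Aux

section Fub

variable {X : Type*} [MetricSpace X] [MeasurableSpace X] [BorelSpace X] (μ : Measure X)

open ENNReal

lemma aux_inv_le {CD : ℝ} (a b : ℝ≥0∞) (ha0 : a ≠ 0) (hatop : a ≠ ⊤) (hb0 : b ≠ 0)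
    (hbtop : b ≠ ⊤) (hCD : 0 < CD) (h : b ≤ ENNReal.ofReal CD * a) :
    a⁻¹ ≤ ENNReal.ofReal CD * b⁻¹ := by
  have hc0 : (ENNReal.ofReal CD) ≠ 0 := by simp [hCD, ENNReal.ofReal_eq_zero, not_le, hCD]
  have hctop : (ENNReal.ofReal CD) ≠ ⊤ := ENNReal.ofReal_ne_top
  calc a⁻¹ = (ENNReal.ofReal CD * b⁻¹) * (b * ((ENNReal.ofReal CD)⁻¹ * a⁻¹)) := by
        rw [show (ENNReal.ofReal CD * b⁻¹) * (b * ((ENNReal.ofReal CD)⁻¹ * a⁻¹))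
          = (ENNReal.ofReal CD * (ENNReal.ofReal CD)⁻¹) * (b⁻¹ * b) * a⁻¹ by ring,
          ENNReal.mul_inv_cancel hc0 hctop, ENNReal.inv_mul_cancel hb0 hbtop, one_mul, one_mul]
    _ ≤ (ENNReal.ofReal CD * b⁻¹) * ((ENNReal.ofReal CD * a) * ((ENNReal.ofReal CD)⁻¹ * a⁻¹)) := by
        gcongr
    _ = (ENNReal.ofReal CD * b⁻¹) * ((ENNReal.ofReal CD * (ENNReal.ofReal CD)⁻¹) * (a * a⁻¹)) := by
        ring
    _ = ENNReal.ofReal CD * b⁻¹ := by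
        rw [ENNReal.mul_inv_cancel hc0 hctop, ENNReal.mul_inv_cancel ha0 hatop, one_mul, mul_one]

lemma aux_fub [SecondCountableTopology X] [SigmaFinite μ] {CD : ℝ} (hCD : 0 < CD)
    (hpos : ∀ (x : X) (r : ℝ), 0 < r → 0 < μ (ball x r))
    (hfin : ∀ (x : X) (r : ℝ), 0 < r → μ (ball x r) < ⊤)
    (hdouble : ∀ (x : X) (r : ℝ), 0 < r →
      μ (ball x (2 * r)) ≤ ENNReal.ofReal CD * μ (ball x r))
    {h : X → ℝ≥0∞} (hh : Measurable h) {r : ℝ} (hr : 0 < r) :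
    ∫⁻ x, ((μ (ball x r))⁻¹ * ∫⁻ y in ball x r, h y ∂μ) ^ 2 ∂μ
      ≤ ENNReal.ofReal CD * ∫⁻ y, (h y) ^ 2 ∂μ := by
  -- Cauchy-Schwarz on each ball
  have hCS : ∀ x : X, (∫⁻ y in ball x r, h y ∂μ) ^ 2
      ≤ μ (ball x r) * ∫⁻ y in ball x r, (h y) ^ 2 ∂μ := by
    intro x
    have hconj : (2 : ℝ).HolderConjugate 2 := by rw [Real.holderConjugate_iff]; constructor <;> norm_num
    have := ENNReal.lintegral_mul_le_Lp_mul_Lq (μ.restrict (ball x r)) hconj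
      hh.aemeasurable (aemeasurable_const (b := (1:ℝ≥0∞)))
    simp only [mul_one, one_mul, Pi.mul_apply, ENNReal.one_rpow, lintegral_const,
      Measure.restrict_apply MeasurableSet.univ, Set.univ_inter] at this
    calc (∫⁻ y in ball x r, h y ∂μ) ^ 2
        ≤ ((∫⁻ y in ball x r, h y ^ (2:ℝ) ∂μ) ^ (1/(2:ℝ)) * (μ (ball x r)) ^ (1/(2:ℝ))) ^ 2 := by
          gcongr
      _ = μ (ball x r) * ∫⁻ y in ball x r, (h y) ^ 2 ∂μ := by
          rw [mul_pow, ← ENNReal.rpow_natCast (_ ^ (1/(2:ℝ))) 2,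
            ← ENNReal.rpow_natCast ((μ (ball x r)) ^ (1/(2:ℝ))) 2,
            ← ENNReal.rpow_mul, ← ENNReal.rpow_mul]
          norm_num [mul_comm]
  -- pointwise bound
  have hpt : ∀ x : X, ((μ (ball x r))⁻¹ * ∫⁻ y in ball x r, h y ∂μ) ^ 2
      ≤ (μ (ball x r))⁻¹ * ∫⁻ y in ball x r, (h y) ^ 2 ∂μ := by
    intro x
    have h0 : μ (ball x r) ≠ 0 := (hpos x r hr).ne'
    have htop : μ (ball x r) ≠ ⊤ := (hfin x r hr).ne
    calc ((μ (ball x r))⁻¹ * ∫⁻ y in ball x r, h y ∂μ) ^ 2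
        = ((μ (ball x r))⁻¹)^2 * (∫⁻ y in ball x r, h y ∂μ) ^ 2 := by rw [mul_pow]
      _ ≤ ((μ (ball x r))⁻¹)^2 * (μ (ball x r) * ∫⁻ y in ball x r, (h y) ^ 2 ∂μ) := by
          gcongr; exact hCS x
      _ = ((μ (ball x r))⁻¹ * ((μ (ball x r))⁻¹ * μ (ball x r))) * ∫⁻ y in ball x r, (h y)^2 ∂μ := by
          ring
      _ = (μ (ball x r))⁻¹ * ∫⁻ y in ball x r, (h y) ^ 2 ∂μ := by
          rw [ENNReal.inv_mul_cancel h0 htop, mul_one]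
  refine le_trans (lintegral_mono hpt) ?_
  -- rewrite as double integral and swap
  have hSmeas : MeasurableSet {p : X × X | dist p.1 p.2 < r} := aux_ballSet_meas r
  set F : X → X → ℝ≥0∞ := fun x y =>
    (μ (ball x r))⁻¹ * Set.indicator {p : X × X | dist p.1 p.2 < r} (fun p => h p.2 ^ 2) (x, y)
    with hF
  have hFmeas : Measurable (Function.uncurry F) := by
    apply Measurable.mul
    · exact ((aux_meas_ball μ r).inv).comp measurable_fst
    · exact ((hh.comp measurable_snd).pow_const 2).indicator hSmeas
  have h1 : ∀ x, (μ (ball x r))⁻¹ * ∫⁻ y in ball x r, (h y) ^ 2 ∂μ = ∫⁻ y, F x y ∂μ := by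
    intro x
    rw [← lintegral_indicator measurableSet_ball, ← lintegral_const_mul _
      (((hh.pow_const 2).indicator measurableSet_ball))]
    refine lintegral_congr fun y => ?_
    rw [hF]
    classical
    simp only [Set.indicator_apply, Set.mem_setOf_eq, mem_ball, dist_comm]
  have h2 : ∀ y, ∫⁻ x, F x y ∂μ ≤ ENNReal.ofReal CD * (h y) ^ 2 := by
    intro y
    have h2a : ∀ x, F x y = Set.indicator (ball y r) (fun x => (μ (ball x r))⁻¹ * (h y)^2) x := by
      intro x
      classical
      rw [hF]
      simp only [Set.indicator_apply, Set.mem_setOf_eq, mem_ball, dist_comm x y, mul_ite, mul_zero]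
    calc ∫⁻ x, F x y ∂μ = ∫⁻ x in ball y r, (μ (ball x r))⁻¹ * (h y) ^ 2 ∂μ := by
          rw [← lintegral_indicator measurableSet_ball]
          exact lintegral_congr fun x => h2a x
      _ ≤ ∫⁻ x in ball y r, (ENNReal.ofReal CD * (μ (ball y r))⁻¹) * (h y) ^ 2 ∂μ := by
          refine setLIntegral_mono (by fun_prop) fun x hx => ?_
          gcongr
          refine aux_inv_le _ _ (hpos x r hr).ne' (hfin x r hr).ne (hpos y r hr).ne'
            (hfin y r hr).ne hCD ?_
          refine le_trans (measure_mono fun z hz => ?_) (hdouble x r hr)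
          have h3 : dist z x ≤ dist z y + dist y x := dist_triangle z y x
          have hzy : dist z y < r := mem_ball.1 hz
          have hyx : dist y x < r := by rw [dist_comm]; exact mem_ball.1 hx
          exact mem_ball.2 (by linarith)
      _ = (ENNReal.ofReal CD * (μ (ball y r))⁻¹) * (h y) ^ 2 * μ (ball y r) := by
          rw [setLIntegral_const]
      _ = ENNReal.ofReal CD * (h y) ^ 2 * ((μ (ball y r))⁻¹ * μ (ball y r)) := by ring
      _ = ENNReal.ofReal CD * (h y) ^ 2 := by
          rw [ENNReal.inv_mul_cancel (hpos y r hr).ne' (hfin y r hr).ne, mul_one]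
  calc ∫⁻ x, (μ (ball x r))⁻¹ * ∫⁻ y in ball x r, (h y) ^ 2 ∂μ ∂μ
      = ∫⁻ x, ∫⁻ y, F x y ∂μ ∂μ := lintegral_congr h1
    _ = ∫⁻ y, ∫⁻ x, F x y ∂μ ∂μ := lintegral_lintegral_swap hFmeas.aemeasurable
    _ ≤ ∫⁻ y, ENNReal.ofReal CD * (h y) ^ 2 ∂μ := lintegral_mono h2
    _ = ENNReal.ofReal CD * ∫⁻ y, (h y) ^ 2 ∂μ := lintegral_const_mul _ (hh.pow_const 2)

end Fub

section GL2

open ENNReal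

variable {X : Type*} [MetricSpace X] [MeasurableSpace X] [BorelSpace X] (μ : Measure X)

lemma aux_sq4 (a b : ℝ≥0∞) : (a + b) ^ 2 ≤ 4 * a ^ 2 + 4 * b ^ 2 := by
  rcases le_total a b with hab | hab
  · calc (a+b)^2 ≤ (b+b)^2 := by gcongr
      _ = 4 * b^2 := by ring
      _ ≤ 4 * a^2 + 4 * b^2 := le_add_self
  · calc (a+b)^2 ≤ (a+a)^2 := by gcongr
      _ = 4 * a^2 := by ring
      _ ≤ 4 * a^2 + 4 * b^2 := le_add_right (le_refl _)

lemma aux_meas_lintG [SecondCountableTopology X] [SFinite μ] {g : X → ℝ≥0∞}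
    (hg : Measurable g) (r : ℝ) :
    Measurable fun x => ∫⁻ y in ball x r, g y ∂μ := by
  have hk : Measurable (fun p : X × X =>
      Set.indicator {p : X × X | dist p.1 p.2 < r} (fun p => g p.2) p) :=
    (hg.comp measurable_snd).indicator (aux_ballSet_meas r)
  have h := hk.lintegral_prod_right' (ν := μ)
  have heq : ∀ x, (∫⁻ y, Set.indicator {p : X × X | dist p.1 p.2 < r}
      (fun p => g p.2) (x, y) ∂μ) = ∫⁻ y in ball x r, g y ∂μ := by
    intro x
    rw [← lintegral_indicator measurableSet_ball]
    refine lintegral_congr fun y => ?_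
    classical
    rw [Set.indicator_apply, Set.indicator_apply]
    simp only [Set.mem_setOf_eq, mem_ball, dist_comm]
  simpa only [heq] using h

lemma aux_G_L2_real [SecondCountableTopology X] [SigmaFinite μ] {CD : ℝ} (hCD : 0 < CD)
    (hpos : ∀ (x : X) (r : ℝ), 0 < r → 0 < μ (ball x r))
    (hfin : ∀ (x : X) (r : ℝ), 0 < r → μ (ball x r) < ⊤)
    (hdouble : ∀ (x : X) (r : ℝ), 0 < r →
      μ (ball x (2 * r)) ≤ ENNReal.ofReal CD * μ (ball x r))
    {w : X → ℝ} (hwm : Measurable w) (hw2 : MemLp w 2 μ) {r : ℝ} (hr : 0 < r) :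
    Integrable (fun x => (⨍ y in ball x r, |w x - w y| ∂μ) ^ 2) μ ∧
    ∫ x, (⨍ y in ball x r, |w x - w y| ∂μ) ^ 2 ∂μ ≤ (4 + 4 * CD) * ∫ y, (w y) ^ 2 ∂μ := by
  set G : X → ℝ := fun x => ⨍ y in ball x r, |w x - w y| ∂μ with hG
  have hGdef : ∀ x, G x = (μ (ball x r)).toReal⁻¹ * ∫ y in ball x r, |w x - w y| ∂μ := by
    intro x
    show ⨍ y in ball x r, |w x - w y| ∂μ = _
    rw [setAverage_eq, smul_eq_mul]
    rfl
  have hGnonneg : ∀ x, 0 ≤ G x := by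
    intro x; rw [hGdef x]
    exact mul_nonneg (inv_nonneg.2 ENNReal.toReal_nonneg)
      (integral_nonneg fun y => abs_nonneg _)
  have hGmeas : Measurable G := by
    have : G = fun x => (μ (ball x r)).toReal⁻¹ * ∫ y in ball x r, |w x - w y| ∂μ :=
      funext hGdef
    rw [this]
    exact ((aux_meas_ball μ r).ennreal_toReal.inv).mul (aux_meas_G μ hwm r)
  -- pointwise ENNReal bound
  set A : X → ℝ≥0∞ := fun x =>
    (μ (ball x r))⁻¹ * ∫⁻ y in ball x r, ENNReal.ofReal |w y| ∂μ with hA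
  have hofR : ∀ x, ENNReal.ofReal (G x) ≤ ENNReal.ofReal |w x| + A x := by
    intro x
    have h0 : μ (ball x r) ≠ 0 := (hpos x r hr).ne'
    have htop : μ (ball x r) ≠ ⊤ := (hfin x r hr).ne
    haveI : IsFiniteMeasure (μ.restrict (ball x r)) := by
      constructor
      rw [Measure.restrict_apply_univ]
      exact hfin x r hr
    have hwint : IntegrableOn w (ball x r) μ :=
      (hw2.restrict (ball x r)).integrable (by norm_num)
    have habs : IntegrableOn (fun y => |w x - w y|) (ball x r) μ :=
      ((integrableOn_const (hfin x r hr).ne).sub hwint).abs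
    have e1 : ENNReal.ofReal (G x)
        = (μ (ball x r))⁻¹ * ENNReal.ofReal (∫ y in ball x r, |w x - w y| ∂μ) := by
      rw [hGdef x, ENNReal.ofReal_mul (inv_nonneg.2 ENNReal.toReal_nonneg),
        ← ENNReal.toReal_inv, ENNReal.ofReal_toReal (ENNReal.inv_ne_top.2 h0)]
    have e2 : ENNReal.ofReal (∫ y in ball x r, |w x - w y| ∂μ)
        = ∫⁻ y in ball x r, ENNReal.ofReal |w x - w y| ∂μ :=
      ofReal_integral_eq_lintegral_ofReal habs
        (Filter.Eventually.of_forall fun y => abs_nonneg _)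
    have e3 : (∫⁻ y in ball x r, ENNReal.ofReal |w x - w y| ∂μ)
        ≤ ∫⁻ y in ball x r, (ENNReal.ofReal |w x| + ENNReal.ofReal |w y|) ∂μ := by
      refine lintegral_mono fun y => ?_
      rw [← ENNReal.ofReal_add (abs_nonneg _) (abs_nonneg _)]
      exact ENNReal.ofReal_le_ofReal (abs_sub _ _)
    have e4 : (∫⁻ y in ball x r, (ENNReal.ofReal |w x| + ENNReal.ofReal |w y|) ∂μ)
        = ENNReal.ofReal |w x| * μ (ball x r) + ∫⁻ y in ball x r, ENNReal.ofReal |w y| ∂μ := by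
      rw [lintegral_add_left measurable_const, setLIntegral_const]
    calc ENNReal.ofReal (G x)
        = (μ (ball x r))⁻¹ * ENNReal.ofReal (∫ y in ball x r, |w x - w y| ∂μ) := e1
      _ ≤ (μ (ball x r))⁻¹ *
          (ENNReal.ofReal |w x| * μ (ball x r) + ∫⁻ y in ball x r, ENNReal.ofReal |w y| ∂μ) := by
          rw [e2]; gcongr; rw [← e4]; exact e3
      _ = ENNReal.ofReal |w x| * ((μ (ball x r))⁻¹ * μ (ball x r)) + A x := by
          rw [hA]; ring
      _ = ENNReal.ofReal |w x| + A x := by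
          rw [ENNReal.inv_mul_cancel h0 htop, mul_one]
  -- lintegral bound
  have hAfub : ∫⁻ x, A x ^ 2 ∂μ
      ≤ ENNReal.ofReal CD * ∫⁻ y, (ENNReal.ofReal |w y|) ^ 2 ∂μ :=
    aux_fub μ hCD hpos hfin hdouble (hwm.abs.ennreal_ofReal) hr
  have hAmeas : Measurable A :=
    ((aux_meas_ball μ r).inv).mul (aux_meas_lintG μ (hwm.abs.ennreal_ofReal) r)
  have hlint : ∫⁻ x, (ENNReal.ofReal (G x)) ^ 2 ∂μ
      ≤ (4 + 4 * ENNReal.ofReal CD) * ∫⁻ y, (ENNReal.ofReal |w y|) ^ 2 ∂μ := by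
    calc ∫⁻ x, (ENNReal.ofReal (G x)) ^ 2 ∂μ
        ≤ ∫⁻ x, (4 * (ENNReal.ofReal |w x|) ^ 2 + 4 * A x ^ 2) ∂μ := by
          refine lintegral_mono fun x => ?_
          exact le_trans (by gcongr; exact hofR x) (aux_sq4 _ _)
      _ = 4 * ∫⁻ x, (ENNReal.ofReal |w x|) ^ 2 ∂μ + 4 * ∫⁻ x, A x ^ 2 ∂μ := by
          rw [lintegral_add_left (by fun_prop), lintegral_const_mul _ (by fun_prop),
            lintegral_const_mul _ (by fun_prop)]
      _ ≤ 4 * ∫⁻ x, (ENNReal.ofReal |w x|) ^ 2 ∂μ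
          + 4 * (ENNReal.ofReal CD * ∫⁻ y, (ENNReal.ofReal |w y|) ^ 2 ∂μ) := by gcongr
      _ = (4 + 4 * ENNReal.ofReal CD) * ∫⁻ y, (ENNReal.ofReal |w y|) ^ 2 ∂μ := by ring
  -- identification of ∫⁻ |w|²
  have hWint : Integrable (fun y => w y ^ 2) μ := hw2.integrable_sq
  have hw2nn : 0 ≤ ∫ y, w y ^ 2 ∂μ := integral_nonneg fun y => sq_nonneg _
  have hident : ∫⁻ y, (ENNReal.ofReal |w y|) ^ 2 ∂μ = ENNReal.ofReal (∫ y, w y ^ 2 ∂μ) := by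
    rw [ofReal_integral_eq_lintegral_ofReal hWint
      (Filter.Eventually.of_forall fun y => sq_nonneg _)]
    refine lintegral_congr fun y => ?_
    rw [← ENNReal.ofReal_pow (abs_nonneg _), sq_abs]
  have hbound : ∫⁻ x, (ENNReal.ofReal (G x)) ^ 2 ∂μ
      ≤ ENNReal.ofReal ((4 + 4 * CD) * ∫ y, w y ^ 2 ∂μ) := by
    rw [ENNReal.ofReal_mul (by positivity)]
    refine le_trans hlint ?_
    rw [hident]
    gcongr
    rw [ENNReal.ofReal_add (by norm_num) (by positivity), ENNReal.ofReal_mul (by norm_num)]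
    norm_num
  have hofG : ∀ x, ENNReal.ofReal (G x ^ 2) = (ENNReal.ofReal (G x)) ^ 2 := fun x =>
    ENNReal.ofReal_pow (hGnonneg x) 2
  have hfinint : ∫⁻ x, ENNReal.ofReal (G x ^ 2) ∂μ ≠ ⊤ := by
    rw [lintegral_congr hofG]
    exact (lt_of_le_of_lt hbound ENNReal.ofReal_lt_top).ne
  have hint : Integrable (fun x => G x ^ 2) μ := by
    refine ⟨(hGmeas.pow_const 2).aestronglyMeasurable, ?_⟩
    rw [hasFiniteIntegral_iff_ofReal (Filter.Eventually.of_forall fun x => sq_nonneg _)]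
    exact lt_of_le_of_lt (le_of_eq (lintegral_congr hofG))
      (lt_of_le_of_lt hbound ENNReal.ofReal_lt_top)
  constructor
  · exact hint
  · rw [integral_eq_lintegral_of_nonneg_ae (Filter.Eventually.of_forall fun x => sq_nonneg _)
      (hGmeas.pow_const 2).aestronglyMeasurable]
    calc (∫⁻ x, ENNReal.ofReal (G x ^ 2) ∂μ).toReal
        ≤ (ENNReal.ofReal ((4 + 4 * CD) * ∫ y, w y ^ 2 ∂μ)).toReal := by
          refine ENNReal.toReal_mono ENNReal.ofReal_ne_top ?_
          rw [lintegral_congr hofG]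
          exact hbound
      _ = (4 + 4 * CD) * ∫ y, w y ^ 2 ∂μ := ENNReal.toReal_ofReal (by positivity)

end GL2

section Cpt

open ENNReal

variable {X : Type*} [MetricSpace X] [MeasurableSpace X] [BorelSpace X] (μ : Measure X)

lemma aux_avg_le {x : X} {r : ℝ} (h0 : μ (ball x r) ≠ 0) (htop : μ (ball x r) ≠ ⊤)
    {g : X → ℝ} (hgnn : ∀ y, 0 ≤ g y) {cc : ℝ} (hgle : ∀ y ∈ ball x r, g y ≤ cc) :
    ⨍ y in ball x r, g y ∂μ ≤ cc := by
  rw [setAverage_eq, smul_eq_mul]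
  have htr : 0 < (μ (ball x r)).toReal := ENNReal.toReal_pos h0 htop
  have h1 : ∫ y in ball x r, g y ∂μ ≤ (μ (ball x r)).toReal * cc := by
    have h2 := integral_mono_of_nonneg (f := fun y => g y) (g := fun _ => cc)
      (μ := μ.restrict (ball x r))
      (Filter.Eventually.of_forall fun y => hgnn y)
      (integrableOn_const htop)
      ((ae_restrict_iff' measurableSet_ball).2 (Filter.Eventually.of_forall hgle))
    simpa [setIntegral_const, smul_eq_mul, measureReal_def] using h2
  calc (μ (ball x r)).toReal⁻¹ * ∫ y in ball x r, g y ∂μ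
      ≤ (μ (ball x r)).toReal⁻¹ * ((μ (ball x r)).toReal * cc) := by
        exact mul_le_mul_of_nonneg_left h1 (inv_nonneg.2 htr.le)
    _ = cc := by field_simp

lemma aux_cpt [SecondCountableTopology X] [SigmaFinite μ]
    (hpos : ∀ (x : X) (r : ℝ), 0 < r → 0 < μ (ball x r))
    (hfin : ∀ (x : X) (r : ℝ), 0 < r → μ (ball x r) < ⊤)
    {u : X → ℝ} (hu : Continuous u) (M R : ℝ) (hR : 0 ≤ R) (x₀ : X)
    (hM : ∀ x, |u x| ≤ M) (hzero : ∀ x, R ≤ dist x x₀ → u x = 0) :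
    Tendsto (fun ε : ℝ => ∫ x, (⨍ y in ball x (6 * ε), |u x - u y| ∂μ) ^ 2 ∂μ)
      (𝓝[>] (0:ℝ)) (𝓝 0) := by
  have hM0 : 0 ≤ M := le_trans (abs_nonneg _) (hM x₀)
  have hGnn : ∀ (r : ℝ) (x : X), 0 ≤ ⨍ y in ball x r, |u x - u y| ∂μ := by
    intro r x
    rw [setAverage_eq]
    exact smul_nonneg (inv_nonneg.2 ENNReal.toReal_nonneg)
      (integral_nonneg fun y => abs_nonneg _)
  have hGmeas : ∀ r : ℝ, Measurable fun x => ⨍ y in ball x r, |u x - u y| ∂μ := by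
    intro r
    have : (fun x => ⨍ y in ball x r, |u x - u y| ∂μ)
        = fun x => (μ (ball x r)).toReal⁻¹ * ∫ y in ball x r, |u x - u y| ∂μ := by
      funext x; rw [setAverage_eq, smul_eq_mul]; rfl
    rw [this]
    exact ((aux_meas_ball μ r).ennreal_toReal.inv).mul (aux_meas_G μ hu.measurable r)
  have key := tendsto_integral_filter_of_dominated_convergence (μ := μ)
      (l := 𝓝[>] (0:ℝ)) (F := fun (ε : ℝ) x => (⨍ y in ball x (6 * ε), |u x - u y| ∂μ) ^ 2)
      (f := fun _ => (0:ℝ))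
      (bound := Set.indicator (closedBall x₀ (R + 6)) (fun _ => (2 * M) ^ 2))
      (Filter.Eventually.of_forall fun ε =>
        (((hGmeas (6 * ε)).pow_const 2).aestronglyMeasurable))
      ?_ ?_ ?_
  · simpa using key
  · -- domination
    filter_upwards [Ioc_mem_nhdsGT (show (0:ℝ) < 1 by norm_num)] with ε hε
    refine Filter.Eventually.of_forall fun x => ?_
    have hr : 0 < 6 * ε := by linarith [hε.1]
    have h0 : μ (ball x (6 * ε)) ≠ 0 := (hpos x _ hr).ne'
    have htop : μ (ball x (6 * ε)) ≠ ⊤ := (hfin x _ hr).ne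
    rw [Real.norm_eq_abs, abs_of_nonneg (sq_nonneg _)]
    classical
    by_cases hx : x ∈ closedBall x₀ (R + 6)
    · rw [Set.indicator_of_mem hx]
      have hGle : ⨍ y in ball x (6 * ε), |u x - u y| ∂μ ≤ 2 * M := by
        refine aux_avg_le μ h0 htop (fun y => abs_nonneg _) fun y _ => ?_
        calc |u x - u y| ≤ |u x| + |u y| := abs_sub _ _
          _ ≤ M + M := add_le_add (hM x) (hM y)
          _ = 2 * M := by ring
      exact pow_le_pow_left₀ (hGnn _ x) hGle 2
    · rw [Set.indicator_of_notMem hx]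
      have hdx : R + 6 < dist x x₀ := by
        by_contra hcon
        exact hx (mem_closedBall.2 (not_lt.1 hcon))
      have hzero' : ∀ y ∈ ball x (6 * ε), |u x - u y| = 0 := by
        intro y hy
        have h1 : u x = 0 := hzero x (by linarith)
        have h2 : u y = 0 := by
          refine hzero y ?_
          have h3 : dist x x₀ ≤ dist x y + dist y x₀ := dist_triangle x y x₀
          have h4 : dist x y < 6 * ε := by rw [dist_comm]; exact mem_ball.1 hy
          have h5 : 6 * ε ≤ 6 := by linarith [hε.2]
          linarith
        rw [h1, h2]; simp
      have : ⨍ y in ball x (6 * ε), |u x - u y| ∂μ = 0 := by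
        rw [setAverage_eq, smul_eq_mul]
        rw [setIntegral_congr_fun measurableSet_ball hzero']
        simp
      rw [this]
      simp
  · -- integrability of the bound
    rw [integrable_indicator_iff measurableSet_closedBall]
    refine integrableOn_const ?_
    have hsub : closedBall x₀ (R + 6) ⊆ ball x₀ (R + 7) :=
      closedBall_subset_ball (by linarith)
    exact (lt_of_le_of_lt (measure_mono hsub) (hfin x₀ (R + 7) (by linarith))).ne
  · -- pointwise convergence
    refine Filter.Eventually.of_forall fun x => ?_
    have T : Tendsto (fun ε : ℝ => ⨍ y in ball x (6 * ε), |u x - u y| ∂μ)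
        (𝓝[>] (0:ℝ)) (𝓝 0) := by
      rw [Metric.tendsto_nhds]
      intro η hη
      obtain ⟨δ, hδ, hδ'⟩ := Metric.continuous_iff.1 hu x (η / 2) (half_pos hη)
      filter_upwards [Ioo_mem_nhdsGT_of_mem
        (show (0:ℝ) ∈ Set.Ico 0 (δ / 6) by exact ⟨le_refl _, by linarith⟩)] with ε hε
      have hr : 0 < 6 * ε := by linarith [hε.1]
      have h0 : μ (ball x (6 * ε)) ≠ 0 := (hpos x _ hr).ne'
      have htop : μ (ball x (6 * ε)) ≠ ⊤ := (hfin x _ hr).ne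
      rw [Real.dist_eq, sub_zero, abs_of_nonneg (hGnn _ x)]
      have hGle : ⨍ y in ball x (6 * ε), |u x - u y| ∂μ ≤ η / 2 := by
        refine aux_avg_le μ h0 htop (fun y => abs_nonneg _) fun y hy => ?_
        have h4 : dist y x < δ := lt_of_lt_of_le (mem_ball.1 hy) (by linarith [hε.2])
        have := hδ' y h4
        rw [Real.dist_eq] at this
        rw [abs_sub_comm]
        exact this.le
      linarith
    have := T.pow 2
    simpa using this

end Cpt

section Glue

open ENNReal

variable {X : Type*} [MetricSpace X] [MeasurableSpace X] {μ : Measure X}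

lemma aux_int_sq_eq {w : X → ℝ} (hw : MemLp w 2 μ) :
    ∫ x, w x ^ 2 ∂μ = ((eLpNorm w 2 μ).toReal) ^ 2 := by
  have hsm : AEStronglyMeasurable (fun x => w x ^ 2) μ :=
    (hw.aestronglyMeasurable.aemeasurable.pow_const 2).aestronglyMeasurable
  have h1 : ∫ x, w x ^ 2 ∂μ = (∫⁻ x, ENNReal.ofReal (w x ^ 2) ∂μ).toReal :=
    integral_eq_lintegral_of_nonneg_ae (Filter.Eventually.of_forall fun x => sq_nonneg _) hsm
  set E := ∫⁻ x, ‖w x‖ₑ ^ (2:ℝ) ∂μ with hE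
  have h2 : ∫⁻ x, ENNReal.ofReal (w x ^ 2) ∂μ = E := by
    refine lintegral_congr fun x => ?_
    rw [← sq_abs, ← Real.norm_eq_abs, ENNReal.ofReal_pow (norm_nonneg _),
      ofReal_norm, ← ENNReal.rpow_natCast]
    norm_num
  have h3 : eLpNorm w 2 μ = E ^ (1/(2:ℝ)) := by
    rw [eLpNorm_eq_lintegral_rpow_enorm_toReal (by norm_num) (by norm_num)]
    simp only [ENNReal.toReal_ofNat, hE]
  have hEtop : E ≠ ⊤ := by
    intro hcon
    have := hw.2
    rw [h3, hcon] at this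
    simp [ENNReal.top_rpow_of_pos (by norm_num : (0:ℝ) < 1/2)] at this
  have h4 : (eLpNorm w 2 μ) ^ 2 = E := by
    rw [h3, ← ENNReal.rpow_natCast (E ^ (1/(2:ℝ))) 2, ← ENNReal.rpow_mul]
    norm_num
  rw [h1, h2, ← h4, ENNReal.toReal_pow]

end Glue

set_option maxHeartbeats 1000000 in
/-- L² estimate for the discrete convolutions `f_ε` and
convergence `f_ε → f` in `L²(X,μ)` as `ε → 0⁺`. -/
theorem stmt3 {X : Type*} [MetricSpace X] [MeasurableSpace X] [BorelSpace X]
    (μ : Measure X) (CD : ℝ) (hCD : 0 < CD)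
    (hpos : ∀ (x : X) (r : ℝ), 0 < r → 0 < μ (ball x r))
    (hfin : ∀ (x : X) (r : ℝ), 0 < r → μ (ball x r) < ⊤)
    (hdouble : ∀ (x : X) (r : ℝ), 0 < r →
      μ (ball x (2 * r)) ≤ ENNReal.ofReal CD * μ (ball x r))
    (N : ℕ) (CL : ℝ) (hCL : 0 < CL)
    (ι : ℝ → Type) (hcnt : ∀ ε, Countable (ι ε))
    (c : ∀ ε, ι ε → X) (φ : ∀ ε, ι ε → X → ℝ)
    (hcover : ∀ ε : ℝ, 0 < ε → (⋃ i, ball (c ε i) ε) = Set.univ)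
    (hoverlap : ∀ ε : ℝ, 0 < ε → ∀ x : X,
      Set.ncard {i | x ∈ ball (c ε i) (5 * ε)} ≤ N)
    (hnonneg : ∀ ε i x, 0 ≤ φ ε i x) (hle : ∀ ε i x, φ ε i x ≤ 1)
    (hsum : ∀ ε : ℝ, 0 < ε → ∀ x, ∑' i, φ ε i x = 1)
    (hsupp : ∀ ε : ℝ, 0 < ε → ∀ i x, x ∉ ball (c ε i) (2 * ε) → φ ε i x = 0)
    (hlip : ∀ ε : ℝ, 0 < ε → ∀ i, LipschitzWith (Real.toNNReal (CL / ε)) (φ ε i))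
    (f : X → ℝ) (hf : MemLp f 2 μ) :
    ∃ C : ℝ, 0 < C ∧
      (∀ ε : ℝ, 0 < ε →
        ∫ x, ((∑' i, (⨍ y in ball (c ε i) ε, f y ∂μ) * φ ε i x) - f x) ^ 2 ∂μ ≤
          C * ∫ x, (⨍ y in ball x (6 * ε), |f x - f y| ∂μ) ^ 2 ∂μ) ∧
      Tendsto
        (fun ε => ∫ x, ((∑' i, (⨍ y in ball (c ε i) ε, f y ∂μ) * φ ε i x) - f x) ^ 2 ∂μ)
        (𝓝[>] (0 : ℝ)) (𝓝 0) := by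
  rcases isEmpty_or_nonempty X with hemp | hne
  · have hμ0 : μ = 0 := Measure.eq_zero_of_isEmpty μ
    refine ⟨1, one_pos, ?_, ?_⟩
    · intro ε hε
      simp [hμ0]
    · simp only [hμ0, integral_zero_measure]
      exact tendsto_const_nhds
  -- topological and measure-theoretic instances
  haveI hsep : TopologicalSpace.SeparableSpace X := by
    refine ⟨⟨⋃ n : ℕ, Set.range fun i => c (1/((n:ℝ)+1)) i, ?_, ?_⟩⟩
    · refine Set.countable_iUnion fun n => ?_
      haveI := hcnt (1/((n:ℝ)+1))
      exact Set.countable_range _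
    · rw [Metric.dense_iff]
      intro x r hr
      obtain ⟨n, hn⟩ := exists_nat_one_div_lt hr
      have hcov := hcover (1/((n:ℝ)+1)) (by positivity)
      have hx : x ∈ ⋃ i, ball (c (1/((n:ℝ)+1)) i) (1/((n:ℝ)+1)) := by
        rw [hcov]; trivial
      obtain ⟨i, hi⟩ := Set.mem_iUnion.1 hx
      refine ⟨c (1/((n:ℝ)+1)) i, ?_, Set.mem_iUnion.2 ⟨n, Set.mem_range_self i⟩⟩
      rw [mem_ball, dist_comm]
      exact lt_trans (mem_ball.1 hi) hn
  haveI : SecondCountableTopology X := UniformSpace.secondCountable_of_separable X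
  haveI : SigmaFinite μ := by
    haveI := hcnt (1:ℝ)
    refine Measure.sigmaFinite_of_countable (S := Set.range fun i => ball (c 1 i) 1)
      (Set.countable_range _) ?_ ?_
    · rintro s ⟨i, rfl⟩; exact hfin _ 1 one_pos
    · rw [Set.sUnion_range]; exact hcover 1 one_pos
  haveI : IsLocallyFiniteMeasure μ :=
    ⟨fun x => ⟨ball x 1, ball_mem_nhds x one_pos, hfin x 1 one_pos⟩⟩
  obtain ⟨x₀⟩ := hne
  have hCD1 : 1 ≤ CD := by
    by_contra hcon
    push_neg at hcon
    have h0 : μ (ball x₀ 1) ≠ 0 := (hpos x₀ 1 one_pos).ne'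
    have htop : μ (ball x₀ 1) ≠ ⊤ := (hfin x₀ 1 one_pos).ne
    have h1 : μ (ball x₀ (2*1)) ≤ ENNReal.ofReal CD * μ (ball x₀ 1) := hdouble x₀ 1 one_pos
    have h2 : μ (ball x₀ 1) ≤ μ (ball x₀ (2*1)) :=
      measure_mono (ball_subset_ball (by norm_num))
    have h3 : ENNReal.ofReal CD * μ (ball x₀ 1) < 1 * μ (ball x₀ 1) := by
      rw [mul_comm _ (μ (ball x₀ 1)), mul_comm 1]
      exact ENNReal.mul_lt_mul_right h0 htop (ENNReal.ofReal_lt_one.2 hcon)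
    rw [one_mul] at h3
    exact absurd (lt_of_le_of_lt (le_trans h2 h1) h3) (lt_irrefl _)
  -- measurable representative
  set f' := hf.1.mk f with hf'def
  have hf'sm : StronglyMeasurable f' := hf.1.stronglyMeasurable_mk
  have hff' : f =ᵐ[μ] f' := hf.1.ae_eq_mk
  have hf'meas : Measurable f' := hf'sm.measurable
  have hf'2 : MemLp f' 2 μ := hf.ae_eq hff'
  -- iterated doubling
  have hdbl4 : ∀ (x : X) (r : ℝ), 0 < r →
      μ (ball x (16 * r)) ≤ ENNReal.ofReal (CD^4) * μ (ball x r) := by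
    intro x r hr
    have e1 : (16:ℝ) * r = 2*(2*(2*(2*r))) := by ring
    rw [e1, ENNReal.ofReal_pow hCD.le]
    calc μ (ball x (2*(2*(2*(2*r)))))
        ≤ ENNReal.ofReal CD * μ (ball x (2*(2*(2*r)))) := hdouble _ _ (by positivity)
      _ ≤ ENNReal.ofReal CD * (ENNReal.ofReal CD * μ (ball x (2*(2*r)))) := by
          gcongr; exact hdouble _ _ (by positivity)
      _ ≤ ENNReal.ofReal CD * (ENNReal.ofReal CD * (ENNReal.ofReal CD * μ (ball x (2*r)))) := by
          gcongr; exact hdouble _ _ (by positivity)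
      _ ≤ ENNReal.ofReal CD * (ENNReal.ofReal CD * (ENNReal.ofReal CD *
            (ENNReal.ofReal CD * μ (ball x r)))) := by
          gcongr; exact hdouble _ _ hr
      _ = ENNReal.ofReal CD ^ 4 * μ (ball x r) := by ring
  -- ae equality of G's
  have hGG' : ∀ r : ℝ, (fun x => ⨍ y in ball x r, |f x - f y| ∂μ)
      =ᵐ[μ] fun x => ⨍ y in ball x r, |f' x - f' y| ∂μ := by
    intro r
    filter_upwards [hff'] with x hx
    rw [setAverage_eq, setAverage_eq]
    congr 1
    refine integral_congr_ae ?_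
    filter_upwards [ae_restrict_of_ae hff'] with y hy
    rw [hx, hy]
  -- integrability of f on balls
  have hIf : ∀ (z : X) (r : ℝ), 0 < r → IntegrableOn f (ball z r) μ := by
    intro z r hr
    haveI : IsFiniteMeasure (μ.restrict (ball z r)) := by
      constructor
      rw [Measure.restrict_apply_univ]
      exact hfin z r hr
    exact (hf.restrict (ball z r)).integrable (by norm_num)
  -- pointwise estimate for part 1
  have hpt : ∀ ε : ℝ, 0 < ε → ∀ x : X,
      |(∑' i, (⨍ y in ball (c ε i) ε, f y ∂μ) * φ ε i x) - f x|
        ≤ CD^4 * ⨍ y in ball x (6 * ε), |f x - f y| ∂μ := by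
    intro ε hε x
    have hr6 : 0 < 6 * ε := by linarith
    have hIg6 : IntegrableOn (fun y => |f x - f y|) (ball x (6*ε)) μ :=
      ((integrableOn_const (hfin x _ hr6).ne).sub (hIf x _ hr6)).abs
    have hGxnn : 0 ≤ ⨍ y in ball x (6 * ε), |f x - f y| ∂μ := by
      rw [setAverage_eq]
      exact smul_nonneg (inv_nonneg.2 ENNReal.toReal_nonneg)
        (integral_nonneg fun y => abs_nonneg _)
    have hsummφ : Summable fun i => φ ε i x := by
      by_contra hcon
      have h1 := tsum_eq_zero_of_not_summable hcon
      rw [hsum ε hε x] at h1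
      norm_num at h1
    have hterm : ∀ i, |((⨍ y in ball (c ε i) ε, f y ∂μ) - f x) * φ ε i x|
        ≤ (CD^4 * ⨍ y in ball x (6 * ε), |f x - f y| ∂μ) * φ ε i x := by
      intro i
      by_cases hφ : φ ε i x = 0
      · rw [hφ, mul_zero, mul_zero, abs_zero]
      · have hx2 : x ∈ ball (c ε i) (2 * ε) := by
          by_contra hmem
          exact hφ (hsupp ε hε i x hmem)
        have h0i : μ (ball (c ε i) ε) ≠ 0 := (hpos _ _ hε).ne'
        have htopi : μ (ball (c ε i) ε) ≠ ⊤ := (hfin _ _ hε).ne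
        have h06 : μ (ball x (6*ε)) ≠ 0 := (hpos _ _ hr6).ne'
        have htop6 : μ (ball x (6*ε)) ≠ ⊤ := (hfin _ _ hr6).ne
        have hIfi : IntegrableOn f (ball (c ε i) ε) μ := hIf _ _ hε
        have hIgi : IntegrableOn (fun y => |f x - f y|) (ball (c ε i) ε) μ :=
          ((integrableOn_const (hfin _ _ hε).ne).sub hIfi).abs
        have hti : 0 < (μ (ball (c ε i) ε)).toReal := ENNReal.toReal_pos h0i htopi
        have ht6 : 0 < (μ (ball x (6*ε))).toReal := ENNReal.toReal_pos h06 htop6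
        have ha : |(⨍ y in ball (c ε i) ε, f y ∂μ) - f x|
            ≤ ⨍ y in ball (c ε i) ε, |f x - f y| ∂μ := by
          rw [setAverage_eq, setAverage_eq, smul_eq_mul, smul_eq_mul, measureReal_def]
          have e1 : (μ (ball (c ε i) ε)).toReal⁻¹ * (∫ y in ball (c ε i) ε, f y ∂μ) - f x
              = (μ (ball (c ε i) ε)).toReal⁻¹ * ∫ y in ball (c ε i) ε, (f y - f x) ∂μ := by
            rw [integral_sub hIfi (integrableOn_const (hfin _ _ hε).ne),
              setIntegral_const, smul_eq_mul, mul_sub, measureReal_def]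
            field_simp
          rw [e1, abs_mul, abs_of_nonneg (inv_nonneg.2 hti.le)]
          refine mul_le_mul_of_nonneg_left ?_ (inv_nonneg.2 hti.le)
          calc |∫ y in ball (c ε i) ε, (f y - f x) ∂μ|
              ≤ ∫ y in ball (c ε i) ε, |f y - f x| ∂μ := by
                have := norm_integral_le_integral_norm (μ := μ.restrict (ball (c ε i) ε))
                  (f := fun y => f y - f x)
                simpa [Real.norm_eq_abs] using this
            _ = ∫ y in ball (c ε i) ε, |f x - f y| ∂μ := by
                exact integral_congr_ae (Filter.Eventually.of_forall fun y =>
                  abs_sub_comm (f y) (f x))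
        have hsub1 : ball (c ε i) ε ⊆ ball x (6 * ε) := by
          intro z hz
          have h1 := mem_ball.1 hz
          have h2 := mem_ball.1 hx2
          have h3 : dist z x ≤ dist z (c ε i) + dist (c ε i) x := dist_triangle _ _ _
          rw [dist_comm] at h2
          exact mem_ball.2 (by linarith)
        have hb : (⨍ y in ball (c ε i) ε, |f x - f y| ∂μ)
            ≤ CD^4 * ⨍ y in ball x (6 * ε), |f x - f y| ∂μ := by
          rw [setAverage_eq, setAverage_eq, smul_eq_mul, smul_eq_mul]
          have h1 : ∫ y in ball (c ε i) ε, |f x - f y| ∂μ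
              ≤ ∫ y in ball x (6*ε), |f x - f y| ∂μ :=
            setIntegral_mono_set hIg6
              (Filter.Eventually.of_forall fun y => abs_nonneg _)
              (HasSubset.Subset.eventuallyLE hsub1)
          have hμcmp : μ (ball x (6*ε)) ≤ ENNReal.ofReal (CD^4) * μ (ball (c ε i) ε) := by
            refine le_trans (measure_mono ?_) (hdbl4 (c ε i) ε hε)
            intro z hz
            have h2 := mem_ball.1 hz
            have h4 := mem_ball.1 hx2
            have h5 : dist z (c ε i) ≤ dist z x + dist x (c ε i) := dist_triangle _ _ _
            exact mem_ball.2 (by linarith)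
          have htr : (μ (ball x (6*ε))).toReal ≤ CD^4 * (μ (ball (c ε i) ε)).toReal := by
            have h6 := ENNReal.toReal_mono
              (by
                refine ENNReal.mul_ne_top ENNReal.ofReal_ne_top htopi) hμcmp
            rwa [ENNReal.toReal_mul, ENNReal.toReal_ofReal (by positivity)] at h6
          have h2 : (μ (ball (c ε i) ε)).toReal⁻¹
              ≤ CD^4 * (μ (ball x (6*ε))).toReal⁻¹ := by
            have h7 : (μ (ball (c ε i) ε)).toReal⁻¹ * (μ (ball x (6*ε))).toReal ≤ CD^4 := by
              rw [inv_mul_le_iff₀ hti]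
              exact le_trans htr (le_of_eq (mul_comm _ _))
            calc (μ (ball (c ε i) ε)).toReal⁻¹
                = ((μ (ball (c ε i) ε)).toReal⁻¹ * (μ (ball x (6*ε))).toReal)
                  * (μ (ball x (6*ε))).toReal⁻¹ := by field_simp
              _ ≤ CD^4 * (μ (ball x (6*ε))).toReal⁻¹ :=
                  mul_le_mul_of_nonneg_right h7 (inv_nonneg.2 ht6.le)
          calc (μ (ball (c ε i) ε)).toReal⁻¹ * ∫ y in ball (c ε i) ε, |f x - f y| ∂μ
              ≤ (CD^4 * (μ (ball x (6*ε))).toReal⁻¹) * ∫ y in ball x (6*ε), |f x - f y| ∂μ := by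
                refine mul_le_mul h2 h1 (integral_nonneg fun y => abs_nonneg _) (by positivity)
            _ = CD^4 * ((μ (ball x (6*ε))).toReal⁻¹ * ∫ y in ball x (6*ε), |f x - f y| ∂μ) := by
                ring
        calc |((⨍ y in ball (c ε i) ε, f y ∂μ) - f x) * φ ε i x|
            = |(⨍ y in ball (c ε i) ε, f y ∂μ) - f x| * φ ε i x := by
              rw [abs_mul, abs_of_nonneg (hnonneg ε i x)]
          _ ≤ (CD^4 * ⨍ y in ball x (6 * ε), |f x - f y| ∂μ) * φ ε i x :=
              mul_le_mul_of_nonneg_right (le_trans ha hb) (hnonneg ε i x)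
    have hsumabs : Summable fun i => |((⨍ y in ball (c ε i) ε, f y ∂μ) - f x) * φ ε i x| :=
      Summable.of_nonneg_of_le (fun i => abs_nonneg _) hterm (hsummφ.mul_left _)
    have hsum2 : Summable fun i => ((⨍ y in ball (c ε i) ε, f y ∂μ) - f x) * φ ε i x :=
      Summable.of_abs hsumabs
    have hsum3 : Summable fun i => (⨍ y in ball (c ε i) ε, f y ∂μ) * φ ε i x := by
      have e1 : (fun i => (⨍ y in ball (c ε i) ε, f y ∂μ) * φ ε i x)
          = fun i => ((⨍ y in ball (c ε i) ε, f y ∂μ) - f x) * φ ε i x + f x * φ ε i x := by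
        funext i; ring
      rw [e1]
      exact hsum2.add (hsummφ.mul_left _)
    have hid : (∑' i, (⨍ y in ball (c ε i) ε, f y ∂μ) * φ ε i x) - f x
        = ∑' i, ((⨍ y in ball (c ε i) ε, f y ∂μ) - f x) * φ ε i x := by
      have e2 : ∀ i, ((⨍ y in ball (c ε i) ε, f y ∂μ) - f x) * φ ε i x
          = (⨍ y in ball (c ε i) ε, f y ∂μ) * φ ε i x - f x * φ ε i x := fun i => by ring
      rw [tsum_congr e2, Summable.tsum_sub hsum3 (hsummφ.mul_left (f x)), tsum_mul_left,
        hsum ε hε x, mul_one]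
    rw [hid]
    calc |∑' i, ((⨍ y in ball (c ε i) ε, f y ∂μ) - f x) * φ ε i x|
        ≤ ∑' i, |((⨍ y in ball (c ε i) ε, f y ∂μ) - f x) * φ ε i x| := by
          have := norm_tsum_le_tsum_norm
            (f := fun i => ((⨍ y in ball (c ε i) ε, f y ∂μ) - f x) * φ ε i x)
            (by simpa only [Real.norm_eq_abs] using hsumabs)
          simpa only [Real.norm_eq_abs] using this
      _ ≤ ∑' i, (CD^4 * ⨍ y in ball x (6 * ε), |f x - f y| ∂μ) * φ ε i x :=
          Summable.tsum_le_tsum hterm hsumabs (hsummφ.mul_left _)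
      _ = CD^4 * ⨍ y in ball x (6 * ε), |f x - f y| ∂μ := by
          rw [tsum_mul_left, hsum ε hε x, mul_one]
  -- ae equality of squared G's
  have hGsq : ∀ r : ℝ, (fun x => (⨍ y in ball x r, |f x - f y| ∂μ)^2)
      =ᵐ[μ] (fun x => (⨍ y in ball x r, |f' x - f' y| ∂μ)^2) := fun r => by
    filter_upwards [hGG' r] with x hx
    rw [hx]
  -- part 1 conclusion
  have hpart1 : ∀ ε : ℝ, 0 < ε →
      ∫ x, ((∑' i, (⨍ y in ball (c ε i) ε, f y ∂μ) * φ ε i x) - f x) ^ 2 ∂μ ≤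
        CD^8 * ∫ x, (⨍ y in ball x (6 * ε), |f x - f y| ∂μ) ^ 2 ∂μ := by
    intro ε hε
    have hr6 : 0 < 6 * ε := by linarith
    have h1 := aux_G_L2_real μ hCD hpos hfin hdouble hf'meas hf'2 hr6
    have hintf : Integrable (fun x => (⨍ y in ball x (6*ε), |f x - f y| ∂μ)^2) μ :=
      h1.1.congr (hGsq (6*ε)).symm
    have hptsq : ∀ x, ((∑' i, (⨍ y in ball (c ε i) ε, f y ∂μ) * φ ε i x) - f x)^2
        ≤ CD^8 * (⨍ y in ball x (6*ε), |f x - f y| ∂μ)^2 := by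
      intro x
      have h2 := hpt ε hε x
      rw [← sq_abs]
      calc |(∑' i, (⨍ y in ball (c ε i) ε, f y ∂μ) * φ ε i x) - f x|^2
          ≤ (CD^4 * ⨍ y in ball x (6 * ε), |f x - f y| ∂μ)^2 :=
            pow_le_pow_left₀ (abs_nonneg _) h2 2
        _ = CD^8 * (⨍ y in ball x (6*ε), |f x - f y| ∂μ)^2 := by ring
    have hb := integral_mono_of_nonneg
      (Filter.Eventually.of_forall fun x => sq_nonneg _)
      (hintf.const_mul (CD^8))
      (Filter.Eventually.of_forall hptsq)
    calc ∫ x, ((∑' i, (⨍ y in ball (c ε i) ε, f y ∂μ) * φ ε i x) - f x) ^ 2 ∂μ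
        ≤ ∫ x, CD^8 * (⨍ y in ball x (6*ε), |f x - f y| ∂μ)^2 ∂μ := hb
      _ = CD^8 * ∫ x, (⨍ y in ball x (6*ε), |f x - f y| ∂μ)^2 ∂μ := integral_const_mul _ _
  refine ⟨CD^8, by positivity, hpart1, ?_⟩
  -- convergence part
  have hK : (0:ℝ) < 4 + 4*CD := by positivity
  set K := 4 + 4*CD with hKdef
  have hmain : Tendsto (fun ε : ℝ => ∫ x, (⨍ y in ball x (6*ε), |f' x - f' y| ∂μ)^2 ∂μ)
      (𝓝[>] (0:ℝ)) (𝓝 0) := by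
    rw [Metric.tendsto_nhds]
    intro δ hδ
    set s := Real.sqrt (δ / (32 * K)) with hsdef
    have hs0 : 0 < s := Real.sqrt_pos.2 (by positivity)
    have hs2 : s^2 = δ / (32*K) := Real.sq_sqrt (by positivity)
    obtain ⟨v, hv, hvmem⟩ := hf'2.exists_boundedContinuous_eLpNorm_sub_le
      (by norm_num : (2:ℝ≥0∞) ≠ ⊤)
      (show ENNReal.ofReal s ≠ 0 by
        simp only [ne_eq, ENNReal.ofReal_eq_zero, not_le]
        exact hs0)
    have hvcont : Continuous (v : X → ℝ) := v.continuous
    have hvb : ∀ x, |v x| ≤ ‖v‖ := fun x => by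
      have := v.norm_coe_le_norm x
      rwa [Real.norm_eq_abs] at this
    -- cutoffs
    set χ : ℕ → X → ℝ := fun m x => max 0 (min 1 ((m:ℝ) - dist x x₀)) with hχdef
    have hdistc : Continuous fun x : X => dist x x₀ := continuous_id.dist continuous_const
    have hχcont : ∀ m, Continuous (χ m) :=
      fun m => continuous_const.max (continuous_const.min (continuous_const.sub hdistc))
    have hχ0 : ∀ (m : ℕ) (x : X), 0 ≤ χ m x := fun m x => le_max_left _ _
    have hχ1 : ∀ (m : ℕ) (x : X), χ m x ≤ 1 := fun m x => max_le (by norm_num) (min_le_left _ _)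
    set u : ℕ → X → ℝ := fun m x => v x * χ m x with hudef
    have hucont : ∀ m, Continuous (u m) := fun m => hvcont.mul (hχcont m)
    have hub : ∀ (m : ℕ) (x : X), |u m x| ≤ ‖v‖ := by
      intro m x
      show |v x * χ m x| ≤ ‖v‖
      rw [abs_mul]
      calc |v x| * |χ m x| ≤ ‖v‖ * 1 := by
            refine mul_le_mul (hvb x) ?_ (abs_nonneg _) (norm_nonneg _)
            rw [abs_of_nonneg (hχ0 m x)]
            exact hχ1 m x
        _ = ‖v‖ := mul_one _
    have husupp : ∀ (m : ℕ) (x : X), (m:ℝ) ≤ dist x x₀ → u m x = 0 := by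
      intro m x h
      show v x * χ m x = 0
      have h1 : χ m x = 0 := by
        show max 0 (min 1 ((m:ℝ) - dist x x₀)) = 0
        have h2 : min 1 ((m:ℝ) - dist x x₀) ≤ 0 :=
          le_trans (min_le_right _ _) (by linarith)
        exact max_eq_left h2
      rw [h1, mul_zero]
    have hχev : ∀ x, ∀ᶠ m : ℕ in atTop, χ m x = 1 := by
      intro x
      filter_upwards [eventually_ge_atTop (⌈dist x x₀ + 1⌉₊)] with m hm
      have h1 : dist x x₀ + 1 ≤ (m:ℝ) := le_trans (Nat.le_ceil _) (by exact_mod_cast hm)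
      show max 0 (min 1 ((m:ℝ) - dist x x₀)) = 1
      rw [min_eq_left (by linarith), max_eq_right (by norm_num)]
    have hv2 : MemLp (v : X → ℝ) 2 μ := hvmem
    have hv2int : Integrable (fun x => v x^2) μ := hv2.integrable_sq
    -- choose the cutoff index
    have hcut : Tendsto (fun m : ℕ => ∫ x, (v x - u m x)^2 ∂μ) atTop (𝓝 0) := by
      have key := tendsto_integral_filter_of_dominated_convergence (μ := μ) (l := atTop)
        (F := fun m x => (v x - u m x)^2) (f := fun _ => (0:ℝ)) (bound := fun x => v x^2)
        (Filter.Eventually.of_forall fun m =>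
          ((hvcont.sub (hucont m)).pow 2).aestronglyMeasurable)
        (Filter.Eventually.of_forall fun m => Filter.Eventually.of_forall fun x => by
          show ‖(v x - u m x)^2‖ ≤ v x ^ 2
          have he : v x - u m x = v x * (1 - χ m x) := by
            show v x - v x * χ m x = _
            ring
          rw [Real.norm_eq_abs, abs_of_nonneg (sq_nonneg _), he, mul_pow]
          have h1 : (1 - χ m x)^2 ≤ 1 :=
            pow_le_one₀ (by linarith [hχ1 m x]) (by linarith [hχ0 m x])
          calc (v x)^2 * (1 - χ m x)^2 ≤ (v x)^2 * 1 :=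
                mul_le_mul_of_nonneg_left h1 (sq_nonneg _)
            _ = v x ^2 := mul_one _)
        hv2int
        (Filter.Eventually.of_forall fun x => by
          show Tendsto (fun m : ℕ => (v x - u m x)^2) atTop (𝓝 0)
          refine Tendsto.congr' ?_ tendsto_const_nhds
          filter_upwards [hχev x] with m hm
          have : v x - u m x = 0 := by
            show v x - v x * χ m x = 0
            rw [hm, mul_one, sub_self]
          rw [this]
          norm_num)
      simpa using key
    obtain ⟨n, hn⟩ : ∃ m : ℕ, ∫ x, (v x - u m x)^2 ∂μ ≤ s^2 := by
      obtain ⟨m, hm⟩ := (Metric.tendsto_atTop.1 hcut) (s^2) (by positivity)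
      refine ⟨m, ?_⟩
      have h1 := hm m (le_refl m)
      rw [Real.dist_eq, sub_zero] at h1
      exact le_trans (le_abs_self _) h1.le
    have hu₀mem : MemLp (u n) 2 μ := by
      rw [memLp_two_iff_integrable_sq ((hucont n).aestronglyMeasurable)]
      refine Integrable.mono'
        (show Integrable (Set.indicator (closedBall x₀ (n:ℝ)) fun _ => ‖v‖^2) μ from ?_)
        (((hucont n).pow 2).aestronglyMeasurable)
        (Filter.Eventually.of_forall fun x => ?_)
      · rw [integrable_indicator_iff measurableSet_closedBall]
        refine integrableOn_const ?_
        have hsub : closedBall x₀ (n:ℝ) ⊆ ball x₀ ((n:ℝ)+1) :=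
          closedBall_subset_ball (lt_add_one _)
        exact (lt_of_le_of_lt (measure_mono hsub) (hfin x₀ _ (by positivity))).ne
      · rw [Real.norm_eq_abs, abs_of_nonneg (sq_nonneg _)]
        classical
        by_cases hx : x ∈ closedBall x₀ (n:ℝ)
        · rw [Set.indicator_of_mem hx]
          calc (u n x)^2 = |u n x|^2 := (sq_abs _).symm
            _ ≤ ‖v‖^2 := pow_le_pow_left₀ (abs_nonneg _) (hub n x) 2
        · rw [Set.indicator_of_notMem hx]
          have hd : (n:ℝ) ≤ dist x x₀ := le_of_lt (by rwa [mem_closedBall, not_le] at hx)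
          rw [husupp n x hd]
          norm_num
    have hfv : ∫ x, (f' x - v x)^2 ∂μ ≤ s^2 := by
      have hmem : MemLp (fun x => f' x - v x) 2 μ := hf'2.sub hv2
      rw [aux_int_sq_eq hmem]
      have h1 : (eLpNorm (fun x => f' x - v x) 2 μ).toReal ≤ s := by
        have h2 : eLpNorm (fun x => f' x - v x) 2 μ ≤ ENNReal.ofReal s := hv
        have h3 := ENNReal.toReal_mono ENNReal.ofReal_ne_top h2
        rwa [ENNReal.toReal_ofReal hs0.le] at h3
      exact pow_le_pow_left₀ ENNReal.toReal_nonneg h1 2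
    have hvumem : MemLp (fun x => v x - u n x) 2 μ := hv2.sub hu₀mem
    have hfumem : MemLp (fun x => f' x - u n x) 2 μ := hf'2.sub hu₀mem
    have hfu : ∫ x, (f' x - u n x)^2 ∂μ ≤ 4*s^2 := by
      have hptw : ∀ x, (f' x - u n x)^2 ≤ 2*(f' x - v x)^2 + 2*(v x - u n x)^2 := fun x => by
        nlinarith [sq_nonneg (f' x - 2*v x + u n x)]
      have hi1 : Integrable (fun x => 2*(f' x - v x)^2) μ :=
        ((hf'2.sub hv2).integrable_sq).const_mul 2
      have hi2 : Integrable (fun x => 2*(v x - u n x)^2) μ :=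
        (hvumem.integrable_sq).const_mul 2
      have hi12 : Integrable (fun x => 2*(f' x - v x)^2 + 2*(v x - u n x)^2) μ :=
        hi1.add hi2
      have h1 := integral_mono_of_nonneg (Filter.Eventually.of_forall fun x => sq_nonneg _)
        hi12 (Filter.Eventually.of_forall hptw)
      rw [integral_add hi1 hi2, integral_const_mul, integral_const_mul] at h1
      linarith
    have hGbound : ∀ ε : ℝ, 0 < ε →
        ∫ x, (⨍ y in ball x (6*ε), |f' x - f' y| ∂μ)^2 ∂μ
          ≤ 8*K*s^2 + 2 * ∫ x, (⨍ y in ball x (6*ε), |u n x - u n y| ∂μ)^2 ∂μ := by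
      intro ε hε
      have hr6 : 0 < 6*ε := by linarith
      have hwmeas : Measurable (fun x => f' x - u n x) := hf'meas.sub (hucont n).measurable
      have hGw := aux_G_L2_real μ hCD hpos hfin hdouble hwmeas hfumem hr6
      have hGu := aux_G_L2_real μ hCD hpos hfin hdouble (hucont n).measurable hu₀mem hr6
      have hIu : ∀ x, IntegrableOn (fun y => |u n x - u n y|) (ball x (6*ε)) μ := by
        intro x
        refine Integrable.mono'
          (show Integrable (fun _ : X => |u n x| + ‖v‖) (μ.restrict (ball x (6*ε))) from
            integrableOn_const (hfin x _ hr6).ne)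
          (((continuous_const.sub (hucont n)).abs.aestronglyMeasurable).restrict)
          (Filter.Eventually.of_forall fun y => ?_)
        rw [Real.norm_eq_abs, abs_abs]
        calc |u n x - u n y| ≤ |u n x| + |u n y| := abs_sub _ _
          _ ≤ |u n x| + ‖v‖ := by linarith [hub n y]
      have hIw : ∀ x, IntegrableOn (fun y => |(f' x - u n x) - (f' y - u n y)|)
          (ball x (6*ε)) μ := by
        intro x
        haveI : IsFiniteMeasure (μ.restrict (ball x (6*ε))) :=
          ⟨by rw [Measure.restrict_apply_univ]; exact hfin x _ hr6⟩
        exact ((integrableOn_const (hfin x _ hr6).ne).sub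
          ((hfumem.restrict _).integrable (by norm_num))).abs
      have hsubadd : ∀ x, (⨍ y in ball x (6*ε), |f' x - f' y| ∂μ)
          ≤ (⨍ y in ball x (6*ε), |(f' x - u n x) - (f' y - u n y)| ∂μ)
            + ⨍ y in ball x (6*ε), |u n x - u n y| ∂μ := by
        intro x
        rw [setAverage_eq, setAverage_eq, setAverage_eq, smul_eq_mul, smul_eq_mul,
          smul_eq_mul, ← mul_add]
        refine mul_le_mul_of_nonneg_left ?_ (inv_nonneg.2 ENNReal.toReal_nonneg)
        rw [← integral_add (hIw x) (hIu x)]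
        have hIwu : Integrable (fun y => |(f' x - u n x) - (f' y - u n y)| + |u n x - u n y|)
            (μ.restrict (ball x (6*ε))) := (hIw x).add (hIu x)
        refine integral_mono_of_nonneg (Filter.Eventually.of_forall fun y => abs_nonneg _)
          hIwu (Filter.Eventually.of_forall fun y => ?_)
        have he : f' x - f' y = ((f' x - u n x) - (f' y - u n y)) + (u n x - u n y) := by
          ring
        calc |f' x - f' y|
            = |((f' x - u n x) - (f' y - u n y)) + (u n x - u n y)| := by rw [← he]
          _ ≤ |(f' x - u n x) - (f' y - u n y)| + |u n x - u n y| := abs_add_le _ _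
      have havgnn : ∀ (g : X → ℝ) (x : X), 0 ≤ ⨍ y in ball x (6*ε), |g x - g y| ∂μ := by
        intro g x
        rw [setAverage_eq]
        exact smul_nonneg (inv_nonneg.2 ENNReal.toReal_nonneg)
          (integral_nonneg fun y => abs_nonneg _)
      have hsq : ∀ x, (⨍ y in ball x (6*ε), |f' x - f' y| ∂μ)^2
          ≤ 2*(⨍ y in ball x (6*ε), |(f' x - u n x) - (f' y - u n y)| ∂μ)^2
            + 2*(⨍ y in ball x (6*ε), |u n x - u n y| ∂μ)^2 := by
        intro x
        have h1 := hsubadd x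
        have h2 := havgnn f' x
        nlinarith [sq_nonneg ((⨍ y in ball x (6*ε), |(f' x - u n x) - (f' y - u n y)| ∂μ)
          - ⨍ y in ball x (6*ε), |u n x - u n y| ∂μ)]
      have hi1 : Integrable
          (fun x => 2*(⨍ y in ball x (6*ε), |(f' x - u n x) - (f' y - u n y)| ∂μ)^2) μ :=
        hGw.1.const_mul 2
      have hi2 : Integrable (fun x => 2*(⨍ y in ball x (6*ε), |u n x - u n y| ∂μ)^2) μ :=
        hGu.1.const_mul 2
      have hi12 : Integrable (fun x =>
          2*(⨍ y in ball x (6*ε), |(f' x - u n x) - (f' y - u n y)| ∂μ)^2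
            + 2*(⨍ y in ball x (6*ε), |u n x - u n y| ∂μ)^2) μ := hi1.add hi2
      have h2 := integral_mono_of_nonneg (Filter.Eventually.of_forall fun x => sq_nonneg _)
        hi12 (Filter.Eventually.of_forall hsq)
      rw [integral_add hi1 hi2, integral_const_mul, integral_const_mul] at h2
      have h3 : ∫ x, (⨍ y in ball x (6*ε), |(f' x - u n x) - (f' y - u n y)| ∂μ)^2 ∂μ
          ≤ K * (4*s^2) := by
        refine le_trans hGw.2 ?_
        rw [hKdef]
        exact mul_le_mul_of_nonneg_left hfu (by positivity)
      have h4 : 0 ≤ ∫ x, (⨍ y in ball x (6*ε), |u n x - u n y| ∂μ)^2 ∂μ :=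
        integral_nonneg fun x => sq_nonneg _
      calc ∫ x, (⨍ y in ball x (6*ε), |f' x - f' y| ∂μ)^2 ∂μ
          ≤ 2 * ∫ x, (⨍ y in ball x (6*ε), |(f' x - u n x) - (f' y - u n y)| ∂μ)^2 ∂μ
            + 2 * ∫ x, (⨍ y in ball x (6*ε), |u n x - u n y| ∂μ)^2 ∂μ := h2
        _ ≤ 2 * (K * (4*s^2))
            + 2 * ∫ x, (⨍ y in ball x (6*ε), |u n x - u n y| ∂μ)^2 ∂μ := by
            have h5 := mul_le_mul_of_nonneg_left h3 (by norm_num : (0:ℝ) ≤ 2)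
            linarith
        _ = 8*K*s^2 + 2 * ∫ x, (⨍ y in ball x (6*ε), |u n x - u n y| ∂μ)^2 ∂μ := by ring
    have hTu := aux_cpt μ hpos hfin (hucont n) ‖v‖ (n:ℝ) (Nat.cast_nonneg n) x₀
      (hub n) (husupp n)
    have hTu' := (Metric.tendsto_nhds.1 hTu) (δ/4) (by linarith)
    filter_upwards [self_mem_nhdsWithin, hTu'] with ε hε hδ4
    have hε' : (0:ℝ) < ε := hε
    rw [Real.dist_eq, sub_zero, abs_of_nonneg (integral_nonneg fun x => sq_nonneg _)]
    have h1 := hGbound ε hε'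
    rw [Real.dist_eq, sub_zero] at hδ4
    have h2 : ∫ x, (⨍ y in ball x (6*ε), |u n x - u n y| ∂μ)^2 ∂μ < δ/4 :=
      lt_of_abs_lt hδ4
    have h3 : 8*K*s^2 = δ/4 := by
      rw [hs2]
      field_simp
      ring
    calc ∫ x, (⨍ y in ball x (6*ε), |f' x - f' y| ∂μ)^2 ∂μ
        ≤ 8*K*s^2 + 2 * ∫ x, (⨍ y in ball x (6*ε), |u n x - u n y| ∂μ)^2 ∂μ := h1
      _ < δ/4 + 2*(δ/4) := by
          rw [h3]
          linarith
      _ ≤ δ := by linarith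
  -- transfer back to f and squeeze
  have hmainf : Tendsto (fun ε : ℝ => ∫ x, (⨍ y in ball x (6*ε), |f x - f y| ∂μ)^2 ∂μ)
      (𝓝[>] (0:ℝ)) (𝓝 0) := by
    refine hmain.congr fun ε => ?_
    exact (integral_congr_ae (hGsq (6*ε))).symm
  refine tendsto_of_tendsto_of_tendsto_of_le_of_le'
    (g := fun _ : ℝ => (0:ℝ))
    (h := fun ε : ℝ => CD^8 * ∫ x, (⨍ y in ball x (6*ε), |f x - f y| ∂μ)^2 ∂μ)
    tendsto_const_nhds ?_ ?_ ?_
  · have := hmainf.const_mul (CD^8)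
    simpa using this
  · exact Filter.Eventually.of_forall fun ε => integral_nonneg fun x => sq_nonneg _
  · filter_upwards [self_mem_nhdsWithin] with ε hε
    exact hpart1 ε hε
end

section
/- Let (X,d,μ) be a compact doubling metric measure space satisfying the 2-Poincaré inequality with Lipschitz constants. Then the Korevaar-Schoen space KS^{1,2}(X) := {f ∈ L²(X,μ) : limsup_{r→0⁺} E(f,r) < ∞} is relatively compact in L²(X,μ), i.e. every bounded subset of KS^{1,2}(X) (bounded in the norm ‖f‖_{L²} + sup_{r>0} E(f,r)^{1/2}) is totally bounded in L²(X,μ). -/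
open MeasureTheory Metric Filter Topology
open scoped ENNReal NNReal

/-- The pointwise upper Lipschitz constant. -/
noncomputable def lipConst {X : Type*} [MetricSpace X] (f : X → ℝ) (y : X) : ℝ :=
  Filter.limsup (fun r : ℝ => ⨆ x ∈ closedBall y r, |f x - f y| / r) (𝓝[>] (0 : ℝ))

/-- The Korevaar–Schoen energy `E(g,r)` at scale `r` with exponent 2. -/
noncomputable def KSenergy {X : Type*} [MetricSpace X] [MeasurableSpace X]
    (μ : Measure X) (g : X → ℝ) (r : ℝ) : ℝ :=
  ∫ x, (⨍ y in ball x r, (g x - g y) ^ 2 ∂μ) / r ^ 2 ∂μ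

namespace KS7aux

variable {X : Type*} [MetricSpace X] [MeasurableSpace X] [BorelSpace X]

lemma sq3 {a b d e : ℝ} (h1 : -e < d) (h2 : d < e) :
    (a - b + d) ^ 2 ≤ 3 * a ^ 2 + 3 * e ^ 2 + 3 * b ^ 2 := by
  nlinarith [sq_nonneg (a + b), sq_nonneg (a - d), sq_nonneg (b + d),
    mul_pos (show (0:ℝ) < e + d by linarith) (show (0:ℝ) < e - d by linarith)]

lemma ks_congr (μ : Measure X) (r : ℝ) {f g : X → ℝ} (h : f =ᵐ[μ] g) :
    KSenergy μ f r = KSenergy μ g r := by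
  unfold KSenergy
  refine integral_congr_ae ?_
  filter_upwards [h] with x hx
  have h2 : (fun y => (f x - f y) ^ 2) =ᵐ[μ.restrict (ball x r)] fun y => (g x - g y) ^ 2 :=
    ae_restrict_of_ae (by filter_upwards [h] with y hy; rw [hx, hy])
  rw [average_congr h2]

lemma measurable_measure_ball' [SecondCountableTopology X] (μ : Measure X) [SFinite μ] (r : ℝ) :
    Measurable fun x : X => μ (ball x r) := by
  have hs : MeasurableSet {p : X × X | dist p.2 p.1 < r} :=
    (isOpen_lt (continuous_snd.dist continuous_fst) continuous_const).measurableSet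
  have h : Measurable fun x : X =>
      ∫⁻ y, {p : X × X | dist p.2 p.1 < r}.indicator (fun _ => (1 : ℝ≥0∞)) (x, y) ∂μ :=
    (measurable_one.indicator hs).lintegral_prod_right'
  have he : ∀ x : X, μ (ball x r) =
      ∫⁻ y, {p : X × X | dist p.2 p.1 < r}.indicator (fun _ => (1 : ℝ≥0∞)) (x, y) ∂μ := by
    intro x
    rw [← lintegral_indicator_one measurableSet_ball]
    refine lintegral_congr fun y => ?_
    by_cases hy : dist y x < r <;>
      simp [Set.indicator_apply, Set.mem_setOf_eq, mem_ball, hy]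
  simpa only [he] using h

lemma exists_partition [CompactSpace X] {r : ℝ} (hr : 0 < r) :
    ∃ (N : ℕ) (z : Fin N → X) (A : Fin N → Set X),
      (∀ i, MeasurableSet (A i)) ∧ (∀ i, ball (z i) (r / 4) ⊆ A i) ∧
      (∀ i, A i ⊆ ball (z i) (r / 2)) ∧ Pairwise (Function.onFun Disjoint A) ∧
      (⋃ i, A i) = Set.univ := by
  classical
  -- maximal (r/2)-separated set
  have hchain : ∀ c ⊆ {t : Set X | t.Pairwise fun a b => r / 2 ≤ dist a b},
      IsChain (· ⊆ ·) c → ∃ ub ∈ {t : Set X | t.Pairwise fun a b => r / 2 ≤ dist a b},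
        ∀ t ∈ c, t ⊆ ub := by
    intro c hc hchain
    refine ⟨⋃₀ c, ?_, fun t ht => Set.subset_sUnion_of_mem ht⟩
    intro a ha b hb hab
    obtain ⟨t₁, ht₁, hat⟩ := ha
    obtain ⟨t₂, ht₂, hbt⟩ := hb
    rcases hchain.total ht₁ ht₂ with hle | hle
    · exact (hc ht₂) (hle hat) hbt hab
    · exact (hc ht₁) hat (hle hbt) hab
  obtain ⟨s, hs⟩ := zorn_subset {t : Set X | t.Pairwise fun a b => r / 2 ≤ dist a b} hchain
  have hsep : s.Pairwise fun a b => r / 2 ≤ dist a b := hs.1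
  have hcov : ∀ x : X, ∃ y ∈ s, dist x y < r / 2 := by
    intro x
    by_contra h
    push_neg at h
    have hx : x ∉ s := fun hxs => by
      have := h x hxs; rw [dist_self] at this; linarith
    have hins : (insert x s).Pairwise fun a b => r / 2 ≤ dist a b := by
      rw [Set.pairwise_insert]
      refine ⟨hsep, fun b hb _ => ⟨h b hb, ?_⟩⟩
      rw [dist_comm]; exact h b hb
    exact hx (hs.2 hins (Set.subset_insert x s) (Set.mem_insert x s))
  -- s is finite
  obtain ⟨t, -, htfin, htcov⟩ :=
    (isCompact_univ : IsCompact (Set.univ : Set X)).finite_cover_balls (e := r / 4) (by positivity)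
  have hFex : ∀ zz : X, ∃ y, y ∈ t ∧ zz ∈ ball y (r / 4) := by
    intro zz
    have := htcov (Set.mem_univ zz)
    simpa using this
  choose F hFt hFb using hFex
  have hinj : Set.InjOn F s := by
    intro a ha b hb hab
    by_contra hne
    have hsep' := hsep ha hb hne
    have da : dist a (F a) < r / 4 := mem_ball.mp (hFb a)
    have db : dist b (F b) < r / 4 := mem_ball.mp (hFb b)
    rw [hab] at da
    have : dist a b ≤ dist a (F b) + dist (F b) b := dist_triangle _ _ _
    rw [dist_comm b (F b)] at db
    linarith
  have hsfin : s.Finite :=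
    Set.Finite.of_finite_image (htfin.subset (by rintro _ ⟨zz, hzz, rfl⟩; exact hFt zz)) hinj
  -- enumerate
  set sF := hsfin.toFinset with hsF
  set N := sF.card with hN
  set e := sF.equivFin with he
  set z : Fin N → X := fun i => (e.symm i : X) with hz
  have hzs : ∀ i, z i ∈ s := fun i => hsfin.mem_toFinset.mp (e.symm i).2
  have hzinj : Function.Injective z := by
    intro i j hij
    have : e.symm i = e.symm j := Subtype.ext hij
    exact e.symm.injective this
  have hzcov : ∀ x : X, ∃ i, dist x (z i) < r / 2 := by
    intro x
    obtain ⟨y, hys, hxy⟩ := hcov x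
    refine ⟨e ⟨y, hsfin.mem_toFinset.mpr hys⟩, ?_⟩
    have : z (e ⟨y, hsfin.mem_toFinset.mpr hys⟩) = y := by
      rw [hz]; simp
    rwa [this]
  have hzsep : ∀ i j, i ≠ j → r / 2 ≤ dist (z i) (z j) :=
    fun i j hij => hsep (hzs i) (hzs j) fun h => hij (hzinj h)
  -- cells
  set W : Set X := ⋃ j, ball (z j) (r / 4) with hW
  set A : Fin N → Set X := fun i =>
    ball (z i) (r / 4) ∪ ((ball (z i) (r / 2) \ W) \ ⋃ j, ⋃ (_ : j < i), ball (z j) (r / 2))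
    with hA
  have hAmeas : ∀ i, MeasurableSet (A i) := fun i =>
    measurableSet_ball.union
      (((measurableSet_ball.diff (MeasurableSet.iUnion fun j => measurableSet_ball)).diff
        (MeasurableSet.iUnion fun j => MeasurableSet.iUnion fun _ => measurableSet_ball)))
  have hbA : ∀ i, ball (z i) (r / 4) ⊆ A i := fun i => Set.subset_union_left
  have hAB : ∀ i, A i ⊆ ball (z i) (r / 2) := by
    intro i x hx
    rcases hx with hx | hx
    · exact ball_subset_ball (by linarith) hx
    · exact hx.1.1
  have hkey : ∀ i j, i < j → Disjoint (A i) (A j) := by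
    intro i j hij
    rw [Set.disjoint_left]
    intro x hxi hxj
    have hballs : Disjoint (ball (z i) (r / 4)) (ball (z j) (r / 4)) :=
      ball_disjoint_ball (by linarith [hzsep i j hij.ne])
    rcases hxi with hxi | ⟨⟨hxB, hxW⟩, hxC⟩
    · rcases hxj with hxj | ⟨⟨_, hxW'⟩, _⟩
      · exact Set.disjoint_left.mp hballs hxi hxj
      · exact hxW' (Set.mem_iUnion.mpr ⟨i, hxi⟩)
    · rcases hxj with hxj | ⟨⟨_, _⟩, hxC'⟩
      · exact hxW (Set.mem_iUnion.mpr ⟨j, hxj⟩)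
      · exact hxC' (Set.mem_iUnion.mpr ⟨i, Set.mem_iUnion.mpr ⟨hij, hxB⟩⟩)
  refine ⟨N, z, A, hAmeas, hbA, hAB, ?_, ?_⟩
  · intro i j hij
    rcases lt_or_gt_of_ne hij with h | h
    · exact hkey i j h
    · exact (hkey j i h).symm
  · refine Set.eq_univ_of_forall fun x => ?_
    rw [Set.mem_iUnion]
    by_cases hxW : x ∈ W
    · obtain ⟨j, hj⟩ := Set.mem_iUnion.mp hxW
      exact ⟨j, Or.inl hj⟩
    · obtain ⟨i, hi⟩ := hzcov x
      have hiball : x ∈ ball (z i) (r / 2) := mem_ball.mpr hi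
      set Fs := Finset.univ.filter (fun k => x ∈ ball (z k) (r / 2)) with hFs
      have hne : Fs.Nonempty := ⟨i, Finset.mem_filter.mpr ⟨Finset.mem_univ i, hiball⟩⟩
      set i₀ := Fs.min' hne with hi₀
      have hxi₀ : x ∈ ball (z i₀) (r / 2) := (Finset.mem_filter.mp (Fs.min'_mem hne)).2
      refine ⟨i₀, Or.inr ⟨⟨hxi₀, hxW⟩, ?_⟩⟩
      intro hmem
      obtain ⟨j, hj⟩ := Set.mem_iUnion.mp hmem
      obtain ⟨hji, hxj⟩ := Set.mem_iUnion.mp hj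
      have : j ∈ Fs := Finset.mem_filter.mpr ⟨Finset.mem_univ j, hxj⟩
      exact absurd (Fs.min'_le j this) (not_le.mpr hji)

lemma main_est [SecondCountableTopology X] (μ : Measure X) [IsFiniteMeasure μ]
    {CD M r c : ℝ} (hCD : 0 < CD) (hr : 0 < r) (hc : 0 < c)
    (hlow : ∀ x : X, c ≤ (μ (ball x r)).toReal)
    (hballpos : ∀ x : X, 0 < (μ (ball x r)).toReal)
    {N : ℕ} {A : Fin N → Set X}
    (hmeasA : ∀ i, MeasurableSet (A i))
    (hApos : ∀ i, 0 < (μ (A i)).toReal)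
    (hsub : ∀ i, ∀ x ∈ A i, A i ⊆ ball x r)
    (hratio : ∀ i, ∀ x ∈ A i, (μ (ball x r)).toReal ≤ CD ^ 3 * (μ (A i)).toReal)
    (hdisjA : Pairwise (Function.onFun Disjoint A))
    (hcover : (⋃ i, A i) = Set.univ)
    {f : X → ℝ} (hsm : StronglyMeasurable f) (hf2 : MemLp f 2 μ)
    (hM2 : ∫ x, (f x) ^ 2 ∂μ ≤ M) (hE : KSenergy μ f r ≤ M) :
    (∑ i, ∫ x in A i, (f x - ⨍ y in A i, f y ∂μ) ^ 2 ∂μ) ≤ CD ^ 3 * (M * r ^ 2) ∧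
      ∀ i, (⨍ y in A i, f y ∂μ) ^ 2 * (μ (A i)).toReal ≤ M := by
  have hfInt : Integrable f μ := hf2.integrable one_le_two
  have hf2Int : Integrable (fun x => f x ^ 2) μ := hf2.integrable_sq
  have hIy : ∀ x : X, Integrable (fun y => (f x - f y) ^ 2) μ := by
    intro x
    have he : (fun y => (f x - f y) ^ 2) = fun y => (f x) ^ 2 - 2 * f x * f y + f y ^ 2 := by
      funext y; ring
    rw [he]
    exact ((integrable_const _).sub (hfInt.const_mul _)).add hf2Int
  -- expansion of the inner integral over a set s, in the y variable
  have expand : ∀ (s : Set X) (x : X), ∫ y in s, (f x - f y) ^ 2 ∂μ =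
      (μ s).toReal * (f x) ^ 2 - 2 * f x * (∫ y in s, f y ∂μ) + ∫ y in s, f y ^ 2 ∂μ := by
    intro s x
    have h1 : IntegrableOn (fun y => (f x) ^ 2 - 2 * f x * f y) s μ :=
      ((integrable_const _).sub (hfInt.const_mul _)).integrableOn
    have he : (fun y => (f x - f y) ^ 2)
        = fun y => ((f x) ^ 2 - 2 * f x * f y) + f y ^ 2 := by funext y; ring
    rw [he, integral_add h1 hf2Int.integrableOn,
      integral_sub (integrableOn_const (C := (f x) ^ 2) (measure_ne_top μ s))
        (hfInt.integrableOn.const_mul _),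
      setIntegral_const, measureReal_def, integral_const_mul, smul_eq_mul]
  -- expansion in the x variable against a constant a
  have expandA : ∀ (s : Set X) (a : ℝ), ∫ x in s, (f x - a) ^ 2 ∂μ =
      (∫ x in s, f x ^ 2 ∂μ) - 2 * a * (∫ x in s, f x ∂μ) + (μ s).toReal * a ^ 2 := by
    intro s a
    have h1 : IntegrableOn (fun x => f x ^ 2 - 2 * a * f x) s μ :=
      (hf2Int.sub (hfInt.const_mul _)).integrableOn
    have he : (fun x => (f x - a) ^ 2)
        = fun x => (f x ^ 2 - 2 * a * f x) + a ^ 2 := by funext x; ring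
    rw [he, integral_add h1 (integrableOn_const (measure_ne_top μ s)),
      integral_sub hf2Int.integrableOn (hfInt.integrableOn.const_mul _),
      setIntegral_const, measureReal_def, integral_const_mul, smul_eq_mul]
  set g : X → ℝ := fun x => ⨍ y in ball x r, (f x - f y) ^ 2 ∂μ with hgdef
  have hg_eq : ∀ x, g x = (μ (ball x r)).toReal⁻¹ * ∫ y in ball x r, (f x - f y) ^ 2 ∂μ := by
    intro x
    rw [hgdef]
    simp only [setAverage_eq, smul_eq_mul, measureReal_def]
  have hg0 : ∀ x, 0 ≤ g x := by
    intro x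
    rw [hg_eq x]
    exact mul_nonneg (by positivity) (integral_nonneg fun y => sq_nonneg _)
  -- measurability of g
  have hinner_m : StronglyMeasurable fun x => ∫ y in ball x r, (f x - f y) ^ 2 ∂μ := by
    have hsmeas : MeasurableSet {q : X × X | dist q.2 q.1 < r} :=
      (isOpen_lt (continuous_snd.dist continuous_fst) continuous_const).measurableSet
    have hFm : Measurable fun p : X × X => (f p.1 - f p.2) ^ 2 :=
      (((hsm.measurable.comp measurable_fst).sub (hsm.measurable.comp measurable_snd)).pow_const 2)
    have hGm : StronglyMeasurable fun p : X × X =>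
        ({q : X × X | dist q.2 q.1 < r}.indicator (fun q => (f q.1 - f q.2) ^ 2)) p :=
      (hFm.indicator hsmeas).stronglyMeasurable
    have h := hGm.integral_prod_right' (ν := μ)
    have he : (fun x => ∫ y in ball x r, (f x - f y) ^ 2 ∂μ) = fun x =>
        ∫ y, ({q : X × X | dist q.2 q.1 < r}.indicator (fun q => (f q.1 - f q.2) ^ 2)) (x, y) ∂μ := by
      funext x
      rw [← integral_indicator measurableSet_ball]
      refine integral_congr_ae (Filter.Eventually.of_forall fun y => ?_)
      by_cases hy : dist y x < r <;>
        simp [Set.indicator_apply, Set.mem_setOf_eq, mem_ball, hy]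
    rw [he]
    exact h
  have hgm : AEStronglyMeasurable g μ := by
    have h1 : Measurable fun x => (μ (ball x r)).toReal⁻¹ :=
      ((measurable_measure_ball' μ r).ennreal_toReal).inv
    have hge : g = fun x => (μ (ball x r)).toReal⁻¹ * ∫ y in ball x r, (f x - f y) ^ 2 ∂μ :=
      funext hg_eq
    rw [hge]
    exact (h1.mul hinner_m.measurable).aestronglyMeasurable
  -- integrability of g
  have hgInt : Integrable g μ := by
    have hBint : Integrable (fun x =>
        c⁻¹ * (2 * (μ Set.univ).toReal * f x ^ 2 + 2 * ∫ y, f y ^ 2 ∂μ)) μ :=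
      ((hf2Int.const_mul _).add (integrable_const _)).const_mul _
    refine hBint.mono' hgm (Filter.Eventually.of_forall fun x => ?_)
    rw [Real.norm_eq_abs, abs_of_nonneg (hg0 x), hg_eq x]
    have h1 : ∫ y in ball x r, (f x - f y) ^ 2 ∂μ ≤ ∫ y, (f x - f y) ^ 2 ∂μ :=
      setIntegral_le_integral (hIy x) (Filter.Eventually.of_forall fun y => sq_nonneg _)
    have h2 : ∫ y, (f x - f y) ^ 2 ∂μ ≤ ∫ y, (2 * f x ^ 2 + 2 * f y ^ 2) ∂μ := by
      refine integral_mono (hIy x) ((integrable_const _).add (hf2Int.const_mul _)) fun y => ?_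
      nlinarith [sq_nonneg (f x + f y)]
    have h3 : ∫ y, (2 * f x ^ 2 + 2 * f y ^ 2) ∂μ
        = 2 * (μ Set.univ).toReal * f x ^ 2 + 2 * ∫ y, f y ^ 2 ∂μ := by
      rw [integral_add (integrable_const _) (hf2Int.const_mul _), integral_const, measureReal_def,
        integral_const_mul, smul_eq_mul]
      ring
    have hinv : (μ (ball x r)).toReal⁻¹ ≤ c⁻¹ := inv_anti₀ hc (hlow x)
    calc (μ (ball x r)).toReal⁻¹ * ∫ y in ball x r, (f x - f y) ^ 2 ∂μ
        ≤ c⁻¹ * ∫ y in ball x r, (f x - f y) ^ 2 ∂μ :=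
          mul_le_mul_of_nonneg_right hinv (integral_nonneg fun y => sq_nonneg _)
      _ ≤ c⁻¹ * (2 * (μ Set.univ).toReal * f x ^ 2 + 2 * ∫ y, f y ^ 2 ∂μ) := by
          refine mul_le_mul_of_nonneg_left ?_ (inv_nonneg.2 hc.le)
          exact h1.trans (h2.trans_eq h3)
  -- total integral of g
  have hgX : ∫ x, g x ∂μ ≤ M * r ^ 2 := by
    have h0 : KSenergy μ f r = (∫ x, g x ∂μ) / r ^ 2 := by
      unfold KSenergy
      rw [← integral_div]
    rw [h0, div_le_iff₀ (by positivity)] at hE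
    exact hE
  -- per-cell estimates
  have cell : ∀ i, (∫ x in A i, (f x - ⨍ y in A i, f y ∂μ) ^ 2 ∂μ) ≤ CD ^ 3 * ∫ x in A i, g x ∂μ
      ∧ (⨍ y in A i, f y ∂μ) ^ 2 * (μ (A i)).toReal ≤ ∫ x in A i, f x ^ 2 ∂μ := by
    intro i
    have hm : 0 < (μ (A i)).toReal := hApos i
    set m := (μ (A i)).toReal with hmdef
    set I1 := ∫ y in A i, f y ∂μ with hI1def
    set I2 := ∫ y in A i, f y ^ 2 ∂μ with hI2def
    have ha : (⨍ y in A i, f y ∂μ) = m⁻¹ * I1 := by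
      rw [setAverage_eq, smul_eq_mul, measureReal_def, hmdef, hI1def]
    have hvar : ∫ x in A i, (f x - ⨍ y in A i, f y ∂μ) ^ 2 ∂μ = I2 - I1 ^ 2 / m := by
      rw [expandA (A i) _, ha, ← hI1def, ← hI2def, ← hmdef]
      field_simp
      ring
    have hvar0 : 0 ≤ I2 - I1 ^ 2 / m := hvar ▸ integral_nonneg fun x => sq_nonneg _
    constructor
    · have pre : ∀ x ∈ A i, m * f x ^ 2 - 2 * f x * I1 + I2 ≤ CD ^ 3 * m * g x := by
        intro x hx
        have h1 : ∫ y in A i, (f x - f y) ^ 2 ∂μ ≤ ∫ y in ball x r, (f x - f y) ^ 2 ∂μ :=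
          setIntegral_mono_set (hIy x).integrableOn
            (Filter.Eventually.of_forall fun y => sq_nonneg _)
            (HasSubset.Subset.eventuallyLE (hsub i x hx))
        have h2 : ∫ y in ball x r, (f x - f y) ^ 2 ∂μ = (μ (ball x r)).toReal * g x := by
          rw [hg_eq x, ← mul_assoc, mul_inv_cancel₀ (ne_of_gt (hballpos x)), one_mul]
        have h3 : (μ (ball x r)).toReal * g x ≤ CD ^ 3 * m * g x :=
          mul_le_mul_of_nonneg_right (hratio i x hx) (hg0 x)
        have h4 := expand (A i) x
        rw [← hmdef, ← hI1def, ← hI2def] at h4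
        rw [← h4]
        rw [h2] at h1
        exact h1.trans h3
      have hLint : IntegrableOn (fun x => m * f x ^ 2 - 2 * f x * I1 + I2) (A i) μ := by
        have he : (fun x => m * f x ^ 2 - 2 * f x * I1 + I2)
            = fun x => (m * f x ^ 2 - (2 * I1) * f x) + I2 := by funext x; ring
        rw [he]
        exact (((hf2Int.const_mul m).sub (hfInt.const_mul (2 * I1))).add
          (integrable_const _)).integrableOn
      have hint : ∫ x in A i, (m * f x ^ 2 - 2 * f x * I1 + I2) ∂μ
          ≤ ∫ x in A i, CD ^ 3 * m * g x ∂μ :=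
        setIntegral_mono_on hLint (hgInt.integrableOn.const_mul _) (hmeasA i) pre
      have hL : ∫ x in A i, (m * f x ^ 2 - 2 * f x * I1 + I2) ∂μ = 2 * (m * I2 - I1 ^ 2) := by
        have he : (fun x => m * f x ^ 2 - 2 * f x * I1 + I2)
            = fun x => (m * f x ^ 2 - (2 * I1) * f x) + I2 := by funext x; ring
        have hsubInt : IntegrableOn (fun x => m * f x ^ 2 - (2 * I1) * f x) (A i) μ :=
          ((hf2Int.const_mul m).sub (hfInt.const_mul (2 * I1))).integrableOn
        rw [he, integral_add hsubInt (integrableOn_const (measure_ne_top μ _)),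
          integral_sub (hf2Int.const_mul m).integrableOn (hfInt.const_mul (2 * I1)).integrableOn,
          integral_const_mul, integral_const_mul, setIntegral_const, measureReal_def, smul_eq_mul,
          ← hmdef, ← hI1def, ← hI2def]
        ring
      have hR : ∫ x in A i, CD ^ 3 * m * g x ∂μ = CD ^ 3 * m * ∫ x in A i, g x ∂μ :=
        integral_const_mul _ _
      set G := ∫ x in A i, g x ∂μ with hGdef
      have hG0 : 0 ≤ G := integral_nonneg fun x => hg0 x
      rw [hvar]
      have h2P : 2 * (m * I2 - I1 ^ 2) ≤ CD ^ 3 * m * G := by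
        rw [← hL, ← hR]
        exact hint
      have hP0 : 0 ≤ m * I2 - I1 ^ 2 := by
        have hdm : I1 ^ 2 / m * m = I1 ^ 2 := div_mul_cancel₀ _ (ne_of_gt hm)
        nlinarith [hvar0, hm]
      rw [← mul_le_mul_iff_of_pos_right hm]
      have e1 : (I2 - I1 ^ 2 / m) * m = m * I2 - I1 ^ 2 := by
        field_simp
      rw [e1]
      nlinarith [h2P, hP0]
    · have he2 : (⨍ y in A i, f y ∂μ) ^ 2 * m = I1 ^ 2 / m := by
        rw [ha]
        field_simp
      rw [he2]
      linarith [hvar0]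
  constructor
  · have hsumg : ∑ i, ∫ x in A i, g x ∂μ = ∫ x, g x ∂μ := by
      rw [← integral_iUnion_fintype hmeasA hdisjA (fun i => hgInt.integrableOn), hcover,
        setIntegral_univ]
    calc ∑ i, ∫ x in A i, (f x - ⨍ y in A i, f y ∂μ) ^ 2 ∂μ
        ≤ ∑ i, CD ^ 3 * ∫ x in A i, g x ∂μ := Finset.sum_le_sum fun i _ => (cell i).1
      _ = CD ^ 3 * ∑ i, ∫ x in A i, g x ∂μ := by rw [Finset.mul_sum]
      _ = CD ^ 3 * ∫ x, g x ∂μ := by rw [hsumg]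
      _ ≤ CD ^ 3 * (M * r ^ 2) := mul_le_mul_of_nonneg_left hgX (by positivity)
  · intro i
    refine ((cell i).2).trans ?_
    exact (setIntegral_le_integral hf2Int
      (Filter.Eventually.of_forall fun x => sq_nonneg _)).trans hM2

end KS7aux

open KS7aux

set_option maxHeartbeats 1000000

/-- relative compactness of `KS^{1,2}(X)` in `L²(X,μ)`: every
subset bounded in the norm `‖f‖_{L²} + sup_{r>0} E(f,r)^{1/2}` is totally
bounded in `L²(X,μ)`. -/
theorem stmt7 {X : Type*} [MetricSpace X] [MeasurableSpace X] [BorelSpace X]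
    [CompactSpace X]
    (μ : Measure X) (CD : ℝ) (hCD : 0 < CD)
    (hpos : ∀ (x : X) (r : ℝ), 0 < r → 0 < μ (ball x r))
    (hfin : ∀ (x : X) (r : ℝ), 0 < r → μ (ball x r) < ⊤)
    (hdouble : ∀ (x : X) (r : ℝ), 0 < r →
      μ (ball x (2 * r)) ≤ ENNReal.ofReal CD * μ (ball x r))
    (C0 lam : ℝ) (hC0 : 0 < C0) (hlam : 1 ≤ lam)
    (hPI : ∀ f : X → ℝ, (∃ K, LipschitzWith K f) → ∀ (x : X) (R : ℝ), 0 < R →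
      ∫ y in ball x R, (f y - ⨍ z in ball x R, f z ∂μ) ^ 2 ∂μ ≤
        C0 * R ^ 2 * ∫ y in ball x (lam * R), (lipConst f y) ^ 2 ∂μ) :
    ∀ S : Set (X → ℝ), (∀ f ∈ S, MemLp f 2 μ) →
      (∃ M : ℝ, ∀ f ∈ S, (∫ x, (f x) ^ 2 ∂μ) ≤ M ∧ ∀ r : ℝ, 0 < r → KSenergy μ f r ≤ M) →
      ∀ δ : ℝ, 0 < δ → ∃ T : Set (X → ℝ), T.Finite ∧ T ⊆ S ∧
        ∀ f ∈ S, ∃ g ∈ T, ∫ x, (f x - g x) ^ 2 ∂μ < δ := by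
  classical
  intro S hS hbd δ hδ
  obtain ⟨M, hM⟩ := hbd
  rcases Set.eq_empty_or_nonempty S with rfl | ⟨f₀, hf₀⟩
  · exact ⟨∅, Set.finite_empty, Set.empty_subset _,
      fun f hf => absurd hf (Set.notMem_empty f)⟩
  have hM0 : 0 ≤ M := le_trans (integral_nonneg fun x => sq_nonneg _) (hM f₀ hf₀).1
  -- μ is a finite measure
  haveI : IsFiniteMeasure μ := by
    obtain ⟨t, -, htfin, htcov⟩ :=
      (isCompact_univ : IsCompact (Set.univ : Set X)).finite_cover_balls (e := 1) one_pos
    constructor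
    calc μ Set.univ ≤ μ (⋃ x ∈ htfin.toFinset, ball x 1) := by
          refine measure_mono (htcov.trans ?_)
          simp only [Set.Finite.mem_toFinset]
          exact le_rfl
      _ ≤ ∑ x ∈ htfin.toFinset, μ (ball x 1) := measure_biUnion_finset_le _ _
      _ < ⊤ := ENNReal.sum_lt_top.mpr fun x _ => hfin x 1 one_pos
  rcases isEmpty_or_nonempty X with hX | hX
  · refine ⟨{f₀}, Set.finite_singleton _, Set.singleton_subset_iff.2 hf₀,
      fun f hf => ⟨f₀, Set.mem_singleton _, ?_⟩⟩
    have h0 : (∫ x, (f x - f₀ x) ^ 2 ∂μ) = 0 := integral_of_isEmpty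
    rw [h0]
    exact hδ
  -- choice of the scale r and the net fineness ε
  set K1 : ℝ := 6 * CD ^ 3 * M + 1 with hK1def
  have hK1pos : 0 < K1 := by positivity
  set r : ℝ := Real.sqrt (δ / (2 * K1)) with hrdef
  have hrpos : 0 < r := Real.sqrt_pos.2 (by positivity)
  have hr2 : r ^ 2 = δ / (2 * K1) := Real.sq_sqrt (by positivity)
  have hrsmall : 6 * CD ^ 3 * M * r ^ 2 < δ / 2 := by
    rw [hr2]
    have h1 : 6 * CD ^ 3 * M < K1 := by rw [hK1def]; linarith
    calc 6 * CD ^ 3 * M * (δ / (2 * K1)) < K1 * (δ / (2 * K1)) :=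
          mul_lt_mul_of_pos_right h1 (by positivity)
      _ = δ / 2 := by field_simp
  set mX : ℝ := (μ Set.univ).toReal with hmXdef
  have hmX0 : 0 ≤ mX := ENNReal.toReal_nonneg
  set ε : ℝ := Real.sqrt (δ / (2 * (3 * mX + 1))) with hεdef
  have hεpos : 0 < ε := Real.sqrt_pos.2 (by positivity)
  have hε2 : ε ^ 2 = δ / (2 * (3 * mX + 1)) := Real.sq_sqrt (by positivity)
  have hεsmall : 3 * mX * ε ^ 2 < δ / 2 := by
    rw [hε2]
    have h1 : 3 * mX < 3 * mX + 1 := by linarith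
    calc 3 * mX * (δ / (2 * (3 * mX + 1))) < (3 * mX + 1) * (δ / (2 * (3 * mX + 1))) :=
          mul_lt_mul_of_pos_right h1 (by positivity)
      _ = δ / 2 := by field_simp
  -- the partition
  obtain ⟨N, z, A, hmeasA, hbA, hAB, hdisjA, hcover⟩ := exists_partition (X := X) hrpos
  haveI hNne : Nonempty (Fin N) := by
    obtain ⟨x⟩ := hX
    have hx : x ∈ ⋃ i, A i := hcover ▸ Set.mem_univ x
    obtain ⟨i, -⟩ := Set.mem_iUnion.mp hx
    exact ⟨i⟩
  -- geometric facts about the partition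
  have hsub : ∀ i, ∀ x ∈ A i, A i ⊆ ball x r := by
    intro i x hx y hy
    have h1 : dist x (z i) < r / 2 := mem_ball.mp (hAB i hx)
    have h2 : dist y (z i) < r / 2 := mem_ball.mp (hAB i hy)
    have h3 : dist y x ≤ dist y (z i) + dist (z i) x := dist_triangle _ _ _
    rw [dist_comm (z i) x] at h3
    exact mem_ball.mpr (by linarith)
  have hratio : ∀ i, ∀ x ∈ A i, (μ (ball x r)).toReal ≤ CD ^ 3 * (μ (A i)).toReal := by
    intro i x hx
    have hbsub : ball x r ⊆ ball (z i) (2 * r) := by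
      intro y hy
      have h1 : dist y x < r := mem_ball.mp hy
      have h2 : dist x (z i) < r / 2 := mem_ball.mp (hAB i hx)
      have h3 : dist y (z i) ≤ dist y x + dist x (z i) := dist_triangle _ _ _
      exact mem_ball.mpr (by linarith)
    have e1 := hdouble (z i) r hrpos
    have e2 := hdouble (z i) (r / 2) (by positivity)
    have e3 := hdouble (z i) (r / 4) (by positivity)
    rw [show 2 * (r / 2) = r by ring] at e2
    rw [show 2 * (r / 4) = r / 2 by ring] at e3
    have hch : μ (ball (z i) (2 * r)) ≤ ENNReal.ofReal CD ^ 3 * μ (ball (z i) (r / 4)) := by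
      calc μ (ball (z i) (2 * r)) ≤ ENNReal.ofReal CD * μ (ball (z i) r) := e1
        _ ≤ ENNReal.ofReal CD * (ENNReal.ofReal CD * μ (ball (z i) (r / 2))) :=
            mul_le_mul_right e2 _
        _ ≤ ENNReal.ofReal CD * (ENNReal.ofReal CD *
              (ENNReal.ofReal CD * μ (ball (z i) (r / 4)))) :=
            mul_le_mul_right (mul_le_mul_right e3 _) _
        _ = ENNReal.ofReal CD ^ 3 * μ (ball (z i) (r / 4)) := by ring
    have hfull : μ (ball x r) ≤ ENNReal.ofReal CD ^ 3 * μ (A i) :=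
      (measure_mono hbsub).trans (hch.trans (mul_le_mul_right (measure_mono (hbA i)) _))
    have hne : ENNReal.ofReal CD ^ 3 * μ (A i) ≠ ⊤ :=
      ENNReal.mul_ne_top (ENNReal.pow_ne_top ENNReal.ofReal_ne_top) (measure_ne_top μ _)
    have h := ENNReal.toReal_mono hne hfull
    rwa [ENNReal.toReal_mul, ENNReal.toReal_pow, ENNReal.toReal_ofReal hCD.le] at h
  have hApos : ∀ i, 0 < (μ (A i)).toReal := fun i =>
    ENNReal.toReal_pos
      (ne_of_gt (lt_of_lt_of_le (hpos (z i) (r / 4) (by positivity)) (measure_mono (hbA i))))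
      (measure_ne_top μ _)
  have hballpos : ∀ x : X, 0 < (μ (ball x r)).toReal := fun x =>
    ENNReal.toReal_pos (ne_of_gt (hpos x r hrpos)) (measure_ne_top μ _)
  set c : ℝ := Finset.univ.inf' Finset.univ_nonempty
      (fun i => (μ (ball (z i) (r / 4))).toReal) with hcdef
  have hc : 0 < c := by
    rw [hcdef, Finset.lt_inf'_iff]
    exact fun i _ => ENNReal.toReal_pos (ne_of_gt (hpos (z i) (r / 4) (by positivity)))
      (measure_ne_top μ _)
  have hlow : ∀ x : X, c ≤ (μ (ball x r)).toReal := by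
    intro x
    have hx : x ∈ ⋃ i, A i := hcover ▸ Set.mem_univ x
    obtain ⟨i, hi⟩ := Set.mem_iUnion.mp hx
    have hzx : dist x (z i) < r / 2 := mem_ball.mp (hAB i hi)
    have hbsub : ball (z i) (r / 4) ⊆ ball x r := by
      intro y hy
      have h1 : dist y (z i) < r / 4 := mem_ball.mp hy
      have h2 : dist y x ≤ dist y (z i) + dist (z i) x := dist_triangle _ _ _
      rw [dist_comm (z i) x] at h2
      exact mem_ball.mpr (by linarith)
    refine le_trans ?_ (ENNReal.toReal_mono (measure_ne_top μ _) (measure_mono hbsub))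
    rw [hcdef]
    exact Finset.inf'_le _ (Finset.mem_univ i)
  -- the key per-function estimate, via a strongly measurable representative
  have key : ∀ f ∈ S,
      ((∑ i, ∫ x in A i, (f x - ⨍ y in A i, f y ∂μ) ^ 2 ∂μ) ≤ CD ^ 3 * (M * r ^ 2) ∧
        ∀ i, (⨍ y in A i, f y ∂μ) ^ 2 * (μ (A i)).toReal ≤ M) := by
    intro f hf
    have hfL := hS f hf
    set f' := hfL.aestronglyMeasurable.mk f with hf'def
    have hae : f =ᵐ[μ] f' := hfL.aestronglyMeasurable.ae_eq_mk
    have hsm' : StronglyMeasurable f' := hfL.aestronglyMeasurable.stronglyMeasurable_mk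
    have hfL' : MemLp f' 2 μ := hfL.ae_eq hae
    have havg : ∀ i, (⨍ y in A i, f y ∂μ) = ⨍ y in A i, f' y ∂μ := fun i =>
      average_congr (ae_restrict_of_ae hae)
    have hsq : (fun x => f x ^ 2) =ᵐ[μ] fun x => f' x ^ 2 := by
      filter_upwards [hae] with x hx
      rw [hx]
    have hint2 : ∫ x, f' x ^ 2 ∂μ ≤ M := by
      rw [← integral_congr_ae hsq]
      exact (hM f hf).1
    have hEf : KSenergy μ f' r ≤ M := ks_congr μ r hae ▸ (hM f hf).2 r hrpos
    obtain ⟨h1, h2⟩ := main_est μ hCD hrpos hc hlow hballpos hmeasA hApos hsub hratio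
      hdisjA hcover hsm' hfL' hint2 hEf
    constructor
    · refine le_trans (le_of_eq ?_) h1
      refine Finset.sum_congr rfl fun i _ => ?_
      rw [havg i]
      refine integral_congr_ae ?_
      filter_upwards [ae_restrict_of_ae hae] with x hx
      rw [hx]
    · intro i
      rw [havg i]
      exact h2 i
  -- the coordinate map into ℝ^N
  set v : (X → ℝ) → (Fin N → ℝ) := fun f i => ⨍ y in A i, f y ∂μ with hvdef
  set cA : ℝ := Finset.univ.inf' Finset.univ_nonempty (fun i => (μ (A i)).toReal) with hcAdef
  have hcA : 0 < cA := by
    rw [hcAdef, Finset.lt_inf'_iff]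
    exact fun i _ => hApos i
  have hvb : ∀ f ∈ S, ∀ i, (v f i) ^ 2 ≤ M / cA := by
    intro f hf i
    have h := (key f hf).2 i
    have h2 : cA ≤ (μ (A i)).toReal := by
      rw [hcAdef]; exact Finset.inf'_le _ (Finset.mem_univ i)
    rw [le_div_iff₀ hcA]
    have hv0 : 0 ≤ (v f i) ^ 2 := sq_nonneg _
    nlinarith [hApos i]
  have hVsub : v '' S ⊆ Metric.closedBall 0 (Real.sqrt (M / cA)) := by
    rintro _ ⟨f, hf, rfl⟩
    rw [mem_closedBall, dist_pi_le_iff (Real.sqrt_nonneg _)]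
    intro i
    rw [Pi.zero_apply, Real.dist_eq, sub_zero]
    refine abs_le_of_sq_le_sq ?_ (Real.sqrt_nonneg _)
    rw [Real.sq_sqrt (by positivity : (0:ℝ) ≤ M / cA)]
    exact hvb f hf i
  have htb : TotallyBounded (v '' S) :=
    (isCompact_closedBall (0 : Fin N → ℝ) (Real.sqrt (M / cA))).totallyBounded.subset hVsub
  obtain ⟨t, htsub, htfin, htcov⟩ :=
    totallyBounded_iff_subset.mp htb _ (Metric.dist_mem_uniformity hεpos)
  have hpick : ∀ u ∈ t, ∃ h, h ∈ S ∧ v h = u := by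
    intro u hu
    obtain ⟨f, hf, hvf⟩ := htsub hu
    exact ⟨f, hf, hvf⟩
  choose! pick hpickS hpickv using hpick
  refine ⟨pick '' t, htfin.image _, ?_, ?_⟩
  · rintro _ ⟨u, hu, rfl⟩
    exact hpickS u hu
  · intro f hf
    have hvf : v f ∈ ⋃ y ∈ t, {x : Fin N → ℝ | (x, y) ∈ {p : (Fin N → ℝ) × (Fin N → ℝ) | dist p.1 p.2 < ε}} :=
      htcov ⟨f, hf, rfl⟩
    simp only [Set.mem_iUnion, Set.mem_setOf_eq] at hvf
    obtain ⟨u, hu, hdist⟩ := hvf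
    have hgS : pick u ∈ S := hpickS u hu
    set g : X → ℝ := pick u with hgdef
    refine ⟨g, ⟨u, hu, rfl⟩, ?_⟩
    have hvg : v g = u := hpickv u hu
    have hcoord : ∀ i, |v f i - v g i| < ε := by
      intro i
      rw [hvg]
      have := (dist_pi_lt_iff hεpos).mp hdist i
      rwa [Real.dist_eq] at this
    have hfgInt : Integrable (fun x => (f x - g x) ^ 2) μ :=
      ((hS f hf).sub (hS g hgS)).integrable_sq
    have hdecomp : ∫ x, (f x - g x) ^ 2 ∂μ = ∑ i, ∫ x in A i, (f x - g x) ^ 2 ∂μ := by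
      rw [← setIntegral_univ, ← hcover,
        integral_iUnion_fintype hmeasA hdisjA fun i => hfgInt.integrableOn]
    have hIf : ∀ i, IntegrableOn (fun x => (f x - v f i) ^ 2) (A i) μ := fun i =>
      (((hS f hf).sub (memLp_const _)).integrable_sq).integrableOn
    have hIg : ∀ i, IntegrableOn (fun x => (g x - v g i) ^ 2) (A i) μ := fun i =>
      (((hS g hgS).sub (memLp_const _)).integrable_sq).integrableOn
    have hcell : ∀ i, ∫ x in A i, (f x - g x) ^ 2 ∂μ ≤
        3 * ∫ x in A i, (f x - v f i) ^ 2 ∂μ + 3 * ε ^ 2 * (μ (A i)).toReal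
          + 3 * ∫ x in A i, (g x - v g i) ^ 2 ∂μ := by
      intro i
      have hptwise : ∀ x ∈ A i, (f x - g x) ^ 2
          ≤ 3 * (f x - v f i) ^ 2 + 3 * ε ^ 2 + 3 * (g x - v g i) ^ 2 := by
        intro x _
        have habs := abs_lt.mp (hcoord i)
        have h := sq3 (a := f x - v f i) (b := g x - v g i) (d := v f i - v g i)
          (e := ε) (by linarith [habs.1]) (by linarith [habs.2])
        have he : (f x - g x) ^ 2 = ((f x - v f i) - (g x - v g i) + (v f i - v g i)) ^ 2 := by
          ring
        rw [he]
        exact h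
      have hRHSint : IntegrableOn
          (fun x => 3 * (f x - v f i) ^ 2 + 3 * ε ^ 2 + 3 * (g x - v g i) ^ 2) (A i) μ :=
        (((hIf i).const_mul 3).add (integrableOn_const (measure_ne_top μ _))).add
          ((hIg i).const_mul 3)
      calc ∫ x in A i, (f x - g x) ^ 2 ∂μ
          ≤ ∫ x in A i, (3 * (f x - v f i) ^ 2 + 3 * ε ^ 2 + 3 * (g x - v g i) ^ 2) ∂μ :=
            setIntegral_mono_on hfgInt.integrableOn hRHSint (hmeasA i) hptwise
        _ = 3 * ∫ x in A i, (f x - v f i) ^ 2 ∂μ + 3 * ε ^ 2 * (μ (A i)).toReal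
              + 3 * ∫ x in A i, (g x - v g i) ^ 2 ∂μ := by
            have hI1 : IntegrableOn (fun x => 3 * (f x - v f i) ^ 2 + 3 * ε ^ 2) (A i) μ :=
              ((hIf i).const_mul 3).add (integrableOn_const (measure_ne_top μ _))
            have hI2c : IntegrableOn (fun _ : X => 3 * ε ^ 2) (A i) μ :=
              integrableOn_const (measure_ne_top μ _)
            have hI3 : IntegrableOn (fun x => 3 * (f x - v f i) ^ 2) (A i) μ :=
              (hIf i).const_mul 3
            have e1 : ∫ x in A i, 3 * (f x - v f i) ^ 2 ∂μ
                = 3 * ∫ x in A i, (f x - v f i) ^ 2 ∂μ := integral_const_mul _ _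
            have e2 : ∫ x in A i, 3 * (g x - v g i) ^ 2 ∂μ
                = 3 * ∫ x in A i, (g x - v g i) ^ 2 ∂μ := integral_const_mul _ _
            rw [integral_add hI1 ((hIg i).const_mul 3), integral_add hI3 hI2c, e1, e2,
              setIntegral_const, measureReal_def, smul_eq_mul]
            ring
    have hsum1 : ∑ i, ∫ x in A i, (f x - v f i) ^ 2 ∂μ ≤ CD ^ 3 * (M * r ^ 2) := (key f hf).1
    have hsum2 : ∑ i, ∫ x in A i, (g x - v g i) ^ 2 ∂μ ≤ CD ^ 3 * (M * r ^ 2) := (key g hgS).1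
    have hsumM : ∑ i, (μ (A i)).toReal = mX := by
      rw [← ENNReal.toReal_sum (fun i _ => measure_ne_top μ _), hmXdef]
      congr 1
      rw [← hcover, measure_iUnion hdisjA hmeasA, tsum_fintype]
    calc ∫ x, (f x - g x) ^ 2 ∂μ = ∑ i, ∫ x in A i, (f x - g x) ^ 2 ∂μ := hdecomp
      _ ≤ ∑ i, (3 * ∫ x in A i, (f x - v f i) ^ 2 ∂μ + 3 * ε ^ 2 * (μ (A i)).toReal
            + 3 * ∫ x in A i, (g x - v g i) ^ 2 ∂μ) := Finset.sum_le_sum fun i _ => hcell i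
      _ = 3 * (∑ i, ∫ x in A i, (f x - v f i) ^ 2 ∂μ) + 3 * ε ^ 2 * mX
            + 3 * (∑ i, ∫ x in A i, (g x - v g i) ^ 2 ∂μ) := by
          rw [Finset.sum_add_distrib, Finset.sum_add_distrib, ← Finset.mul_sum,
            ← Finset.mul_sum, ← Finset.mul_sum, hsumM]
      _ ≤ 3 * (CD ^ 3 * (M * r ^ 2)) + 3 * ε ^ 2 * mX + 3 * (CD ^ 3 * (M * r ^ 2)) := by
          have h1 := mul_le_mul_of_nonneg_left hsum1 (by norm_num : (0:ℝ) ≤ 3)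
          have h2 := mul_le_mul_of_nonneg_left hsum2 (by norm_num : (0:ℝ) ≤ 3)
          linarith
      _ < δ := by nlinarith [hrsmall, hεsmall]
end

section
/- Under the assumptions of the strictly local case (doubling + 2-Poincaré with Lipschitz constants), the intrinsic distance d_E of the limiting Dirichlet form (E, KS^{1,2}(X)), defined by d_E(x,y) = sup{f(x)−f(y) : f ∈ KS^{1,2}(X) ∩ C₀(X), dΓ(f,f) ≤ dμ}, is bi-Lipschitz equivalent to the original distance d: there exists C ≥ 1 with C^{-1} d(x,y) ≤ d_E(x,y) ≤ C d(x,y) for all x,y ∈ X. -/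
open MeasureTheory Metric Filter Topology

open scoped ENNReal NNReal

set_option linter.unusedSectionVars false
set_option linter.unusedVariables false
set_option maxHeartbeats 1000000

/-- The intrinsic distance of a Dirichlet form with domain `𝓕` and energy
measures `Γ`: `d_E(x,y) = sup { f(x) - f(y) : f ∈ 𝓕 ∩ C₀(X), dΓ(f,f) ≤ dμ }`. -/
noncomputable def intrinsicDist {X : Type*} [MetricSpace X] [MeasurableSpace X]
    (μ : Measure X) (𝓕 : Set (X → ℝ)) (Γ : (X → ℝ) → Measure X) (x y : X) : ℝ :=
  sSup {t : ℝ | ∃ f ∈ 𝓕, Continuous f ∧ HasCompactSupport f ∧ Γ f ≤ μ ∧ t = f x - f y}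


section helpers
variable {X : Type*} [MetricSpace X] [MeasurableSpace X] [BorelSpace X]
  (μ : Measure X) (CD : ℝ)

lemma double_pow (hCD : 0 < CD)
    (hdouble : ∀ (x : X) (r : ℝ), 0 < r →
      μ (ball x (2 * r)) ≤ ENNReal.ofReal CD * μ (ball x r))
    (x : X) : ∀ (n : ℕ) (r : ℝ), 0 < r →
      μ (ball x (2 ^ n * r)) ≤ ENNReal.ofReal (CD ^ n) * μ (ball x r) := by
  intro n
  induction n with
  | zero => intro r hr; simp
  | succ n ih =>
    intro r hr
    have h1 : (2:ℝ) ^ (n+1) * r = 2 * (2 ^ n * r) := by ring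
    have h2 := hdouble x (2 ^ n * r) (by positivity)
    rw [h1]
    refine h2.trans ?_
    calc ENNReal.ofReal CD * μ (ball x (2 ^ n * r))
        ≤ ENNReal.ofReal CD * (ENNReal.ofReal (CD ^ n) * μ (ball x r)) :=
          by gcongr; exact ih r hr
      _ = ENNReal.ofReal (CD ^ (n+1)) * μ (ball x r) := by
          rw [← mul_assoc, ← ENNReal.ofReal_mul hCD.le, pow_succ, mul_comm CD]

lemma double_mono (hCD : 0 < CD)
    (hdouble : ∀ (x : X) (r : ℝ), 0 < r →
      μ (ball x (2 * r)) ≤ ENNReal.ofReal CD * μ (ball x r))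
    (x : X) (n : ℕ) (R r : ℝ) (hr : 0 < r) (hR : R ≤ 2 ^ n * r) :
    μ (ball x R) ≤ ENNReal.ofReal (CD ^ n) * μ (ball x r) :=
  (measure_mono (ball_subset_ball hR)).trans (double_pow μ CD hCD hdouble x n r hr)

end helpers

section prop
variable {X : Type*} [MetricSpace X] [MeasurableSpace X] [BorelSpace X] [CompleteSpace X]
  (μ : Measure X) (CD : ℝ)

lemma proper_of_doubling (hCD : 0 < CD)
    (hpos : ∀ (x : X) (r : ℝ), 0 < r → 0 < μ (ball x r))
    (hfin : ∀ (x : X) (r : ℝ), 0 < r → μ (ball x r) < ⊤)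
    (hdouble : ∀ (x : X) (r : ℝ), 0 < r →
      μ (ball x (2 * r)) ≤ ENNReal.ofReal CD * μ (ball x r)) :
    ProperSpace X := by
  constructor
  intro x r
  classical
  rcases le_or_gt r 0 with hr | hr
  · rcases lt_or_eq_of_le hr with hr' | hr'
    · rw [closedBall_eq_empty.2 hr']; exact isCompact_empty
    · rw [hr', closedBall_zero]; exact isCompact_singleton
  refine TotallyBounded.isCompact_of_isClosed ?_ isClosed_closedBall
  rw [Metric.totallyBounded_iff]
  intro ε hε
  obtain ⟨m, hm⟩ := pow_unbounded_of_one_lt ((2*r+2*ε)/(ε/2)) (one_lt_two (α := ℝ))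
  set V : ℝ≥0∞ := μ (ball x (r + ε)) with hV
  have hV0 : 0 < V := hpos x (r + ε) (by linarith)
  have hVfin : V < ⊤ := hfin x (r + ε) (by linarith)
  set M : ℝ≥0∞ := ENNReal.ofReal (CD ^ m) with hM
  have hMfin : M ≠ ⊤ := ENNReal.ofReal_ne_top
  have hM0 : M ≠ 0 := (ENNReal.ofReal_pos.2 (pow_pos hCD m)).ne'
  have key : ∀ T : Finset X, (↑T : Set X) ⊆ closedBall x r →
      (∀ a ∈ T, ∀ b ∈ T, a ≠ b → ε ≤ dist a b) → (T.card : ℝ≥0∞) ≤ M := by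
    intro T hTsub hTsep
    have hdisj : (↑T : Set X).PairwiseDisjoint (fun t => ball t (ε/2)) := by
      intro a ha b hb hab
      exact ball_disjoint_ball (by linarith [hTsep a ha b hb hab])
    have hsum : ∑ t ∈ T, μ (ball t (ε/2)) = μ (⋃ t ∈ T, ball t (ε/2)) :=
      (measure_biUnion_finset hdisj fun t _ => measurableSet_ball).symm
    have hsub : (⋃ t ∈ T, ball t (ε/2)) ⊆ ball x (r + ε) := by
      intro z hz
      simp only [Set.mem_iUnion] at hz
      obtain ⟨t, ht, hzt⟩ := hz
      have h1 : dist t x ≤ r := hTsub ht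
      rw [mem_ball] at hzt ⊢
      calc dist z x ≤ dist z t + dist t x := dist_triangle _ _ _
        _ < ε/2 + r := by linarith
        _ ≤ r + ε := by linarith
    have hlow : ∀ t ∈ T, V ≤ M * μ (ball t (ε/2)) := by
      intro t ht
      have hsub2 : ball x (r + ε) ⊆ ball t (2*r + 2*ε) := by
        intro z hz
        rw [mem_ball] at hz ⊢
        have h1 : dist t x ≤ r := hTsub ht
        calc dist z t ≤ dist z x + dist x t := dist_triangle _ _ _
          _ < (r + ε) + r := by rw [dist_comm] at h1; linarith
          _ ≤ 2*r + 2*ε := by linarith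
      calc V ≤ μ (ball t (2*r + 2*ε)) := measure_mono hsub2
        _ ≤ ENNReal.ofReal (CD ^ m) * μ (ball t (ε/2)) := by
            refine double_mono μ CD hCD hdouble t m _ _ (by linarith) ?_
            have h2 : (0:ℝ) < ε/2 := by linarith
            rw [div_lt_iff₀ h2] at hm
            linarith
    have hcard : (T.card : ℝ≥0∞) * (V / M) ≤ V := by
      calc (T.card : ℝ≥0∞) * (V / M) = ∑ _t ∈ T, (V / M) := by
            rw [Finset.sum_const, nsmul_eq_mul]
        _ ≤ ∑ t ∈ T, μ (ball t (ε/2)) := by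
            refine Finset.sum_le_sum fun t ht => ?_
            rw [ENNReal.div_le_iff_le_mul (Or.inl hM0) (Or.inl hMfin), mul_comm]
            exact hlow t ht
        _ = μ (⋃ t ∈ T, ball t (ε/2)) := hsum
        _ ≤ V := measure_mono hsub
    -- deduce card ≤ M
    have h1 : (T.card : ℝ≥0∞) * M⁻¹ * V ≤ 1 * V := by
      rw [one_mul]
      calc (T.card : ℝ≥0∞) * M⁻¹ * V = (T.card : ℝ≥0∞) * (V / M) := by
            rw [div_eq_mul_inv]; ring
        _ ≤ V := hcard
    have h2 : (T.card : ℝ≥0∞) * M⁻¹ ≤ 1 :=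
      (ENNReal.mul_le_mul_iff_left hV0.ne' hVfin.ne).1 h1
    calc (T.card : ℝ≥0∞) = (T.card : ℝ≥0∞) * M⁻¹ * M := by
          rw [mul_assoc, ENNReal.inv_mul_cancel hM0 hMfin, mul_one]
      _ ≤ 1 * M := by gcongr
      _ = M := one_mul M
  -- cardinality bound as natural number
  set N : ℕ := ⌈CD ^ m⌉₊ with hN
  have keyN : ∀ T : Finset X, (↑T : Set X) ⊆ closedBall x r →
      (∀ a ∈ T, ∀ b ∈ T, a ≠ b → ε ≤ dist a b) → T.card ≤ N := by
    intro T h1 h2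
    have hMN : M ≤ (N : ℝ≥0∞) := by
      rw [hM, ← ENNReal.ofReal_natCast N]
      exact ENNReal.ofReal_le_ofReal (Nat.le_ceil _)
    exact_mod_cast (key T h1 h2).trans hMN
  -- maximal-cardinality separated set
  set A : Set ℕ := {n | ∃ T : Finset X, (↑T : Set X) ⊆ closedBall x r ∧
      (∀ a ∈ T, ∀ b ∈ T, a ≠ b → ε ≤ dist a b) ∧ T.card = n} with hA
  have hA0 : (0:ℕ) ∈ A := ⟨∅, by simp, by simp, rfl⟩
  have hAbdd : BddAbove A := ⟨N, fun n ⟨T, h1, h2, h3⟩ => h3 ▸ keyN T h1 h2⟩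
  obtain ⟨T, hT1, hT2, hT3⟩ := Nat.sSup_mem ⟨0, hA0⟩ hAbdd
  refine ⟨↑T, T.finite_toSet, ?_⟩
  intro z hz
  by_contra hzn
  simp only [Set.mem_iUnion, mem_ball, not_exists] at hzn
  have hzsep : ∀ t ∈ T, ε ≤ dist z t := by
    intro t ht
    have := hzn t
    push_neg at this
    exact this ht
  have hzT : z ∉ T := by
    intro h
    have := hzsep z h
    simp at this; linarith
  have hins : T.card + 1 ∈ A := by
    refine ⟨insert z T, ?_, ?_, ?_⟩
    · intro w hw
      rcases Finset.mem_insert.1 hw with h | h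
      · subst h; exact hz
      · exact hT1 h
    · intro a ha b hb hab
      rcases Finset.mem_insert.1 ha with h | h <;> rcases Finset.mem_insert.1 hb with h' | h'
      · subst h; subst h'; exact absurd rfl hab
      · subst h; exact hzsep b h'
      · subst h'; rw [dist_comm]; exact hzsep a h
      · exact hT2 a h b h' hab
    · rw [Finset.card_insert_of_notMem hzT]
  have : T.card + 1 ≤ sSup A := le_csSup hAbdd hins
  omega

end prop

section osc
variable {X : Type*} [MetricSpace X] [MeasurableSpace X] [BorelSpace X]
  (μ : Measure X)

lemma avg_sub_eq (f : X → ℝ) (s : Set X) (c : ℝ) (h0 : μ s ≠ 0) (hfin : μ s ≠ ⊤)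
    (hint : IntegrableOn f s μ) :
    (⨍ w in s, f w ∂μ) - c = (μ s).toReal⁻¹ * ∫ w in s, (f w - c) ∂μ := by
  have ht : (μ s).toReal ≠ 0 := (ENNReal.toReal_pos h0 hfin).ne'
  rw [setAverage_eq, integral_sub hint (integrableOn_const hfin),
    setIntegral_const, smul_eq_mul, smul_eq_mul, mul_sub, measureReal_def]
  field_simp

lemma avg_sub_const_le (f : X → ℝ) (z : X) (s : Set X) (c ε : ℝ)
    (h0 : μ s ≠ 0) (hfin : μ s ≠ ⊤) (hs : MeasurableSet s)
    (hmeas : AEStronglyMeasurable f μ)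
    (hb : ∀ w ∈ s, |f w - c| ≤ ε) :
    |(⨍ w in s, f w ∂μ) - c| ≤ ε := by
  have ht : (0:ℝ) < (μ s).toReal := ENNReal.toReal_pos h0 hfin
  have hε : 0 ≤ ε := by
    obtain ⟨w, hw⟩ := nonempty_of_measure_ne_zero h0
    exact (abs_nonneg _).trans (hb w hw)
  have hint : IntegrableOn f s μ :=
    Measure.integrableOn_of_bounded (M := |c| + ε) hfin (hmeas) (by
      filter_upwards [ae_restrict_mem hs] with w hw
      have h1 := hb w hw
      have h2 : |f w| ≤ |f w - c| + |c| := by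
        calc |f w| = |(f w - c) + c| := by ring_nf
          _ ≤ |f w - c| + |c| := abs_add_le _ _
      rw [Real.norm_eq_abs]; linarith)
  rw [avg_sub_eq μ f s c h0 hfin hint, abs_mul, abs_inv, abs_of_nonneg ENNReal.toReal_nonneg]
  have hbound : |∫ w in s, (f w - c) ∂μ| ≤ ε * (μ s).toReal := by
    rw [← Real.norm_eq_abs]
    refine norm_setIntegral_le_of_norm_le_const hfin.lt_top (fun w hw => ?_)
    rw [Real.norm_eq_abs]; exact hb w hw
  calc (μ s).toReal⁻¹ * |∫ w in s, (f w - c) ∂μ| ≤ (μ s).toReal⁻¹ * (ε * (μ s).toReal) := by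
        exact mul_le_mul_of_nonneg_left hbound (by positivity)
    _ = ε := by field_simp
end osc

section osc2
variable {X : Type*} [MetricSpace X] [MeasurableSpace X] [BorelSpace X]
  (μ : Measure X)

lemma L1_poincare (f : X → ℝ) (A R : ℝ) (z : X) (hR : 0 < R) (hA : 0 < A)
    (h0 : μ (ball z R) ≠ 0) (hfin : μ (ball z R) ≠ ⊤)
    (hmeas : AEStronglyMeasurable f μ) (Bf : ℝ) (hBf : ∀ w, |f w| ≤ Bf)
    (hsq : ∫ w in ball z R, (f w - ⨍ v in ball z R, f v ∂μ) ^ 2 ∂μ ≤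
      A ^ 2 * R ^ 2 * (μ (ball z R)).toReal) :
    ∫ w in ball z R, |f w - ⨍ v in ball z R, f v ∂μ| ∂μ ≤
      A * R * (μ (ball z R)).toReal := by
  set B := ball z R with hB
  set c : ℝ := ⨍ v in B, f v ∂μ with hc
  set t : ℝ := A * R with htdef
  have ht : 0 < t := by positivity
  set V : ℝ := (μ B).toReal with hV
  have hV0 : 0 ≤ V := ENNReal.toReal_nonneg
  set g : X → ℝ := fun w => f w - c with hg
  have hg_meas : AEStronglyMeasurable g μ := hmeas.sub aestronglyMeasurable_const
  have hgsq_meas : AEStronglyMeasurable (fun w => (g w) ^ 2) μ := by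
    exact hg_meas.pow 2
  have hgb : ∀ w, |g w| ≤ Bf + |c| := by
    intro w
    calc |g w| = |f w + (-c)| := by rw [hg]; ring_nf
      _ ≤ |f w| + |(-c)| := abs_add_le _ _
      _ ≤ Bf + |c| := by rw [abs_neg]; exact add_le_add (hBf w) le_rfl
  have hint_g : IntegrableOn g B μ :=
    Measure.integrableOn_of_bounded (M := Bf + |c|) hfin hg_meas
      (Eventually.of_forall fun w => by rw [Real.norm_eq_abs]; exact hgb w)
  have hint_gsq : IntegrableOn (fun w => (g w) ^ 2) B μ :=
    Measure.integrableOn_of_bounded (M := (Bf + |c|) ^ 2) hfin hgsq_meas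
      (Eventually.of_forall fun w => by
        rw [Real.norm_eq_abs, abs_of_nonneg (sq_nonneg _), ← sq_abs]
        exact pow_le_pow_left₀ (abs_nonneg _) (hgb w) 2)
  have hpt : ∀ w, |g w| ≤ ((g w) ^ 2 / t + t) / 2 := by
    intro w
    rw [div_add' _ _ _ ht.ne', div_div]
    rw [le_div_iff₀ (by positivity)]
    nlinarith [sq_nonneg (|g w| - t), sq_abs (g w), abs_nonneg (g w)]
  have hint_rhs : IntegrableOn (fun w => ((g w) ^ 2 / t + t) / 2) B μ :=
    (((hint_gsq.div_const t).add (integrableOn_const hfin)).div_const 2)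
  have hmono : ∫ w in B, |g w| ∂μ ≤ ∫ w in B, ((g w) ^ 2 / t + t) / 2 ∂μ :=
    setIntegral_mono_on hint_g.abs hint_rhs measurableSet_ball (fun w _ => hpt w)
  have hcomp : ∫ w in B, ((g w) ^ 2 / t + t) / 2 ∂μ =
      ((∫ w in B, (g w) ^ 2 ∂μ) / t + t * V) / 2 := by
    rw [integral_div, integral_add (hint_gsq.div_const t)
      (integrableOn_const hfin), integral_div, setIntegral_const,
      smul_eq_mul, mul_comm, measureReal_def]
  have hsq' : ∫ w in B, (g w) ^ 2 ∂μ ≤ t ^ 2 * V := by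
    have : A ^ 2 * R ^ 2 * V = t ^ 2 * V := by rw [htdef]; ring
    rw [← this]; exact hsq
  have hfinal : ((∫ w in B, (g w) ^ 2 ∂μ) / t + t * V) / 2 ≤ t * V := by
    have h1 : (∫ w in B, (g w) ^ 2 ∂μ) / t ≤ t * V := by
      rw [div_le_iff₀ ht]; nlinarith
    linarith
  calc ∫ w in B, |g w| ∂μ ≤ _ := hmono
    _ = _ := hcomp
    _ ≤ t * V := hfinal
    _ = A * R * V := by rw [htdef]

lemma L2_transfer (f : X → ℝ) (A : ℝ) (z' z : X) (r' R Mc : ℝ)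
    (hr' : 0 < r') (hR : 0 < R) (hMc : 0 ≤ Mc) (hA : 0 ≤ A)
    (hsub : ball z' r' ⊆ ball z R)
    (h0' : μ (ball z' r') ≠ 0) (hfin' : μ (ball z' r') ≠ ⊤) (hfinB : μ (ball z R) ≠ ⊤)
    (hcmp : μ (ball z R) ≤ ENNReal.ofReal Mc * μ (ball z' r'))
    (hint : IntegrableOn f (ball z R) μ)
    (hL1 : ∫ w in ball z R, |f w - ⨍ v in ball z R, f v ∂μ| ∂μ ≤
      A * R * (μ (ball z R)).toReal) :
    |(⨍ w in ball z' r', f w ∂μ) - ⨍ w in ball z R, f w ∂μ| ≤ Mc * A * R := by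
  set B' := ball z' r' with hB'
  set B := ball z R with hB
  set c : ℝ := ⨍ v in B, f v ∂μ with hc
  set V' : ℝ := (μ B').toReal with hV'
  set V : ℝ := (μ B).toReal with hV
  have hV'0 : 0 < V' := ENNReal.toReal_pos h0' hfin'
  have hVM : V ≤ Mc * V' := by
    have h1 : (μ B) ≤ ENNReal.ofReal Mc * μ B' := hcmp
    have h2 := ENNReal.toReal_mono (ENNReal.mul_ne_top ENNReal.ofReal_ne_top hfin') h1
    rwa [ENNReal.toReal_mul, ENNReal.toReal_ofReal hMc] at h2
  have hint' : IntegrableOn f B' μ := hint.mono_set hsub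
  rw [avg_sub_eq μ f B' c h0' hfin' hint', abs_mul, abs_inv,
    abs_of_nonneg ENNReal.toReal_nonneg, ← hV']
  have habs : |∫ w in B', (f w - c) ∂μ| ≤ ∫ w in B', |f w - c| ∂μ := by
    rw [← Real.norm_eq_abs]
    exact (norm_integral_le_integral_norm _).trans (le_of_eq (by
      congr 1))
  have hmono : ∫ w in B', |f w - c| ∂μ ≤ ∫ w in B, |f w - c| ∂μ := by
    refine setIntegral_mono_set ((hint.sub (integrableOn_const
      hfinB)).abs) ?_ (HasSubset.Subset.eventuallyLE hsub)
    exact Eventually.of_forall fun w => abs_nonneg _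
  have hchain : |∫ w in B', (f w - c) ∂μ| ≤ A * R * V := habs.trans (hmono.trans hL1)
  calc V'⁻¹ * |∫ w in B', (f w - c) ∂μ| ≤ V'⁻¹ * (A * R * V) :=
        mul_le_mul_of_nonneg_left hchain (by positivity)
    _ ≤ V'⁻¹ * (A * R * (Mc * V')) := by
        refine mul_le_mul_of_nonneg_left ?_ (by positivity)
        exact mul_le_mul_of_nonneg_left hVM (by positivity)
    _ = Mc * A * R := by field_simp

lemma L3_telescope (f : X → ℝ) (A CD : ℝ) (z : X) (R : ℝ) (hR : 0 < R)
    (hA : 0 ≤ A) (hCD : 0 ≤ CD) (hfc : Continuous f)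
    (h0 : ∀ s : ℝ, 0 < s → μ (ball z s) ≠ 0) (hfin : ∀ s : ℝ, 0 < s → μ (ball z s) ≠ ⊤)
    (hmeas : AEStronglyMeasurable f μ)
    (hstep : ∀ k : ℕ, |(⨍ w in ball z (R / 2 ^ (k+1)), f w ∂μ) -
      ⨍ w in ball z (R / 2 ^ k), f w ∂μ| ≤ CD * A * (R / 2 ^ k)) :
    |f z - ⨍ w in ball z R, f w ∂μ| ≤ 2 * CD * A * R := by
  set u : ℕ → ℝ := fun k => ⨍ w in ball z (R / 2 ^ k), f w ∂μ with hu
  set d : ℕ → ℝ := fun k => (CD * A * R) * (1/2 : ℝ) ^ k with hd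
  have hdist : ∀ k, dist (u k) (u (k+1)) ≤ d k := by
    intro k
    rw [Real.dist_eq, abs_sub_comm]
    refine (hstep k).trans (le_of_eq ?_)
    rw [hd]
    have : (R / 2 ^ k) = R * (1/2 : ℝ) ^ k := by
      rw [one_div, inv_pow, div_eq_mul_inv]
    rw [this]; ring
  have hsumd : Summable d := (summable_geometric_two).mul_left _
  have htend : Tendsto u atTop (𝓝 (f z)) := by
    rw [Metric.tendsto_atTop]
    intro ε hε
    obtain ⟨δ, hδ, hδ'⟩ := Metric.continuousAt_iff.1 hfc.continuousAt (ε/2) (by linarith)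
    obtain ⟨N, hN⟩ := pow_unbounded_of_one_lt (R / δ) (one_lt_two (α := ℝ))
    refine ⟨N, fun k hk => ?_⟩
    have hpk : (0:ℝ) < R / 2 ^ k := by positivity
    have hlt : R / 2 ^ k < δ := by
      have h2 : (2:ℝ) ^ N ≤ 2 ^ k := pow_le_pow_right₀ one_le_two hk
      rw [div_lt_iff₀ hδ] at hN
      rw [div_lt_iff₀ (by positivity)]
      nlinarith
    have hb : ∀ w ∈ ball z (R / 2 ^ k), |f w - f z| ≤ ε/2 := by
      intro w hw
      rw [mem_ball] at hw
      have := hδ' (show dist w z < δ by linarith)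
      rw [Real.dist_eq] at this
      linarith
    have := avg_sub_const_le μ f z (ball z (R / 2 ^ k)) (f z) (ε/2)
      (h0 _ hpk) (hfin _ hpk) measurableSet_ball hmeas hb
    rw [Real.dist_eq]
    calc |u k - f z| ≤ ε/2 := this
      _ < ε := by linarith
  have hmain := dist_le_tsum_of_dist_le_of_tendsto₀ d hdist hsumd htend
  have htsum : ∑' k, d k = (CD * A * R) * 2 := by
    rw [hd, tsum_mul_left, tsum_geometric_two]
  have hu0 : u 0 = ⨍ w in ball z R, f w ∂μ := by
    rw [hu]; norm_num
  rw [htsum, hu0, Real.dist_eq, abs_sub_comm] at hmain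
  calc |f z - ⨍ w in ball z R, f w ∂μ| ≤ CD * A * R * 2 := hmain
    _ = 2 * CD * A * R := by ring

end osc2

section osc3
variable {X : Type*} [MetricSpace X] [MeasurableSpace X] [BorelSpace X]

lemma osc_bound (μ : Measure X) (CD C0 Lam : ℝ) (hCD : 0 < CD) (hCD1 : 1 ≤ CD)
    (hC0 : 0 < C0) (hLam : 1 < Lam)
    (hpos : ∀ (x : X) (r : ℝ), 0 < r → 0 < μ (ball x r))
    (hfin : ∀ (x : X) (r : ℝ), 0 < r → μ (ball x r) < ⊤)
    (hdouble : ∀ (x : X) (r : ℝ), 0 < r →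
      μ (ball x (2 * r)) ≤ ENNReal.ofReal CD * μ (ball x r)) :
    ∃ Cup : ℝ, 0 ≤ Cup ∧ ∀ (Γf : Measure X) (f : X → ℝ) (Bf : ℝ), Continuous f →
      (∀ w, |f w| ≤ Bf) →
      (∀ (z : X) (R : ℝ), 0 < R →
        ∫ w in ball z R, (f w - ⨍ v in ball z R, f v ∂μ) ^ 2 ∂μ ≤
          C0 * R ^ 2 * (Γf (ball z (Lam * R))).toReal) →
      Γf ≤ μ →
      ∀ x y : X, |f x - f y| ≤ Cup * dist x y := by
  obtain ⟨m, hm⟩ := pow_unbounded_of_one_lt Lam (one_lt_two (α := ℝ))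
  set A : ℝ := Real.sqrt (C0 * CD ^ m) with hAdef
  have hA : 0 < A := Real.sqrt_pos.2 (by positivity)
  refine ⟨(6 * CD + 2 * CD ^ 2) * A, by positivity, ?_⟩
  intro Γf f Bf hfc hBf hPf hΓμ x y
  rcases eq_or_ne x y with rfl | hxy
  · simp
  set r : ℝ := dist x y with hrdef
  have hr : 0 < r := dist_pos.2 hxy
  have hmeas : AEStronglyMeasurable f μ := hfc.aestronglyMeasurable
  have hsq : ∀ (z : X) (R : ℝ), 0 < R →
      ∫ w in ball z R, (f w - ⨍ v in ball z R, f v ∂μ) ^ 2 ∂μ ≤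
        A ^ 2 * R ^ 2 * (μ (ball z R)).toReal := by
    intro z R hR
    have hLR : 0 < Lam * R := by nlinarith
    refine (hPf z R hR).trans ?_
    have h1 : (Γf (ball z (Lam * R))).toReal ≤ (μ (ball z (Lam * R))).toReal :=
      ENNReal.toReal_mono (hfin z (Lam * R) hLR).ne (Measure.le_iff'.1 hΓμ _)
    have h2 : μ (ball z (Lam * R)) ≤ ENNReal.ofReal (CD ^ m) * μ (ball z R) :=
      double_mono μ CD hCD hdouble z m _ R hR (by nlinarith [hm.le])
    have h3 : (μ (ball z (Lam * R))).toReal ≤ CD ^ m * (μ (ball z R)).toReal := by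
      have := ENNReal.toReal_mono
        (ENNReal.mul_ne_top ENNReal.ofReal_ne_top (hfin z R hR).ne) h2
      rwa [ENNReal.toReal_mul, ENNReal.toReal_ofReal (by positivity)] at this
    have hA2 : A ^ 2 = C0 * CD ^ m := Real.sq_sqrt (by positivity)
    calc C0 * R ^ 2 * (Γf (ball z (Lam * R))).toReal
        ≤ C0 * R ^ 2 * (CD ^ m * (μ (ball z R)).toReal) := by
          refine mul_le_mul_of_nonneg_left (h1.trans h3) (by positivity)
      _ = A ^ 2 * R ^ 2 * (μ (ball z R)).toReal := by rw [hA2]; ring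
  have hL1' : ∀ (z : X) (R : ℝ), 0 < R →
      ∫ w in ball z R, |f w - ⨍ v in ball z R, f v ∂μ| ∂μ ≤
        A * R * (μ (ball z R)).toReal := fun z R hR =>
    L1_poincare μ f A R z hR hA (hpos z R hR).ne' (hfin z R hR).ne hmeas Bf hBf (hsq z R hR)
  have hIntB : ∀ (z : X) (R : ℝ), 0 < R → IntegrableOn f (ball z R) μ := fun z R hR =>
    Measure.integrableOn_of_bounded (hfin z R hR).ne hmeas
      (Eventually.of_forall fun w => by rw [Real.norm_eq_abs]; exact hBf w)
  have hS2 : ∀ (z' z : X) (r' R Mc : ℝ), 0 < r' → 0 < R → 0 ≤ Mc →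
      ball z' r' ⊆ ball z R → μ (ball z R) ≤ ENNReal.ofReal Mc * μ (ball z' r') →
      |(⨍ w in ball z' r', f w ∂μ) - ⨍ w in ball z R, f w ∂μ| ≤ Mc * A * R :=
    fun z' z r' R Mc hr' hR hMc hsub hcmp =>
    L2_transfer μ f A z' z r' R Mc hr' hR hMc hA.le hsub (hpos z' r' hr').ne'
      (hfin z' r' hr').ne (hfin z R hR).ne hcmp (hIntB z R hR) (hL1' z R hR)
  have hS3 : ∀ (z : X) (R : ℝ), 0 < R →
      |f z - ⨍ w in ball z R, f w ∂μ| ≤ 2 * CD * A * R := by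
    intro z R hR
    refine L3_telescope μ f A CD z R hR hA.le (by linarith) hfc
      (fun s hs => (hpos z s hs).ne') (fun s hs => (hfin z s hs).ne) hmeas ?_
    intro k
    have heq : R / 2 ^ k = 2 * (R / 2 ^ (k+1)) := by rw [pow_succ]; ring
    refine hS2 z z (R / 2 ^ (k+1)) (R / 2 ^ k) CD (by positivity) (by positivity) hCD.le
      (ball_subset_ball (by
        apply div_le_div_of_nonneg_left hR.le (by positivity)
        exact pow_le_pow_right₀ one_le_two (Nat.le_succ k))) ?_
    rw [heq]
    exact hdouble z (R / 2 ^ (k+1)) (by positivity)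
  set a : ℝ := ⨍ w in ball x r, f w ∂μ with ha
  set b : ℝ := ⨍ w in ball x (2 * r), f w ∂μ with hb
  set cc : ℝ := ⨍ w in ball y r, f w ∂μ with hcc
  have h1 : |f x - a| ≤ 2 * CD * A * r := hS3 x r hr
  have h2 : |f y - cc| ≤ 2 * CD * A * r := hS3 y r hr
  have h3 : |a - b| ≤ CD * A * (2 * r) :=
    hS2 x x r (2 * r) CD hr (by linarith) hCD.le (ball_subset_ball (by linarith))
      (hdouble x r hr)
  have h4 : |cc - b| ≤ CD ^ 2 * A * (2 * r) := by
    refine hS2 y x r (2 * r) (CD ^ 2) hr (by linarith) (by positivity) ?_ ?_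
    · intro w hw
      rw [mem_ball] at hw ⊢
      have : dist y x = r := by rw [dist_comm]
      calc dist w x ≤ dist w y + dist y x := dist_triangle _ _ _
        _ < r + r := by rw [this]; linarith
        _ = 2 * r := by ring
    · have hsub3 : ball x (2 * r) ⊆ ball y (3 * r) := by
        intro w hw
        rw [mem_ball] at hw ⊢
        calc dist w y ≤ dist w x + dist x y := dist_triangle _ _ _
          _ < 2 * r + r := by linarith [hw]
          _ = 3 * r := by ring
      calc μ (ball x (2 * r)) ≤ μ (ball y (3 * r)) := measure_mono hsub3
        _ ≤ ENNReal.ofReal (CD ^ 2) * μ (ball y r) :=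
            double_mono μ CD hCD hdouble y 2 (3 * r) r hr (by nlinarith)
  have t1 : |f x - f y| ≤ |f x - b| + |b - f y| := abs_sub_le _ _ _
  have t2 : |f x - b| ≤ |f x - a| + |a - b| := abs_sub_le _ _ _
  have t3 : |b - f y| ≤ |b - cc| + |cc - f y| := abs_sub_le _ _ _
  have t4 : |b - cc| = |cc - b| := abs_sub_comm _ _
  have t5 : |cc - f y| = |f y - cc| := abs_sub_comm _ _
  have hAr : 0 ≤ A * r := by positivity
  calc |f x - f y| ≤ |f x - a| + |a - b| + (|cc - b| + |f y - cc|) := by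
        linarith [t1, t2, t3, t4, t5]
    _ ≤ 2*CD*A*r + CD*A*(2*r) + (CD^2*A*(2*r) + 2*CD*A*r) := by linarith
    _ = (6 * CD + 2 * CD ^ 2) * A * r := by ring
    _ = (6 * CD + 2 * CD ^ 2) * A * dist x y := by rw [hrdef]

end osc3

lemma lipConst_bounds {X : Type*} [MetricSpace X] (f : X → ℝ) (K : ℝ≥0)
    (hf : LipschitzWith K f) (y : X) : 0 ≤ lipConst f y ∧ lipConst f y ≤ K := by
  set u : ℝ → ℝ := fun r => ⨆ x ∈ closedBall y r, |f x - f y| / r with hu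
  have hval : ∀ r : ℝ, 0 < r → ∀ x, x ∈ closedBall y r → |f x - f y| / r ≤ K := by
    intro r hr x hx
    have h1 : |f x - f y| ≤ K * dist x y := by
      have := hf.dist_le_mul x y
      rwa [Real.dist_eq] at this
    have h2 : dist x y ≤ r := mem_closedBall.1 hx
    rw [div_le_iff₀ hr]
    calc |f x - f y| ≤ (K : ℝ) * dist x y := h1
      _ ≤ (K : ℝ) * r := mul_le_mul_of_nonneg_left h2 K.coe_nonneg
  have hub : ∀ r : ℝ, 0 < r → u r ≤ K := by
    intro r hr
    exact Real.iSup_le (fun x => Real.iSup_le (fun hx => hval r hr x hx) K.coe_nonneg)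
      K.coe_nonneg
  have hlb : ∀ r : ℝ, 0 < r → 0 ≤ u r := by
    intro r hr
    have hy : y ∈ closedBall y r := mem_closedBall_self hr.le
    have hbdd : BddAbove (Set.range fun x => ⨆ _ : x ∈ closedBall y r, |f x - f y| / r) := by
      refine ⟨K, ?_⟩
      rintro v ⟨x, rfl⟩
      exact Real.iSup_le (fun hx => hval r hr x hx) K.coe_nonneg
    have h1 : (⨆ _ : y ∈ closedBall y r, |f y - f y| / r) ≤ u r := le_ciSup hbdd y
    rw [ciSup_pos hy] at h1
    simpa using h1
  have hev : ∀ᶠ r in (𝓝[>] (0:ℝ)), u r ≤ K := by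
    filter_upwards [self_mem_nhdsWithin] with r hr
    exact hub r hr
  have hev0 : ∀ᶠ r in (𝓝[>] (0:ℝ)), (0:ℝ) ≤ u r := by
    filter_upwards [self_mem_nhdsWithin] with r hr
    exact hlb r hr
  constructor
  · exact le_limsup_of_frequently_le hev0.frequently (isBoundedUnder_of_eventually_le hev)
  · exact limsup_le_of_le (isCoboundedUnder_le_of_eventually_le _ hev0) hev

lemma wd_le {X : Type*} [MeasurableSpace X] (μ : Measure X) (g : X → ℝ≥0∞)
    (hg : ∀ x, g x ≤ 1) : μ.withDensity g ≤ μ := by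
  refine Measure.le_iff.2 fun s hs => ?_
  rw [withDensity_apply _ hs]
  calc ∫⁻ a in s, g a ∂μ ≤ ∫⁻ _a in s, 1 ∂μ := lintegral_mono hg
    _ = μ s := by simp

/-- the intrinsic distance of the limiting Dirichlet form is
bi-Lipschitz equivalent to the original distance. -/
theorem stmt9 {X : Type*} [MetricSpace X] [MeasurableSpace X] [BorelSpace X]
    [LocallyCompactSpace X] [CompleteSpace X]
    (μ : Measure X) (CD : ℝ) (hCD : 0 < CD)
    (hpos : ∀ (x : X) (r : ℝ), 0 < r → 0 < μ (ball x r))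
    (hfin : ∀ (x : X) (r : ℝ), 0 < r → μ (ball x r) < ⊤)
    (hdouble : ∀ (x : X) (r : ℝ), 0 < r →
      μ (ball x (2 * r)) ≤ ENNReal.ofReal CD * μ (ball x r))
    (𝓕 : Set (X → ℝ)) (Γ : (X → ℝ) → Measure X)
    (C0 Lam : ℝ) (hC0 : 0 < C0) (hLam : 1 < Lam)
    -- 2-Poincaré inequality with respect to the energy measures
    (hPIΓ : ∀ f ∈ 𝓕, ∀ (x : X) (R : ℝ), 0 < R →
      ∫ y in ball x R, (f y - ⨍ z in ball x R, f z ∂μ) ^ 2 ∂μ ≤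
        C0 * R ^ 2 * (Γ f (ball x (Lam * R))).toReal)
    -- domination of the energy measure by the Lipschitz constant
    (hΓLip : ∀ f ∈ 𝓕, LocallyLipschitz f →
      Γ f ≤ μ.withDensity (fun x => ENNReal.ofReal (C0 * (lipConst f x) ^ 2)))
    -- compactly supported Lipschitz functions belong to the domain
    (hLipDom : ∀ (f : X → ℝ) (K : NNReal), LipschitzWith K f → HasCompactSupport f →
      f ∈ 𝓕) :
    ∃ C : ℝ, 1 ≤ C ∧ ∀ x y : X,
      C⁻¹ * dist x y ≤ intrinsicDist μ 𝓕 Γ x y ∧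
        intrinsicDist μ 𝓕 Γ x y ≤ C * dist x y := by
  classical
  rcases isEmpty_or_nonempty X with hX | hX
  · exact ⟨1, le_refl 1, fun x => (IsEmpty.false x).elim⟩
  -- CD ≥ 1
  have hCD1 : 1 ≤ CD := by
    obtain ⟨x⟩ := hX
    have h1 : μ (ball x 1) ≤ μ (ball x 2) := measure_mono (ball_subset_ball (by norm_num))
    have h2 := hdouble x 1 one_pos
    rw [show (2:ℝ) * 1 = 2 by norm_num] at h2
    have ha0 : μ (ball x 1) ≠ 0 := (hpos x 1 one_pos).ne'
    have haT : μ (ball x 1) ≠ ⊤ := (hfin x 1 one_pos).ne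
    have h3 : (1:ℝ≥0∞) * μ (ball x 1) ≤ ENNReal.ofReal CD * μ (ball x 1) := by
      rw [one_mul]; exact h1.trans h2
    have h4 : (1:ℝ≥0∞) ≤ ENNReal.ofReal CD := (ENNReal.mul_le_mul_iff_left ha0 haT).1 h3
    exact ENNReal.one_le_ofReal.1 h4
  have hPS : ProperSpace X := proper_of_doubling μ CD hCD hpos hfin hdouble
  obtain ⟨Cup, hCup0, hosc⟩ := osc_bound μ CD C0 Lam hCD hCD1 hC0 hLam hpos hfin hdouble
  set kr : ℝ := Real.sqrt C0⁻¹ with hkr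
  have hkr0 : 0 < kr := Real.sqrt_pos.2 (by positivity)
  have hkrsq : C0 * kr ^ 2 = 1 := by
    rw [hkr, Real.sq_sqrt (by positivity)]
    field_simp
  have hkrc : (kr.toNNReal : ℝ) = kr := Real.coe_toNNReal _ hkr0.le
  have hGam : ∀ f : X → ℝ, f ∈ 𝓕 → LipschitzWith kr.toNNReal f → Γ f ≤ μ := by
    intro f hf hflip
    refine le_trans (hΓLip f hf hflip.locallyLipschitz) (wd_le μ _ ?_)
    intro w
    obtain ⟨hl0, hlK⟩ := lipConst_bounds f kr.toNNReal hflip w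
    rw [hkrc] at hlK
    refine ENNReal.ofReal_le_one.2 ?_
    have hsq2 : lipConst f w ^ 2 ≤ kr ^ 2 := by nlinarith
    calc C0 * lipConst f w ^ 2 ≤ C0 * kr ^ 2 := by nlinarith
      _ = 1 := hkrsq
  set C : ℝ := max (max kr⁻¹ Cup) 1 with hCdef
  have hC1 : 1 ≤ C := le_max_right _ _
  have hCpos : 0 < C := lt_of_lt_of_le one_pos hC1
  refine ⟨C, hC1, fun x y => ?_⟩
  have hSdef : intrinsicDist μ 𝓕 Γ x y = sSup {t : ℝ | ∃ f ∈ 𝓕, Continuous f ∧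
      HasCompactSupport f ∧ Γ f ≤ μ ∧ t = f x - f y} := rfl
  set S := {t : ℝ | ∃ f ∈ 𝓕, Continuous f ∧ HasCompactSupport f ∧ Γ f ≤ μ ∧
      t = f x - f y} with hS
  have hub : ∀ t ∈ S, t ≤ Cup * dist x y := by
    rintro t ⟨f, hf, hfc, hfs, hfΓ, rfl⟩
    obtain ⟨Bf, hBf⟩ := hfs.exists_bound_of_continuous hfc
    have hBf' : ∀ w, |f w| ≤ Bf := fun w => by rw [← Real.norm_eq_abs]; exact hBf w
    have := hosc (Γ f) f Bf hfc hBf' (fun z R hR => hPIΓ f hf z R hR) hfΓ x y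
    exact (le_abs_self _).trans this
  have hbdd : BddAbove S := ⟨Cup * dist x y, hub⟩
  have h0S : (0:ℝ) ∈ S := by
    have hmem : (fun _ : X => (0:ℝ)) ∈ 𝓕 :=
      hLipDom _ kr.toNNReal (LipschitzWith.const' 0)
        (HasCompactSupport.intro isCompact_empty (fun z _ => rfl))
    exact ⟨fun _ => 0, hmem, continuous_const,
      HasCompactSupport.intro isCompact_empty (fun z _ => rfl),
      hGam _ hmem (LipschitzWith.const' 0), by simp⟩
  have hS0 : (0:ℝ) ≤ sSup S := le_csSup hbdd h0S
  rcases eq_or_ne x y with rfl | hxy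
  · rw [hSdef]
    constructor
    · simpa using hS0
    · have h1 : sSup S ≤ Cup * dist x x := Real.sSup_le hub (by positivity)
      simp only [dist_self, mul_zero] at h1 ⊢
      exact h1
  have hr : 0 < dist x y := dist_pos.2 hxy
  set F : X → ℝ := fun z => kr * max (dist x y - dist z x) 0 with hF
  have hFlip : LipschitzWith kr.toNNReal F := by
    refine LipschitzWith.of_dist_le_mul fun a b => ?_
    rw [Real.dist_eq, hkrc]
    have h1 : F a - F b = kr * (max (dist x y - dist a x) 0 - max (dist x y - dist b x) 0) := by
      rw [hF]; ring
    rw [h1, abs_mul, abs_of_nonneg hkr0.le]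
    refine mul_le_mul_of_nonneg_left ?_ hkr0.le
    calc |max (dist x y - dist a x) 0 - max (dist x y - dist b x) 0|
        ≤ |(dist x y - dist a x) - (dist x y - dist b x)| := abs_max_sub_max_le_abs _ _ _
      _ = |dist b x - dist a x| := by ring_nf
      _ ≤ dist b a := abs_dist_sub_le _ _ _
      _ = dist a b := dist_comm _ _
  have hFsupp : HasCompactSupport F := by
    refine HasCompactSupport.intro (isCompact_closedBall x (dist x y)) (fun z hz => ?_)
    simp only [mem_closedBall, not_le] at hz
    rw [hF]
    have : max (dist x y - dist z x) 0 = 0 := max_eq_right (by linarith)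
    simp [this]
  have hFcont : Continuous F :=
    continuous_const.mul ((continuous_const.sub
      ((continuous_id.dist continuous_const))).max continuous_const)
  have hFmem : F ∈ 𝓕 := hLipDom F kr.toNNReal hFlip hFsupp
  have hFΓ : Γ F ≤ μ := hGam F hFmem hFlip
  have hvalx : F x = kr * dist x y := by
    rw [hF]
    simp [dist_self, max_eq_left hr.le]
  have hvaly : F y = 0 := by
    rw [hF]
    simp [dist_comm y x]
  have hmemS : kr * dist x y ∈ S :=
    ⟨F, hFmem, hFcont, hFsupp, hFΓ, by rw [hvalx, hvaly, sub_zero]⟩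
  rw [hSdef]
  constructor
  · have h1 : C⁻¹ ≤ kr := by
      have h2 : kr⁻¹ ≤ C := le_trans (le_max_left _ _) (le_max_left _ _)
      have h3 := inv_anti₀ (show (0:ℝ) < kr⁻¹ by positivity) h2
      rwa [inv_inv] at h3
    calc C⁻¹ * dist x y ≤ kr * dist x y := mul_le_mul_of_nonneg_right h1 dist_nonneg
      _ ≤ sSup S := le_csSup hbdd hmemS
  · have h2 : Cup ≤ C := le_trans (le_max_right _ _) (le_max_left _ _)
    calc sSup S ≤ Cup * dist x y := Real.sSup_le hub (by positivity)
      _ ≤ C * dist x y := mul_le_mul_of_nonneg_right h2 dist_nonneg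
end

section
/- Weak-L² bound for the Korevaar-Schoen maximal function: for f ∈ KS^{d_w/2,2}(X) and R > 0 define M_R f(x) := sup_{0<ρ<R} ( μ(B(x,ρ))^{-1} liminf_{r→0⁺} E_{d_w/2,B(x,ρ)}(f,r) )^{1/2}. Then there exists C > 0 independent of R and f such that for all λ > 0, μ({x : M_R f(x) > λ}) ≤ C λ^{-2} liminf_{r→0⁺} E_{d_w/2,X}(f,r). -/
open MeasureTheory Metric Filter Topology

/-- The Korevaar–Schoen energy `E_{d_w/2,U}(f,r)` at scale `r` on `U`. -/
noncomputable def KSE {X : Type*} [MetricSpace X] [MeasurableSpace X]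
    (μ : Measure X) (dw : ℝ) (f : X → ℝ) (U : Set X) (r : ℝ) : ℝ :=
  ∫ x in U, (⨍ y in ball x r, (f y - f x) ^ 2 ∂μ) / r ^ dw ∂μ

section Aux

open TopologicalSpace

set_option linter.unusedSectionVars false

variable {X : Type*} [MetricSpace X] [MeasurableSpace X] [BorelSpace X] [CompactSpace X]
  {μ : Measure X} {CD : ℝ}

lemma KSE_nonneg (μ : Measure X) (dw : ℝ) (f : X → ℝ) (U : Set X) {r : ℝ} (hr : 0 < r) :
    0 ≤ KSE μ dw f U r := by
  apply setIntegral_nonneg_of_ae_restrict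
  apply Filter.Eventually.of_forall (fun x => ?_)
  apply div_nonneg _ (Real.rpow_pos_of_pos hr dw).le
  exact integral_nonneg fun y => sq_nonneg _

lemma KSE_congr (μ : Measure X) (dw : ℝ) {f g : X → ℝ} (h : f =ᵐ[μ] g) (U : Set X) (r : ℝ) :
    KSE μ dw f U r = KSE μ dw g U r := by
  apply integral_congr_ae
  apply ae_restrict_of_ae
  filter_upwards [h] with x hx
  congr 1
  rw [setAverage_eq, setAverage_eq]
  congr 1
  apply setIntegral_congr_ae measurableSet_ball
  filter_upwards [h] with y hy _
  rw [hx, hy]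

lemma double_iter (hdouble : ∀ (x : X) (r : ℝ), 0 < r →
      μ (ball x (2 * r)) ≤ ENNReal.ofReal CD * μ (ball x r)) (n : ℕ) (x : X) {r : ℝ}
    (hr : 0 < r) : μ (ball x (2 ^ n * r)) ≤ ENNReal.ofReal CD ^ n * μ (ball x r) := by
  induction n with
  | zero => simp
  | succ n ih =>
    have h1 : (2:ℝ) ^ (n+1) * r = 2 * (2 ^ n * r) := by ring
    rw [h1]
    calc μ (ball x (2 * (2 ^ n * r))) ≤ ENNReal.ofReal CD * μ (ball x (2 ^ n * r)) :=
          hdouble x _ (by positivity)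
      _ ≤ ENNReal.ofReal CD * (ENNReal.ofReal CD ^ n * μ (ball x r)) := by
          exact mul_le_mul_right ih _
      _ = ENNReal.ofReal CD ^ (n+1) * μ (ball x r) := by ring

lemma univ_fin [Nonempty X]
    (hfin : ∀ (x : X) (r : ℝ), 0 < r → μ (ball x r) < ⊤) : μ Set.univ < ⊤ := by
  obtain ⟨x₀⟩ := ‹Nonempty X›
  obtain ⟨R₀, hR₀⟩ := (isCompact_univ (X := X)).isBounded.subset_closedBall x₀
  calc μ Set.univ ≤ μ (ball x₀ (|R₀| + 1)) := by
        apply measure_mono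
        refine hR₀.trans ((closedBall_subset_ball ?_))
        have := abs_nonneg R₀; have := le_abs_self R₀; linarith
    _ < ⊤ := hfin _ _ (by positivity)

lemma ball_lower [Nonempty X] (hCD : 0 < CD)
    (hpos : ∀ (x : X) (r : ℝ), 0 < r → 0 < μ (ball x r))
    (hfin : ∀ (x : X) (r : ℝ), 0 < r → μ (ball x r) < ⊤)
    (hdouble : ∀ (x : X) (r : ℝ), 0 < r →
      μ (ball x (2 * r)) ≤ ENNReal.ofReal CD * μ (ball x r))
    {r : ℝ} (hr : 0 < r) : ∃ c : ℝ, 0 < c ∧ ∀ x : X, c ≤ (μ (ball x r)).toReal := by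
  obtain ⟨x₀⟩ := ‹Nonempty X›
  obtain ⟨R₀, hR₀⟩ := (isCompact_univ (X := X)).isBounded.subset_closedBall x₀
  set R₁ : ℝ := |R₀| + 1 with hR₁
  have hR₁pos : 0 < R₁ := by positivity
  have hsub : ∀ x : X, Set.univ ⊆ ball x (2 * R₁) := by
    intro x z _
    have hx : dist x x₀ ≤ R₀ := by simpa using hR₀ (Set.mem_univ x)
    have hz : dist z x₀ ≤ R₀ := by simpa using hR₀ (Set.mem_univ z)
    have : dist z x ≤ dist z x₀ + dist x₀ x := dist_triangle _ _ _
    rw [mem_ball]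
    have h1 : R₀ ≤ |R₀| := le_abs_self R₀
    have := dist_comm x x₀
    nlinarith [abs_nonneg R₀, dist_comm x₀ x ▸ hx]
  obtain ⟨n, hn⟩ := pow_unbounded_of_one_lt (2 * R₁ / r) (one_lt_two (α := ℝ))
  have key : ∀ x : X, μ Set.univ ≤ ENNReal.ofReal CD ^ n * μ (ball x r) := by
    intro x
    calc μ Set.univ ≤ μ (ball x (2 * R₁)) := measure_mono (hsub x)
      _ ≤ μ (ball x (2 ^ n * r)) := by
          apply measure_mono; apply ball_subset_ball
          rw [div_lt_iff₀ hr] at hn; linarith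
      _ ≤ ENNReal.ofReal CD ^ n * μ (ball x r) := double_iter hdouble n x hr
  have hμpos : 0 < (μ Set.univ).toReal :=
    ENNReal.toReal_pos (by
      have := lt_of_lt_of_le (hpos x₀ r hr) (measure_mono (Set.subset_univ _))
      exact this.ne') (univ_fin hfin).ne
  refine ⟨(μ Set.univ).toReal / CD ^ n, by positivity, fun x => ?_⟩
  rw [div_le_iff₀ (by positivity)]
  have h2 : ((ENNReal.ofReal CD ^ n * μ (ball x r))).toReal = CD ^ n * (μ (ball x r)).toReal := by
    rw [ENNReal.toReal_mul, ENNReal.toReal_pow, ENNReal.toReal_ofReal hCD.le]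
  calc (μ Set.univ).toReal ≤ (ENNReal.ofReal CD ^ n * μ (ball x r)).toReal := by
        apply ENNReal.toReal_mono _ (key x)
        exact (ENNReal.mul_lt_top (by simp [ENNReal.pow_lt_top, ENNReal.ofReal_lt_top])
          (hfin x r hr)).ne
      _ = (μ (ball x r)).toReal * CD ^ n := by rw [h2]; ring

lemma g_measurable [SecondCountableTopology X] [IsFiniteMeasure μ]
    {f : X → ℝ} (hfm : Measurable f) (r dw : ℝ) :
    Measurable (fun x => (⨍ y in ball x r, (f y - f x) ^ 2 ∂μ) / r ^ dw) := by
  have hd : MeasurableSet {p : X × X | p.2 ∈ ball p.1 r} := by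
    have : {p : X × X | p.2 ∈ ball p.1 r} = (fun p : X × X => dist p.2 p.1) ⁻¹' (Set.Iio r) := by
      ext p; simp [mem_ball]
    rw [this]
    exact (measurable_dist.comp (measurable_snd.prodMk measurable_fst)) measurableSet_Iio
  have hm1 : Measurable (fun x => μ (ball x r)) := by
    have : (fun x => μ (ball x r)) = fun x =>
        ∫⁻ y, {p : X × X | p.2 ∈ ball p.1 r}.indicator (fun _ => (1:ENNReal)) (x, y) ∂μ := by
      funext x
      rw [← lintegral_indicator_one measurableSet_ball]
      congr 1
    rw [this]
    exact Measurable.lintegral_prod_right ((measurable_const).indicator hd)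
  have hm2 : Measurable (fun x => ∫⁻ y in ball x r, ENNReal.ofReal ((f y - f x) ^ 2) ∂μ) := by
    have : (fun x => ∫⁻ y in ball x r, ENNReal.ofReal ((f y - f x) ^ 2) ∂μ)
        = fun x => ∫⁻ y, {p : X × X | p.2 ∈ ball p.1 r}.indicator
            (fun p => ENNReal.ofReal ((f p.2 - f p.1) ^ 2)) (x, y) ∂μ := by
      funext x
      rw [← lintegral_indicator measurableSet_ball]
      congr 1
    rw [this]
    apply Measurable.lintegral_prod_right
    exact Measurable.indicator (ENNReal.measurable_ofReal.comp
      (((hfm.comp measurable_snd).sub (hfm.comp measurable_fst)).pow_const 2)) hd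
  have hrepr : ∀ x : X, ∫ y in ball x r, (f y - f x) ^ 2 ∂μ
      = (∫⁻ y in ball x r, ENNReal.ofReal ((f y - f x) ^ 2) ∂μ).toReal := by
    intro x
    apply integral_eq_lintegral_of_nonneg_ae (Filter.Eventually.of_forall fun y => sq_nonneg _)
    exact ((hfm.sub measurable_const).pow_const 2).aestronglyMeasurable
  have : (fun x => (⨍ y in ball x r, (f y - f x) ^ 2 ∂μ) / r ^ dw)
      = fun x => (μ (ball x r)).toReal⁻¹ *
          (∫⁻ y in ball x r, ENNReal.ofReal ((f y - f x) ^ 2) ∂μ).toReal / r ^ dw := by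
    funext x
    rw [setAverage_eq, smul_eq_mul, hrepr, measureReal_def]
  rw [this]
  exact ((hm1.ennreal_toReal.inv.mul hm2.ennreal_toReal).div_const _)

lemma g_integrable [Nonempty X] (hCD : 0 < CD)
    (hpos : ∀ (x : X) (r : ℝ), 0 < r → 0 < μ (ball x r))
    (hfin : ∀ (x : X) (r : ℝ), 0 < r → μ (ball x r) < ⊤)
    (hdouble : ∀ (x : X) (r : ℝ), 0 < r →
      μ (ball x (2 * r)) ≤ ENNReal.ofReal CD * μ (ball x r))
    {f : X → ℝ} (hfm : Measurable f) (hf2 : MemLp f 2 μ) {r : ℝ} (hr : 0 < r) (dw : ℝ) :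
    Integrable (fun x => (⨍ y in ball x r, (f y - f x) ^ 2 ∂μ) / r ^ dw) μ := by
  haveI : IsFiniteMeasure μ := ⟨univ_fin hfin⟩
  haveI : SecondCountableTopology X := by
    have : SeparableSpace X := inferInstance
    exact UniformSpace.secondCountable_of_separable X
  obtain ⟨c, hc, hcb⟩ := ball_lower hCD hpos hfin hdouble hr
  set B : ℝ := ∫ y, 2 * f y ^ 2 ∂μ with hB
  have hBnn : 0 ≤ B := integral_nonneg fun y => by positivity
  have hsq : Integrable (fun y => f y ^ 2) μ := hf2.integrable_sq
  have hrdw : 0 < r ^ dw := Real.rpow_pos_of_pos hr dw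
  apply Integrable.mono'
      (g := fun x => (c⁻¹ / r ^ dw) * (B + 2 * (μ Set.univ).toReal * f x ^ 2))
  · exact (((integrable_const B).add ((hsq.const_mul (2 * (μ Set.univ).toReal)))).const_mul _)
  · exact (g_measurable hfm r dw).aestronglyMeasurable
  · apply Filter.Eventually.of_forall
    intro x
    have hInn : 0 ≤ ∫ y in ball x r, (f y - f x) ^ 2 ∂μ :=
      setIntegral_nonneg_of_ae_restrict (Filter.Eventually.of_forall fun y => sq_nonneg _)
    have hgx : 0 ≤ (⨍ y in ball x r, (f y - f x) ^ 2 ∂μ) / r ^ dw :=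
      div_nonneg (integral_nonneg fun y => sq_nonneg _) hrdw.le
    rw [Real.norm_of_nonneg hgx]
    have hI1 : IntegrableOn (fun y => (f y - f x) ^ 2) (ball x r) μ :=
      ((hf2.sub (memLp_const (f x))).integrable_sq).integrableOn
    have hI2 : IntegrableOn (fun y => 2 * f y ^ 2 + 2 * f x ^ 2) (ball x r) μ :=
      (((hsq.const_mul 2).add (integrable_const _))).integrableOn
    have hIbd : ∫ y in ball x r, (f y - f x) ^ 2 ∂μ
        ≤ B + (μ Set.univ).toReal * (2 * f x ^ 2) := by
      calc ∫ y in ball x r, (f y - f x) ^ 2 ∂μ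
          ≤ ∫ y in ball x r, (2 * f y ^ 2 + 2 * f x ^ 2) ∂μ := by
            apply setIntegral_mono hI1 hI2
            intro y
            have h := sq_nonneg (f y + f x)
            dsimp only
            nlinarith
        _ = (∫ y in ball x r, 2 * f y ^ 2 ∂μ) + (μ (ball x r)).toReal * (2 * f x ^ 2) := by
            rw [integral_add ((hsq.const_mul 2).integrableOn)
              (integrableOn_const (hfin x r hr).ne)]
            rw [setIntegral_const, smul_eq_mul, measureReal_def]
        _ ≤ B + (μ Set.univ).toReal * (2 * f x ^ 2) := by
            apply add_le_add
            · exact setIntegral_le_integral (hsq.const_mul 2)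
                (Filter.Eventually.of_forall fun y => by positivity)
            · apply mul_le_mul_of_nonneg_right _ (by positivity)
              exact ENNReal.toReal_mono (measure_ne_top μ _) (measure_mono (Set.subset_univ _))
    have hminv : (μ (ball x r)).toReal⁻¹ ≤ c⁻¹ := inv_anti₀ hc (hcb x)
    have hmnn : 0 ≤ (μ (ball x r)).toReal⁻¹ := by positivity
    rw [setAverage_eq, smul_eq_mul]
    rw [div_le_iff₀ hrdw]
    have heq : c⁻¹ / r ^ dw * (B + 2 * (μ Set.univ).toReal * f x ^ 2) * r ^ dw
        = c⁻¹ * (B + (μ Set.univ).toReal * (2 * f x ^ 2)) := by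
      field_simp
    rw [heq]
    exact mul_le_mul hminv hIbd hInn (by positivity)

lemma sum_KSE [Nonempty X] (hCD : 0 < CD)
    (hpos : ∀ (x : X) (r : ℝ), 0 < r → 0 < μ (ball x r))
    (hfin : ∀ (x : X) (r : ℝ), 0 < r → μ (ball x r) < ⊤)
    (hdouble : ∀ (x : X) (r : ℝ), 0 < r →
      μ (ball x (2 * r)) ≤ ENNReal.ofReal CD * μ (ball x r))
    {f : X → ℝ} (hfm : Measurable f) (hf2 : MemLp f 2 μ) {r : ℝ} (hr : 0 < r) (dw : ℝ)
    {ι : Type*} (s : Finset ι) (c : ι → X) (ρ : ι → ℝ)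
    (hdisj : Set.Pairwise ↑s (Function.onFun Disjoint fun i => ball (c i) (ρ i))) :
    ∑ i ∈ s, KSE μ dw f (ball (c i) (ρ i)) r ≤ KSE μ dw f Set.univ r := by
  have hint := g_integrable hCD hpos hfin hdouble hfm hf2 hr dw
  have hnn : 0 ≤ᵐ[μ] fun x => (⨍ y in ball x r, (f y - f x) ^ 2 ∂μ) / r ^ dw :=
    Filter.Eventually.of_forall fun x =>
      div_nonneg (integral_nonneg fun y => sq_nonneg _) (Real.rpow_pos_of_pos hr dw).le
  calc ∑ i ∈ s, KSE μ dw f (ball (c i) (ρ i)) r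
      = ∫ x in ⋃ i ∈ s, ball (c i) (ρ i), (⨍ y in ball x r, (f y - f x) ^ 2 ∂μ) / r ^ dw ∂μ :=
        (integral_biUnion_finset s (fun i _ => measurableSet_ball) hdisj
          (fun i _ => hint.integrableOn)).symm
    _ ≤ ∫ x, (⨍ y in ball x r, (f y - f x) ^ 2 ∂μ) / r ^ dw ∂μ :=
        setIntegral_le_integral hint hnn
    _ = KSE μ dw f Set.univ r := by rw [KSE, setIntegral_univ]

lemma liminf_sum_le {ι : Type*} (s : Finset ι) (u : ι → ℝ → ℝ) (v : ℝ → ℝ)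
    (hnn : ∀ᶠ r in 𝓝[>] (0:ℝ), ∀ i ∈ s, 0 ≤ u i r)
    (hb : Filter.IsBoundedUnder (· ≤ ·) (𝓝[>] (0:ℝ)) v)
    (hev : ∀ᶠ r in 𝓝[>] (0:ℝ), ∑ i ∈ s, u i r ≤ v r) :
    ∑ i ∈ s, Filter.liminf (u i) (𝓝[>] (0:ℝ)) ≤ Filter.liminf v (𝓝[>] (0:ℝ)) := by
  haveI : (𝓝[>] (0:ℝ)).NeBot := nhdsGT_neBot 0
  apply le_of_forall_pos_le_add
  intro ε hε
  set δ := ε / (s.card + 1) with hδ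
  have hδpos : 0 < δ := by positivity
  have hbelow : ∀ i ∈ s, Filter.IsBoundedUnder (· ≥ ·) (𝓝[>] (0:ℝ)) (u i) := by
    intro i hi
    exact Filter.isBoundedUnder_of_eventually_ge
      (by filter_upwards [hnn] with r hr using hr i hi)
  have hev2 : ∀ᶠ r in 𝓝[>] (0:ℝ), ∀ i ∈ s,
      Filter.liminf (u i) (𝓝[>] (0:ℝ)) - δ < u i r := by
    rw [Filter.eventually_all_finset]
    intro i hi
    exact Filter.eventually_lt_of_lt_liminf (by linarith) (hbelow i hi)
  have hfreq : ∃ᶠ r in 𝓝[>] (0:ℝ), v r < Filter.liminf v (𝓝[>] (0:ℝ)) + δ :=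
    Filter.frequently_lt_of_liminf_lt (hb.isCoboundedUnder_ge) (by linarith)
  obtain ⟨r, hr1, hr2, hr3⟩ := (hfreq.and_eventually (hev2.and hev)).exists
  have hsum : ∑ i ∈ s, (Filter.liminf (u i) (𝓝[>] (0:ℝ)) - δ) ≤ ∑ i ∈ s, u i r :=
    Finset.sum_le_sum fun i hi => (hr2 i hi).le
  rw [Finset.sum_sub_distrib, Finset.sum_const, nsmul_eq_mul] at hsum
  have hcard : ((s.card : ℝ) + 1) * δ = ε := by
    rw [hδ]; field_simp
  nlinarith [hr3, hr1]

end Aux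

/-- weak-`L²` bound for the Korevaar–Schoen maximal function
`M_R f(x) = sup_{0<ρ<R} (μ(B(x,ρ))⁻¹ liminf_{r→0⁺} E_{d_w/2,B(x,ρ)}(f,r))^{1/2}`.
The superlevel set `{M_R f > λ}` is described equivalently by the existence of
a radius `ρ ∈ (0,R)` with `λ² μ(B(x,ρ)) < liminf_{r→0⁺} E_{d_w/2,B(x,ρ)}(f,r)`. -/
theorem stmt11 {X : Type*} [MetricSpace X] [MeasurableSpace X] [BorelSpace X]
    [CompactSpace X]
    (μ : Measure X) (CD : ℝ) (hCD : 0 < CD)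
    (hpos : ∀ (x : X) (r : ℝ), 0 < r → 0 < μ (ball x r))
    (hfin : ∀ (x : X) (r : ℝ), 0 < r → μ (ball x r) < ⊤)
    (hdouble : ∀ (x : X) (r : ℝ), 0 < r →
      μ (ball x (2 * r)) ≤ ENNReal.ofReal CD * μ (ball x r))
    (dw : ℝ) (hdw : 2 < dw) :
    ∃ C : ℝ, 0 < C ∧ ∀ f : X → ℝ, MemLp f 2 μ →
      Filter.IsBoundedUnder (· ≤ ·) (𝓝[>] (0 : ℝ)) (fun r => KSE μ dw f Set.univ r) →
      ∀ R l : ℝ, 0 < R → 0 < l →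
        μ {x : X | ∃ ρ : ℝ, 0 < ρ ∧ ρ < R ∧
            l ^ 2 * (μ (ball x ρ)).toReal <
              Filter.liminf (fun r => KSE μ dw f (ball x ρ) r) (𝓝[>] (0 : ℝ))} ≤
          ENNReal.ofReal
            (C * l⁻¹ ^ 2 *
              Filter.liminf (fun r => KSE μ dw f Set.univ r) (𝓝[>] (0 : ℝ))) := by
  classical
  refine ⟨CD ^ 3, by positivity, ?_⟩
  intro f hf hbdd R l hR hl
  rcases isEmpty_or_nonempty X with hX | hX
  · simp [Set.eq_empty_of_isEmpty]
  haveI : IsFiniteMeasure μ := ⟨univ_fin hfin⟩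
  haveI : (𝓝[>] (0:ℝ)).NeBot := nhdsGT_neBot 0
  -- replace f by a measurable representative
  have hsm := hf.aestronglyMeasurable
  set f' := hsm.mk f with hf'def
  have hff' : f =ᵐ[μ] f' := hsm.ae_eq_mk
  have hf'm : Measurable f' := hsm.stronglyMeasurable_mk.measurable
  have hf2' : MemLp f' 2 μ := hf.ae_eq hff'
  have hKeq : ∀ (U : Set X) (rr : ℝ), KSE μ dw f U rr = KSE μ dw f' U rr :=
    fun U rr => KSE_congr μ dw hff' U rr
  simp only [hKeq] at hbdd ⊢
  set E := {x : X | ∃ ρ : ℝ, 0 < ρ ∧ ρ < R ∧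
      l ^ 2 * (μ (ball x ρ)).toReal <
        Filter.liminf (fun r => KSE μ dw f' (ball x ρ) r) (𝓝[>] (0 : ℝ))} with hE
  have hch : ∀ b : E, ∃ ρ : ℝ, 0 < ρ ∧ ρ < R ∧
      l ^ 2 * (μ (ball (b : X) ρ)).toReal <
        Filter.liminf (fun r => KSE μ dw f' (ball (b : X) ρ) r) (𝓝[>] (0 : ℝ)) :=
    fun b => b.2
  choose ρ hρ0 hρR hρL using hch
  obtain ⟨u, -, hdisj, hcov⟩ := Vitali.exists_disjoint_subfamily_covering_enlargement_closedBall
      (Set.univ : Set E) (fun b => (b : X)) ρ R (fun b _ => (hρR b).le) 4 (by norm_num)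
  -- notation for the liminf on each ball
  set L : E → ℝ := fun b =>
    Filter.liminf (fun r => KSE μ dw f' (ball (b : X) (ρ b)) r) (𝓝[>] (0 : ℝ)) with hLdef
  have hLnn : ∀ b : E, 0 ≤ L b := fun b => le_trans (by positivity) (hρL b).le
  -- disjointness of the (open) balls indexed by `u`
  have hdisj' : Pairwise (Function.onFun Disjoint fun b : ↥u => ball ((b : E) : X) (ρ (b : E))) := by
    intro i j hij
    have hne : (i : E) ≠ (j : E) := fun h => hij (Subtype.ext h)
    exact Disjoint.mono ball_subset_closedBall ball_subset_closedBall
      (hdisj i.2 j.2 hne)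
  -- countability of `u`
  have hucnt : u.Countable := by
    have hcnt0 := MeasureTheory.Measure.countable_meas_pos_of_disjoint_iUnion (μ := μ)
      (As := fun b : ↥u => ball ((b : E) : X) (ρ (b : E)))
      (fun b => measurableSet_ball) hdisj'
    have : {i : ↥u | 0 < μ (ball ((i : E) : X) (ρ (i : E)))} = Set.univ := by
      ext i; simpa using hpos _ _ (hρ0 (i : E))
    rw [this, Set.countable_univ_iff] at hcnt0
    exact Set.countable_coe_iff.mp hcnt0
  -- covering of E by enlarged balls
  have hEcov : E ⊆ ⋃ b ∈ u, ball ((b : X)) (8 * ρ b) := by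
    intro x hx
    obtain ⟨b, hbu, hb⟩ := hcov ⟨x, hx⟩ (Set.mem_univ _)
    refine Set.mem_biUnion hbu ?_
    have hxball : x ∈ closedBall x (ρ ⟨x, hx⟩) := mem_closedBall_self (hρ0 _).le
    exact (hb.trans (closedBall_subset_ball (by linarith [hρ0 b]))) hxball
  -- the per-ball measure estimate
  have hstep : ∀ b : ↥u, μ (ball ((b : E) : X) (8 * ρ (b : E)))
      ≤ ENNReal.ofReal (CD ^ 3 * l⁻¹ ^ 2) * ENNReal.ofReal (L (b : E)) := by
    intro b
    have h8 : (8 : ℝ) * ρ (b : E) = 2 ^ 3 * ρ (b : E) := by norm_num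
    have h1 : μ (ball ((b : E) : X) (8 * ρ (b : E)))
        ≤ ENNReal.ofReal CD ^ 3 * μ (ball ((b : E) : X) (ρ (b : E))) := by
      rw [h8]; exact double_iter hdouble 3 _ (hρ0 (b : E))
    have h2 : μ (ball ((b : E) : X) (ρ (b : E))) ≤ ENNReal.ofReal (l⁻¹ ^ 2 * L (b : E)) := by
      have hfin' : μ (ball ((b : E) : X) (ρ (b : E))) ≠ ⊤ := measure_ne_top μ _
      rw [← ENNReal.ofReal_toReal hfin']
      apply ENNReal.ofReal_le_ofReal
      have h := hρL (b : E)
      rw [inv_pow, inv_mul_eq_div, le_div_iff₀ (by positivity)]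
      nlinarith [h]
    calc μ (ball ((b : E) : X) (8 * ρ (b : E)))
        ≤ ENNReal.ofReal CD ^ 3 * ENNReal.ofReal (l⁻¹ ^ 2 * L (b : E)) :=
          le_trans h1 (mul_le_mul_right h2 _)
      _ = ENNReal.ofReal (CD ^ 3 * l⁻¹ ^ 2) * ENNReal.ofReal (L (b : E)) := by
          rw [← ENNReal.ofReal_pow hCD.le, ← ENNReal.ofReal_mul (by positivity),
            ← ENNReal.ofReal_mul (by positivity), mul_assoc]
  -- the tsum estimate
  have hLsum : ∑' b : ↥u, ENNReal.ofReal (L (b : E))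
      ≤ ENNReal.ofReal (Filter.liminf (fun r => KSE μ dw f' Set.univ r) (𝓝[>] (0 : ℝ))) := by
    apply Summable.tsum_le_of_sum_le ENNReal.summable
    intro s
    calc ∑ i ∈ s, ENNReal.ofReal (L (i : E))
        = ENNReal.ofReal (∑ i ∈ s, L (i : E)) :=
          (ENNReal.ofReal_sum_of_nonneg (s := s) (f := fun i : ↥u => L (i : E))
            (fun i _ => hLnn (i : E))).symm
      _ ≤ _ := ?_
    apply ENNReal.ofReal_le_ofReal
    apply liminf_sum_le s (fun b r => KSE μ dw f' (ball ((b : E) : X) (ρ (b : E))) r)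
      (fun r => KSE μ dw f' Set.univ r) ?_ hbdd ?_
    · filter_upwards [self_mem_nhdsWithin] with r hr i _
      exact KSE_nonneg μ dw f' _ hr
    · filter_upwards [self_mem_nhdsWithin] with r hr
      apply sum_KSE hCD hpos hfin hdouble hf'm hf2' hr dw
      intro i _ j _ hij
      exact hdisj' hij
  -- put everything together
  calc μ E ≤ μ (⋃ b ∈ u, ball ((b : X)) (8 * ρ b)) := measure_mono hEcov
    _ ≤ ∑' b : ↥u, μ (ball ((b : E) : X) (8 * ρ (b : E))) := measure_biUnion_le μ hucnt _
    _ ≤ ∑' b : ↥u, ENNReal.ofReal (CD ^ 3 * l⁻¹ ^ 2) * ENNReal.ofReal (L (b : E)) :=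
        ENNReal.tsum_le_tsum hstep
    _ = ENNReal.ofReal (CD ^ 3 * l⁻¹ ^ 2) * ∑' b : ↥u, ENNReal.ofReal (L (b : E)) :=
        ENNReal.tsum_mul_left
    _ ≤ ENNReal.ofReal (CD ^ 3 * l⁻¹ ^ 2) *
        ENNReal.ofReal (Filter.liminf (fun r => KSE μ dw f' Set.univ r) (𝓝[>] (0 : ℝ))) :=
        mul_le_mul_right hLsum _
    _ = ENNReal.ofReal (CD ^ 3 * l⁻¹ ^ 2 *
        Filter.liminf (fun r => KSE μ dw f' Set.univ r) (𝓝[>] (0 : ℝ))) := by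
        rw [← ENNReal.ofReal_mul (by positivity)]
end
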